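/- arXiv:1401.4770 — 7 statements merged into one kernel-verified Lean document; each statement's English description precedes it below -/
import Mathlib

section
/- Let w be a row-stochastic matrix on a finite set V with w(i,i) > 0 for all i and with the directed graph {(i,j) : w(i,j) > 0} strongly connected. Then w has a unique stationary probability vector α (satisfying α = α w), and for every initial vector x ∈ ℝ^V and every j ∈ V, the DeGroot dynamics A_t = w^t x satisfies lim_{t→∞} (w^t x)_j = Σ_{i∈V} α_i x_i; in particular all coordinates converge to the same limit Σ_i α_i x_i. -/
set_option linter.unusedSectionVars false

open Finset Filter Matrix

section Aux
variable {V : Type} [Fintype V] [DecidableEq V] [Nonempty V]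

private noncomputable def msup (x : V → ℝ) : ℝ := Finset.univ.sup' Finset.univ_nonempty x
private noncomputable def minf (x : V → ℝ) : ℝ := Finset.univ.inf' Finset.univ_nonempty x

private lemma minf_le (x : V → ℝ) (j : V) : minf x ≤ x j :=
  Finset.inf'_le _ (Finset.mem_univ j)

private lemma le_msup (x : V → ℝ) (j : V) : x j ≤ msup x :=
  Finset.le_sup' _ (Finset.mem_univ j)

private lemma minf_le_msup (x : V → ℝ) : minf x ≤ msup x :=
  (minf_le x (Classical.arbitrary V)).trans (le_msup x _)

private lemma mulVec_apply' (P : Matrix V V ℝ) (x : V → ℝ) (j : V) :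
    P.mulVec x j = ∑ k, P j k * x k := rfl

private lemma stoch_le_msup (P : Matrix V V ℝ) (hPn : ∀ i j, 0 ≤ P i j)
    (hPr : ∀ i, ∑ j, P i j = 1) (x : V → ℝ) (j : V) : P.mulVec x j ≤ msup x := by
  rw [mulVec_apply']
  calc ∑ k, P j k * x k ≤ ∑ k, P j k * msup x :=
        Finset.sum_le_sum fun k _ => mul_le_mul_of_nonneg_left (le_msup x k) (hPn j k)
    _ = msup x := by rw [← Finset.sum_mul, hPr, one_mul]

private lemma minf_le_stoch (P : Matrix V V ℝ) (hPn : ∀ i j, 0 ≤ P i j)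
    (hPr : ∀ i, ∑ j, P i j = 1) (x : V → ℝ) (j : V) : minf x ≤ P.mulVec x j := by
  rw [mulVec_apply']
  calc minf x = ∑ k, P j k * minf x := by rw [← Finset.sum_mul, hPr, one_mul]
    _ ≤ ∑ k, P j k * x k :=
        Finset.sum_le_sum fun k _ => mul_le_mul_of_nonneg_left (minf_le x k) (hPn j k)

private lemma msup_stoch_le (P : Matrix V V ℝ) (hPn : ∀ i j, 0 ≤ P i j)
    (hPr : ∀ i, ∑ j, P i j = 1) (x : V → ℝ) : msup (P.mulVec x) ≤ msup x :=
  Finset.sup'_le _ _ fun j _ => stoch_le_msup P hPn hPr x j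

private lemma minf_le_minf_stoch (P : Matrix V V ℝ) (hPn : ∀ i j, 0 ≤ P i j)
    (hPr : ∀ i, ∑ j, P i j = 1) (x : V → ℝ) : minf x ≤ minf (P.mulVec x) :=
  Finset.le_inf' _ _ fun j _ => minf_le_stoch P hPn hPr x j

/-- Oscillation contraction for a matrix with entries bounded below by `ε`. -/
private lemma osc_contract (P : Matrix V V ℝ) (ε : ℝ) (hε : ∀ i j, ε ≤ P i j)
    (hPr : ∀ i, ∑ j, P i j = 1) (x : V → ℝ) :
    msup (P.mulVec x) - minf (P.mulVec x) ≤
      (1 - (Fintype.card V : ℝ) * ε) * (msup x - minf x) := by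
  obtain ⟨i, _, hi⟩ := Finset.exists_mem_eq_sup' Finset.univ_nonempty (P.mulVec x)
  obtain ⟨k, _, hk⟩ := Finset.exists_mem_eq_inf' Finset.univ_nonempty (P.mulVec x)
  rw [show msup (P.mulVec x) = P.mulVec x i from hi,
      show minf (P.mulVec x) = P.mulVec x k from hk]
  have hoscx : (0:ℝ) ≤ msup x - minf x := sub_nonneg.2 (minf_le_msup x)
  have key : P.mulVec x i - P.mulVec x k
      = ∑ j, (P i j - P k j) * (x j - minf x) := by
    have h0 : ∑ j, (P i j - P k j) * (x j - minf x)
        = ∑ j, P i j * x j - ∑ j, P k j * x j - (∑ j, (P i j - P k j)) * minf x := by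
      rw [Finset.sum_mul, ← Finset.sum_sub_distrib, ← Finset.sum_sub_distrib]
      exact Finset.sum_congr rfl fun j _ => by ring
    have h1 : ∑ j, (P i j - P k j) = (0:ℝ) := by
      rw [Finset.sum_sub_distrib, hPr i, hPr k]; ring
    rw [h0, h1, mulVec_apply', mulVec_apply']
    ring
  rw [key]
  calc ∑ j, (P i j - P k j) * (x j - minf x)
      ≤ ∑ j, (P i j - min (P i j) (P k j)) * (msup x - minf x) := by
        apply Finset.sum_le_sum
        intro j _
        rcases le_total (P k j) (P i j) with h | h
        · rw [min_eq_right h]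
          exact mul_le_mul (le_refl _) (sub_le_sub_right (le_msup x j) _)
            (sub_nonneg.2 (minf_le x j)) (sub_nonneg.2 h)
        · rw [min_eq_left h]
          simp only [sub_self, zero_mul]
          exact mul_nonpos_of_nonpos_of_nonneg (sub_nonpos.2 h)
            (sub_nonneg.2 (minf_le x j))
    _ = (∑ j, (P i j - min (P i j) (P k j))) * (msup x - minf x) := by
        rw [Finset.sum_mul]
    _ = (1 - ∑ j, min (P i j) (P k j)) * (msup x - minf x) := by
        rw [Finset.sum_sub_distrib, hPr i]
    _ ≤ (1 - (Fintype.card V : ℝ) * ε) * (msup x - minf x) := by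
        apply mul_le_mul_of_nonneg_right _ hoscx
        apply sub_le_sub_left
        calc (Fintype.card V : ℝ) * ε = ∑ _j : V, ε := by
              rw [Finset.sum_const, Finset.card_univ, nsmul_eq_mul]
          _ ≤ ∑ j, min (P i j) (P k j) :=
              Finset.sum_le_sum fun j _ => le_min (hε i j) (hε k j)

end Aux

/-- **DeGroot model: convergence and agreement.**
Let `w` be a row-stochastic matrix on a finite set `V` with `w i i > 0` for all `i`, whose
support digraph is strongly connected.  Then `w` has a unique stationary probability vector `α`,
and for every initial vector `x` and every coordinate `j`, the DeGroot dynamics `A_t = w^t x`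
satisfies `(w^t x) j → ∑ i, α i * x i`. -/
theorem degroot_convergence (V : Type) [Fintype V] [DecidableEq V] [Nonempty V]
    (w : Matrix V V ℝ)
    (hnonneg : ∀ i j, 0 ≤ w i j)
    (hrow : ∀ i, ∑ j, w i j = 1)
    (hdiag : ∀ i, 0 < w i i)
    (hconn : ∀ i j : V, Relation.ReflTransGen (fun a b => 0 < w a b) i j) :
    ∃ α : V → ℝ,
      ((∀ i, 0 ≤ α i) ∧ (∑ i, α i = 1) ∧ (∀ j, ∑ i, α i * w i j = α j)) ∧
      (∀ β : V → ℝ,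
        ((∀ i, 0 ≤ β i) ∧ (∑ i, β i = 1) ∧ (∀ j, ∑ i, β i * w i j = β j)) → β = α) ∧
      (∀ x : V → ℝ, ∀ j : V,
        Filter.Tendsto (fun t : ℕ => (w ^ t).mulVec x j) Filter.atTop
          (nhds (∑ i, α i * x i))) := by
  classical
  -- powers are stochastic
  have hpnn : ∀ t : ℕ, ∀ i j, 0 ≤ (w ^ t) i j := by
    intro t
    induction t with
    | zero => intro i j; simp [Matrix.one_apply]; split <;> norm_num
    | succ t ih =>
      intro i j
      rw [pow_succ, Matrix.mul_apply]
      exact Finset.sum_nonneg fun k _ => mul_nonneg (ih i k) (hnonneg k j)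
  have hprow : ∀ t : ℕ, ∀ i, ∑ j, (w ^ t) i j = 1 := by
    intro t
    induction t with
    | zero => intro i; simp [Matrix.one_apply]
    | succ t ih =>
      intro i
      rw [pow_succ]
      simp only [Matrix.mul_apply]
      rw [Finset.sum_comm]
      calc ∑ k, ∑ j, (w ^ t) i k * w k j = ∑ k, (w ^ t) i k * ∑ j, w k j := by
            simp [Finset.mul_sum]
        _ = 1 := by simp only [hrow, mul_one]; exact ih i
  -- positivity propagates up powers
  have hstep : ∀ s : ℕ, ∀ i j, 0 < (w ^ s) i j → 0 < (w ^ (s + 1)) i j := by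
    intro s i j h
    rw [pow_succ, Matrix.mul_apply]
    exact Finset.sum_pos' (fun k _ => mul_nonneg (hpnn s i k) (hnonneg k j))
      ⟨j, Finset.mem_univ j, mul_pos h (hdiag j)⟩
  have hmono : ∀ s t : ℕ, s ≤ t → ∀ i j, 0 < (w ^ s) i j → 0 < (w ^ t) i j := by
    intro s t hst
    induction t, hst using Nat.le_induction with
    | base => exact fun i j h => h
    | succ t _ ih => exact fun i j h => hstep t i j (ih i j h)
  -- some power is entrywise positive
  have hpair : ∀ i j : V, ∃ s : ℕ, 0 < (w ^ s) i j := by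
    intro i j
    induction hconn i j with
    | refl => exact ⟨0, by simp [Matrix.one_apply_eq]⟩
    | @tail b c _ hbc ih =>
      obtain ⟨s, hs⟩ := ih
      refine ⟨s + 1, ?_⟩
      rw [pow_succ, Matrix.mul_apply]
      exact Finset.sum_pos' (fun k _ => mul_nonneg (hpnn s i k) (hnonneg k c))
        ⟨b, Finset.mem_univ b, mul_pos hs hbc⟩
  choose f hf using hpair
  set m : ℕ := (Finset.univ.sup fun p : V × V => f p.1 p.2) + 1 with hm_def
  have hm : 0 < m := Nat.succ_pos _
  have hpos : ∀ i j, 0 < (w ^ m) i j := by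
    intro i j
    refine hmono (f i j) m ?_ i j (hf i j)
    have h1 : f i j ≤ Finset.univ.sup fun p : V × V => f p.1 p.2 :=
      Finset.le_sup (f := fun p : V × V => f p.1 p.2) (Finset.mem_univ (i, j))
    rw [hm_def]
    exact h1.trans (Nat.le_succ _)
  set P := w ^ m with hP_def
  -- the minimal entry of P
  obtain ⟨p, _, hpmin⟩ := Finset.exists_mem_eq_inf'
    (Finset.univ_nonempty (α := V × V)) (fun q : V × V => P q.1 q.2)
  set ε : ℝ := Finset.univ.inf' Finset.univ_nonempty (fun q : V × V => P q.1 q.2) with hε_def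
  have hεpos : 0 < ε := hpmin ▸ hpos p.1 p.2
  have hε : ∀ i j, ε ≤ P i j := fun i j =>
    Finset.inf'_le (fun q : V × V => P q.1 q.2) (Finset.mem_univ (i, j))
  set c : ℝ := 1 - (Fintype.card V : ℝ) * ε with hc_def
  have hc0 : 0 ≤ c := by
    have : (Fintype.card V : ℝ) * ε ≤ 1 := by
      calc (Fintype.card V : ℝ) * ε = ∑ _j : V, ε := by
            rw [Finset.sum_const, Finset.card_univ, nsmul_eq_mul]
        _ ≤ ∑ j, P p.1 j := Finset.sum_le_sum fun j _ => hε p.1 j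
        _ = 1 := hprow m p.1
    linarith
  have hc1 : c < 1 := by
    have hcard : (0:ℝ) < Fintype.card V := by
      exact_mod_cast Fintype.card_pos
    have := mul_pos hcard hεpos
    simp only [hc_def]; linarith
  -- oscillation decay
  have hosc_step : ∀ x : V → ℝ,
      msup ((w^1).mulVec x) - minf ((w^1).mulVec x) ≤ msup x - minf x := by
    intro x
    have h1 := msup_stoch_le (w^1) (hpnn 1) (hprow 1) x
    have h2 := minf_le_minf_stoch (w^1) (hpnn 1) (hprow 1) x
    linarith
  have hosc_nonneg : ∀ x : V → ℝ, 0 ≤ msup x - minf x := fun x =>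
    sub_nonneg.2 (minf_le_msup x)
  have hosc_any : ∀ (s : ℕ) (x : V → ℝ),
      msup ((w^s).mulVec x) - minf ((w^s).mulVec x) ≤ msup x - minf x := by
    intro s x
    have h1 := msup_stoch_le (w^s) (hpnn s) (hprow s) x
    have h2 := minf_le_minf_stoch (w^s) (hpnn s) (hprow s) x
    linarith
  have hosc_pow : ∀ (k : ℕ) (x : V → ℝ),
      msup ((w^(m*k)).mulVec x) - minf ((w^(m*k)).mulVec x)
        ≤ c^k * (msup x - minf x) := by
    intro k
    induction k with
    | zero => intro x; simp
    | succ k ih =>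
      intro x
      have hsplit : (w ^ (m * (k+1))).mulVec x = (w^(m*k)).mulVec (P.mulVec x) := by
        rw [Matrix.mulVec_mulVec, hP_def, ← pow_add, Nat.mul_succ]
      rw [hsplit]
      calc msup ((w^(m*k)).mulVec (P.mulVec x)) - minf ((w^(m*k)).mulVec (P.mulVec x))
          ≤ c^k * (msup (P.mulVec x) - minf (P.mulVec x)) := ih _
        _ ≤ c^k * (c * (msup x - minf x)) := by
            apply mul_le_mul_of_nonneg_left _ (pow_nonneg hc0 k)
            exact osc_contract P ε hε (hprow m) x
        _ = c^(k+1) * (msup x - minf x) := by ring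
  have hosc_decay : ∀ (t : ℕ) (x : V → ℝ),
      msup ((w^t).mulVec x) - minf ((w^t).mulVec x)
        ≤ c^(t / m) * (msup x - minf x) := by
    intro t x
    have hsplit : (w ^ t).mulVec x = (w^(m*(t/m))).mulVec ((w^(t % m)).mulVec x) := by
      rw [Matrix.mulVec_mulVec, ← pow_add, Nat.div_add_mod]
    rw [hsplit]
    calc msup ((w^(m*(t/m))).mulVec ((w^(t % m)).mulVec x))
          - minf ((w^(m*(t/m))).mulVec ((w^(t % m)).mulVec x))
        ≤ c^(t/m) * (msup ((w^(t % m)).mulVec x) - minf ((w^(t % m)).mulVec x)) :=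
          hosc_pow _ _
      _ ≤ c^(t/m) * (msup x - minf x) :=
          mul_le_mul_of_nonneg_left (hosc_any _ _) (pow_nonneg hc0 _)
  -- c^(t/m) → 0
  have hdiv : Tendsto (fun t : ℕ => t / m) atTop atTop := by
    apply tendsto_atTop_atTop.2
    intro b
    exact ⟨b * m, fun t ht => (Nat.le_div_iff_mul_le hm).2 ht⟩
  have hcpow : Tendsto (fun t : ℕ => c ^ (t / m)) atTop (nhds 0) :=
    (tendsto_pow_atTop_nhds_zero_of_lt_one hc0 hc1).comp hdiv
  -- oscillation tends to 0
  have hosc0 : ∀ x : V → ℝ,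
      Tendsto (fun t : ℕ => msup ((w^t).mulVec x) - minf ((w^t).mulVec x))
        atTop (nhds 0) := by
    intro x
    have hup : Tendsto (fun t : ℕ => c ^ (t / m) * (msup x - minf x)) atTop (nhds 0) := by
      have := hcpow.mul_const (msup x - minf x)
      rwa [zero_mul] at this
    exact tendsto_of_tendsto_of_tendsto_of_le_of_le tendsto_const_nhds hup
      (fun t => hosc_nonneg _) (fun t => hosc_decay t x)
  -- for each x, all coordinates converge to a common limit
  have hlim : ∀ x : V → ℝ, ∃ L : ℝ, ∀ j : V,
      Tendsto (fun t : ℕ => (w ^ t).mulVec x j) atTop (nhds L) := by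
    intro x
    set g : ℕ → ℝ := fun t => minf ((w^t).mulVec x) with hg_def
    have hgmono : Monotone g := by
      apply monotone_nat_of_le_succ
      intro t
      have hsucc : (w ^ (t+1)).mulVec x = w.mulVec ((w^t).mulVec x) := by
        rw [Matrix.mulVec_mulVec, ← pow_succ']
      simp only [hg_def, hsucc]
      exact minf_le_minf_stoch w hnonneg hrow _
    have hgbdd : BddAbove (Set.range g) := by
      refine ⟨msup x, ?_⟩
      rintro _ ⟨t, rfl⟩
      exact (minf_le_msup _).trans (msup_stoch_le (w^t) (hpnn t) (hprow t) x)
    have hgL : Tendsto g atTop (nhds (⨆ t, g t)) := tendsto_atTop_ciSup hgmono hgbdd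
    refine ⟨⨆ t, g t, fun j => ?_⟩
    have hup : Tendsto (fun t : ℕ => g t + (msup ((w^t).mulVec x) - minf ((w^t).mulVec x)))
        atTop (nhds (⨆ t, g t)) := by
      have := hgL.add (hosc0 x)
      rwa [add_zero] at this
    apply tendsto_of_tendsto_of_tendsto_of_le_of_le hgL hup
    · intro t; exact minf_le _ j
    · intro t
      simp only [hg_def]
      have := le_msup ((w^t).mulVec x) j
      linarith
  choose Lfun hLfun using hlim
  set α : V → ℝ := fun i => Lfun (Pi.single i 1) with hα_def
  -- the main convergence statement
  have hmain : ∀ (x : V → ℝ) (j : V),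
      Tendsto (fun t : ℕ => (w ^ t).mulVec x j) atTop (nhds (∑ i, α i * x i)) := by
    intro x j
    have h1 : ∀ i : V, Tendsto (fun t : ℕ => (w ^ t) j i * x i) atTop (nhds (α i * x i)) := by
      intro i
      have h := hLfun (Pi.single i 1) j
      have heq : (fun t : ℕ => (w ^ t).mulVec (Pi.single i 1) j)
          = fun t : ℕ => (w ^ t) j i := by
        funext t
        rw [congrFun (Matrix.mulVec_single_one _ i) j, Matrix.col_apply]
      rw [heq] at h
      exact h.mul_const (x i)
    have := tendsto_finset_sum Finset.univ (fun i _ => h1 i)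
    exact this
  have hαj : ∀ (x : V → ℝ) (j : V), Lfun x = ∑ i, α i * x i := by
    intro x j
    exact tendsto_nhds_unique (hLfun x j) (hmain x j)
  -- properties of α
  have hαnonneg : ∀ i, 0 ≤ α i := by
    intro i
    have h := hLfun (Pi.single i 1) (Classical.arbitrary V)
    refine ge_of_tendsto' h fun t => ?_
    rw [congrFun (Matrix.mulVec_single_one _ i) _, Matrix.col_apply]
    exact hpnn t _ i
  have hαsum : ∑ i, α i = 1 := by
    have h1 := hmain (fun _ => 1) (Classical.arbitrary V)
    have h2 : Tendsto (fun t : ℕ => (w ^ t).mulVec (fun _ => 1) (Classical.arbitrary V))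
        atTop (nhds 1) := by
      have heq : (fun t : ℕ => (w ^ t).mulVec (fun _ => (1:ℝ)) (Classical.arbitrary V))
          = fun _ : ℕ => (1:ℝ) := by
        funext t
        rw [mulVec_apply']
        simp only [mul_one]
        exact hprow t _
      rw [heq]
      exact tendsto_const_nhds
    have := tendsto_nhds_unique h1 h2
    simpa using this
  have hαstat : ∀ j, ∑ i, α i * w i j = α j := by
    intro j
    set j0 := Classical.arbitrary V
    have h1 := hmain (fun i => w i j) j0
    have h2 : Tendsto (fun t : ℕ => (w ^ t).mulVec (fun i => w i j) j0)
        atTop (nhds (α j)) := by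
      have heq : (fun t : ℕ => (w ^ t).mulVec (fun i => w i j) j0)
          = fun t : ℕ => (w ^ (t+1)).mulVec (Pi.single j 1) j0 := by
        funext t
        rw [congrFun (Matrix.mulVec_single_one (w ^ (t+1)) j) j0, Matrix.col_apply, pow_succ,
          Matrix.mul_apply, mulVec_apply']
      rw [heq]
      exact (Filter.tendsto_add_atTop_iff_nat 1).2 (hLfun (Pi.single j 1) j0)
    exact tendsto_nhds_unique h1 h2
  refine ⟨α, ⟨hαnonneg, hαsum, hαstat⟩, ?_, hmain⟩
  -- uniqueness
  rintro β ⟨hβnn, hβsum, hβstat⟩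
  have hinv : ∀ (t : ℕ) (x : V → ℝ), ∑ i, β i * (w ^ t).mulVec x i = ∑ i, β i * x i := by
    intro t
    induction t with
    | zero => intro x; simp [Matrix.one_mulVec]
    | succ t ih =>
      intro x
      have hsucc : (w ^ (t+1)).mulVec x = (w ^ t).mulVec (w.mulVec x) := by
        rw [Matrix.mulVec_mulVec, ← pow_succ]
      rw [hsucc, ih (w.mulVec x)]
      calc ∑ i, β i * w.mulVec x i = ∑ i, ∑ k, β i * (w i k * x k) := by
            simp [mulVec_apply', Finset.mul_sum]
        _ = ∑ k, (∑ i, β i * w i k) * x k := by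
            rw [Finset.sum_comm]
            apply Finset.sum_congr rfl
            intro k _
            rw [Finset.sum_mul]
            apply Finset.sum_congr rfl
            intro i _; ring
        _ = ∑ k, β k * x k := by
            apply Finset.sum_congr rfl
            intro k _
            rw [hβstat k]
  funext j
  set x : V → ℝ := Pi.single j 1 with hx_def
  have hconst : ∀ t : ℕ, ∑ i, β i * (w ^ t).mulVec x i = β j := by
    intro t
    rw [hinv t x]
    simp [hx_def, Pi.single_apply, Finset.sum_ite_eq']
  have h1 : Tendsto (fun t : ℕ => ∑ i, β i * (w ^ t).mulVec x i) atTop (nhds (β j)) := by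
    simp only [hconst]
    exact tendsto_const_nhds
  have h2 : Tendsto (fun t : ℕ => ∑ i, β i * (w ^ t).mulVec x i) atTop
      (nhds (∑ i, β i * (∑ k, α k * x k))) := by
    apply tendsto_finset_sum
    intro i _
    exact (hmain x i).const_mul (β i)
  have h3 : ∑ i, β i * (∑ k, α k * x k) = α j := by
    rw [← Finset.sum_mul, hβsum, one_mul]
    simp [hx_def, Pi.single_apply, Finset.sum_ite_eq']
  rw [h3] at h2
  exact tendsto_nhds_unique h1 h2
end

section
/- In the voter model on a finite set V with row-stochastic weights w satisfying w(i,i) > 0 for all i and strong connectivity of {(i,j) : w(i,j) > 0}, almost surely there exists a time after which all agents hold the same constant action: the Markov chain on {0,1}^V is almost surely absorbed in the all-0 or the all-1 configuration, so all agents converge to a common limit action A_∞. -/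
open MeasureTheory ProbabilityTheory

lemma exists_absorbing_map {V : Type} [Fintype V] (r : V → V → Prop)
    (hrefl : ∀ i, r i i) (v0 : V) (hconn : ∀ i, Relation.ReflTransGen r i v0) :
    ∃ (f : V → V) (L : ℕ), 0 < L ∧ (∀ i, r i (f i)) ∧ ∀ i, f^[L] i = v0 := by
  classical
  have hex : ∀ i : V, ∃ n : ℕ, ∃ l : List V, l.length = n ∧ List.Chain r i l ∧
      (i :: l).getLast (List.cons_ne_nil _ _) = v0 := by
    intro i
    obtain ⟨l, hc, hl⟩ := List.exists_isChain_cons_of_relationReflTransGen (hconn i)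
    exact ⟨l.length, l, rfl, hc, hl⟩
  set d : V → ℕ := fun i => Nat.find (hex i) with hd
  have hdv0 : d v0 = 0 :=
    Nat.eq_zero_of_le_zero (Nat.find_le ⟨[], rfl, List.Chain.nil, rfl⟩)
  have hstep : ∀ i, ∃ j, r i j ∧ ((i = v0 ∧ j = v0) ∨ d j < d i) := by
    intro i
    obtain ⟨l, hlen, hchain, hlast⟩ := Nat.find_spec (hex i)
    match l, hlen, hchain, hlast with
    | [], hlen, hchain, hlast =>
      have hi : i = v0 := hlast
      exact ⟨i, hrefl i, Or.inl ⟨hi, hi.symm ▸ hi⟩⟩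
    | (j :: l'), hlen, hchain, hlast =>
      have hrij : r i j := (List.chain_cons.1 hchain).1
      have hchain' : List.Chain r j l' := (List.chain_cons.1 hchain).2
      have hlast' : (j :: l').getLast (List.cons_ne_nil _ _) = v0 := by
        rwa [List.getLast_cons_cons] at hlast
      have hdj : d j ≤ l'.length := Nat.find_le ⟨l', rfl, hchain', hlast'⟩
      have : l'.length < d i := by
        have : (j :: l').length = d i := hlen
        simp [List.length_cons] at this
        omega
      exact ⟨j, hrij, Or.inr (lt_of_le_of_lt hdj this)⟩
  choose f hf using hstep
  have hzero : ∀ i, d i = 0 → i = v0 := by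
    intro i h0
    rcases (hf i).2 with h | h
    · exact h.1
    · omega
  have key : ∀ n : ℕ, ∀ i, d i ≤ n → f^[n] i = v0 := by
    intro n
    induction n with
    | zero => intro i h; exact hzero i (Nat.le_zero.1 h)
    | succ n ih =>
      intro i h
      rw [Function.iterate_succ_apply]
      rcases (hf i).2 with hc | hc
      · have hfi : f i = v0 := hc.2
        exact ih _ (by rw [hfi, hdv0]; omega)
      · exact ih _ (by omega)
  refine ⟨f, Finset.univ.sup d + 1, Nat.succ_pos _, fun i => (hf i).1, fun i => ?_⟩
  exact key _ i (le_trans (Finset.le_sup (Finset.mem_univ i)) (Nat.le_succ _))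



/-- **Absorption of the voter model.**
On a finite set `V` with row-stochastic weights `w` satisfying `w i i > 0` and strong
connectivity of the support `{(i,j) : w i j > 0}`, run the voter model: at each step `t ≥ 1`
every agent `i` independently picks a random agent `J t i` with `P(J t i = j) = w i j` and
copies its previous action, `A t i = A (t-1) (J t i)`.  Then almost surely the chain is
absorbed in the all-`0` or all-`1` configuration: there is a common constant limit action. -/
theorem voter_model_absorption
    (V : Type) [Fintype V] [Nonempty V] [MeasurableSpace V] [MeasurableSingletonClass V]
    (w : V → V → ℝ)
    (hnonneg : ∀ i j, 0 ≤ w i j)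
    (hrow : ∀ i, ∑ j, w i j = 1)
    (hdiag : ∀ i, 0 < w i i)
    (hconn : ∀ i j : V, Relation.ReflTransGen (fun a b => 0 < w a b) i j)
    {Ω : Type} [MeasurableSpace Ω] (P : Measure Ω) [IsProbabilityMeasure P]
    -- the independent random choices of neighbors, `P(J t i = j) = w i j`
    (J : ℕ → V → Ω → V)
    (hJmeas : ∀ t i, Measurable (J t i))
    (hJindep : iIndepFun
      (fun p : ℕ × V => J p.1 p.2) P)
    (hJlaw : ∀ t i j, P {ω | J t i ω = j} = ENNReal.ofReal (w i j))
    -- the voter model dynamics, from an arbitrary measurable initial configuration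
    (A : ℕ → V → Ω → Bool)
    (hA0meas : ∀ i, Measurable (A 0 i))
    (hAstep : ∀ t i ω, A (t + 1) i ω = A t (J (t + 1) i ω) ω) :
    ∀ᵐ ω ∂P, ∃ b : Bool, ∃ T : ℕ, ∀ t : ℕ, T ≤ t → ∀ i : V, A t i ω = b := by
  classical
  obtain ⟨f, L, hLpos, hrf, hfL⟩ := exists_absorbing_map (fun a b => 0 < w a b)
    hdiag (Classical.arbitrary V) (fun i => hconn i _)
  set v0 := Classical.arbitrary V
  -- the blocks of time-indices
  set S : ℕ → Finset (ℕ × V) :=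
    fun k => (Finset.Ico (k * L + 1) (k * L + L + 1)) ×ˢ Finset.univ with hS
  set E : ℕ → Set Ω := fun k => ⋂ p ∈ S k, (J p.1 p.2) ⁻¹' {f p.2} with hE
  have hEmeas : ∀ k, MeasurableSet (E k) := fun k =>
    Finset.measurableSet_biInter _ (fun p _ => (hJmeas p.1 p.2) (measurableSet_singleton _))
  -- measure of any intersection over a finset of indices
  have hinter : ∀ K : Finset (ℕ × V),
      P (⋂ p ∈ K, (fun p : ℕ × V => J p.1 p.2) p ⁻¹' {f p.2}) =
        ∏ p ∈ K, P ((J p.1 p.2) ⁻¹' {f p.2}) :=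
    fun K => hJindep.measure_inter_preimage_eq_mul K
      (sets := fun p => {f p.2}) (fun p _ => measurableSet_singleton _)
  have hsingle : ∀ t i (j : V), P ((J t i) ⁻¹' {j}) = ENNReal.ofReal (w i j) := by
    intro t i j
    have : (J t i) ⁻¹' {j} = {ω | J t i ω = j} := rfl
    rw [this, hJlaw]
  -- the common value of the block probabilities
  set q : ENNReal := ∏ i : V, ENNReal.ofReal (w i (f i)) with hq
  have hq0 : q ≠ 0 := by
    rw [hq, Finset.prod_ne_zero_iff]
    intro i _
    simpa [ENNReal.ofReal_eq_zero, not_le] using (hrf i)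
  have hprodS : ∀ k, ∏ p ∈ S k, P ((J p.1 p.2) ⁻¹' {f p.2}) = q ^ L := by
    intro k
    rw [hS]
    rw [Finset.prod_product]
    have : ∀ t ∈ Finset.Ico (k * L + 1) (k * L + L + 1),
        ∏ i : V, P ((J t i) ⁻¹' {f i}) = q := by
      intro t _
      rw [hq]
      exact Finset.prod_congr rfl (fun i _ => hsingle t i (f i))
    rw [Finset.prod_congr rfl this, Finset.prod_const, Nat.card_Ico]
    congr 1
    omega
  have hPE : ∀ k, P (E k) = q ^ L := fun k => (hinter (S k)).trans (hprodS k)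
  -- blocks are disjoint
  have hdisj : ∀ k m : ℕ, k ≠ m → Disjoint (S k) (S m) := by
    intro k m hkm
    rw [Finset.disjoint_left]
    rintro ⟨t, i⟩ hp hp'
    simp only [hS, Finset.mem_product, Finset.mem_Ico] at hp hp'
    rcases Nat.lt_or_ge k m with h | h
    · have : k * L + L ≤ m * L := by
        have := Nat.mul_le_mul_right L h
        nlinarith [Nat.mul_le_mul_right L h]
      omega
    · have hmk : m < k := lt_of_le_of_ne h (Ne.symm hkm)
      have : m * L + L ≤ k * L := by nlinarith [Nat.mul_le_mul_right L (le_of_lt hmk)]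
      omega
  -- the E k are independent
  have hEindep : iIndepSet E P := by
    rw [iIndepSet_iff_meas_biInter hEmeas]
    intro K
    have h1 : (⋂ k ∈ K, E k) = ⋂ p ∈ K.biUnion S, (J p.1 p.2) ⁻¹' {f p.2} := by
      rw [Finset.set_biInter_biUnion]
    rw [h1, hinter, Finset.prod_biUnion]
    · exact Finset.prod_congr rfl fun k _ => ((hinter (S k)).symm : _)
    · intro k hk m hm hkm
      exact hdisj k m hkm
  have htsum : (∑' k, P (E k)) = ⊤ := by
    simp only [hPE]
    exact ENNReal.tsum_const_eq_top_of_ne_zero (pow_ne_zero _ hq0)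
  have hone : P (Filter.limsup E Filter.atTop) = 1 :=
    measure_limsup_eq_one hEmeas hEindep htsum
  have hae : ∀ᵐ ω ∂P, ω ∈ Filter.limsup E Filter.atTop := by
    rw [MeasureTheory.ae_iff]
    have : {ω | ¬ ω ∈ Filter.limsup E Filter.atTop} = (Filter.limsup E Filter.atTop)ᶜ := rfl
    rw [this, measure_compl (MeasurableSet.measurableSet_limsup hEmeas) (measure_ne_top _ _), hone,
      measure_univ, tsub_self]
  filter_upwards [hae] with ω hω
  -- get one occurring block
  obtain ⟨k, hk⟩ := (Filter.mem_limsup_iff_frequently_mem.1 hω).exists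
  have hJval : ∀ s : ℕ, s < L → ∀ i, J (k * L + s + 1) i ω = f i := by
    intro s hs i
    have hmem : ((k * L + s + 1, i) : ℕ × V) ∈ S k := by
      simp only [hS, Finset.mem_product, Finset.mem_Ico, Finset.mem_univ, and_true]
      omega
    have := Set.mem_iInter₂.1 hk _ hmem
    simpa using this
  have hAs : ∀ s : ℕ, s ≤ L → ∀ i, A (k * L + s) i ω = A (k * L) (f^[s] i) ω := by
    intro s
    induction s with
    | zero => intro _ i; rfl
    | succ s ih =>
      intro hs i
      have h1 : A (k * L + (s + 1)) i ω = A (k * L + s) (J (k * L + s + 1) i ω) ω := by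
        have := hAstep (k * L + s) i ω
        simpa [Nat.add_assoc] using this
      rw [h1, hJval s (by omega) i, ih (by omega) (f i), Function.iterate_succ_apply]
  refine ⟨A (k * L) v0 ω, k * L + L, ?_⟩
  have hbase : ∀ i, A (k * L + L) i ω = A (k * L) v0 ω := by
    intro i
    rw [hAs L le_rfl i, hfL i]
  intro t ht
  induction t with
  | zero =>
    intro i
    have : k * L + L = 0 := Nat.le_zero.1 ht
    rw [← this] at *
    exact hbase i
  | succ t ih =>
    intro i
    rcases Nat.lt_or_ge (k * L + L) (t + 1) with h | h
    · have ht' : k * L + L ≤ t := by omega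
      rw [hAstep t i ω]
      exact ih ht' _
    · have : k * L + L = t + 1 := by omega
      rw [← this]
      exact hbase i
end

section
/- Consider the voter model on a finite set V with row-stochastic weights w, w(i,i) > 0 for all i, strongly connected support, and stationary distribution α (the unique probability vector with α = α w). Let S be uniform on {0,1} and let the initial actions be private signals X_i that are i.i.d. conditioned on S with P(X_i = S) = 1/2 + δ for some 0 < δ < 1/2. Let A_∞ be the common limit action (which exists almost surely). Then: (1) conditioned on the private signals, P(A_∞ = 1 | X) = Σ_{i∈V} α_i X_i; (2) P(A_∞ = S | X) = Σ_{i∈V} α_i 1{X_i = S}; and (3) P(A_∞ = S) = 1/2 + δ. -/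
open MeasureTheory ProbabilityTheory Filter

section Aux
variable {Ω : Type} [MeasurableSpace Ω] (P : Measure Ω) [IsProbabilityMeasure P]

lemma vm_integrable_comp_fin {E : Type} [Fintype E] [MeasurableSpace E]
    [MeasurableSingletonClass E] {W : Ω → E} (hW : Measurable W) (h : E → ℝ) :
    Integrable (fun ω => h (W ω)) P := by
  refine (integrable_const (∑ e, |h e|)).mono'
    (((measurable_of_countable h).comp hW).aestronglyMeasurable) ?_
  refine Filter.Eventually.of_forall fun ω => ?_
  rw [Real.norm_eq_abs]
  exact Finset.single_le_sum (f := fun e => |h e|) (fun e _ => abs_nonneg _) (Finset.mem_univ _)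

lemma vm_integral_comp_fin {E : Type} [Fintype E] [MeasurableSpace E]
    [MeasurableSingletonClass E] {W : Ω → E} (hW : Measurable W) (h : E → ℝ) :
    ∫ ω, h (W ω) ∂P = ∑ e, (P {ω | W ω = e}).toReal * h e := by
  classical
  have h1 : (fun ω => h (W ω)) = fun ω => ∑ e, Set.indicator (W ⁻¹' {e}) (fun _ => h e) ω := by
    funext ω
    rw [Finset.sum_eq_single (W ω)]
    · simp [Set.indicator_apply]
    · intro e _ hne
      simp [Set.indicator_apply, Set.mem_preimage]
      intro hcon; exact absurd hcon.symm hne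
    · simp
  rw [h1, integral_finset_sum]
  · refine Finset.sum_congr rfl fun e _ => ?_
    rw [integral_indicator_const _ (hW (measurableSet_singleton e))]
    simp only [smul_eq_mul]
    congr 1
  · intro e _
    exact (integrable_const (h e)).indicator (hW (measurableSet_singleton e))

end Aux

/-- The backward walk in the voter model. -/
def vmB {V Ω : Type} (J : ℕ → V → Ω → V) : ℕ → V → Ω → V
  | 0, i, _ => i
  | (t+1), i, ω => vmB J t (J (t+1) i ω) ω

/-- The deterministic version of `vmB` as a function of the choices. -/
def vmPhi {V : Type} : ℕ → ((ℕ × V) → V) → V → V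
  | 0, _, i => i
  | (t+1), g, i => vmPhi t g (g (t+1, i))

lemma vmB_eq_phi {V Ω : Type} (J : ℕ → V → Ω → V) :
    ∀ (t : ℕ) (i : V) (ω : Ω), vmB J t i ω = vmPhi t (fun p => J p.1 p.2 ω) i := by
  intro t
  induction t with
  | zero => intro i ω; rfl
  | succ t ih => intro i ω; simp only [vmB, vmPhi]; exact ih _ ω

lemma vmPhi_congr {V : Type} :
    ∀ (t : ℕ) (g g' : (ℕ × V) → V), (∀ s k, 1 ≤ s → s ≤ t → g (s, k) = g' (s, k)) →
      ∀ i, vmPhi t g i = vmPhi t g' i := by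
  intro t
  induction t with
  | zero => intro g g' _ i; rfl
  | succ t ih =>
    intro g g' hgg i
    simp only [vmPhi]
    rw [hgg (t+1) i (Nat.le_add_left 1 t) le_rfl]
    exact ih g g' (fun s k h1 h2 => hgg s k h1 (h2.trans (Nat.le_succ t))) _

/-- **(Non-)learning in the voter model.**
Run the voter model on a finite set `V` with row-stochastic weights `w` (with `w i i > 0` and
strongly connected support) and stationary distribution `α`, starting from conditionally
i.i.d. private signals `X i` with `P(X i = S) = 1/2 + δ`, where `S` is uniform on `{0,1}`.
Let `A∞` be the a.s. common limit action.  Then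
(1) `P(A∞ = 1 | X) = ∑ i, α i • X i`;
(2) `P(A∞ = S | S, X) = ∑ i, α i • 1{X i = S}`;
(3) `P(A∞ = S) = 1/2 + δ`. -/
theorem voter_model_learning
    (V : Type) [Fintype V] [Nonempty V] [MeasurableSpace V] [MeasurableSingletonClass V]
    (w : V → V → ℝ)
    (hnonneg : ∀ i j, 0 ≤ w i j)
    (hrow : ∀ i, ∑ j, w i j = 1)
    (hdiag : ∀ i, 0 < w i i)
    (hconn : ∀ i j : V, Relation.ReflTransGen (fun a b => 0 < w a b) i j)
    -- the stationary distribution of the chain with transition matrix `w`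
    (α : V → ℝ)
    (hαnonneg : ∀ i, 0 ≤ α i) (hαsum : ∑ i, α i = 1)
    (hαstat : ∀ j, ∑ i, α i * w i j = α j)
    {Ω : Type} [MeasurableSpace Ω] (P : Measure Ω) [IsProbabilityMeasure P]
    (δ : ℝ) (hδ0 : 0 < δ) (hδhalf : δ < 1 / 2)
    -- the state of the world and the private signals, with their joint law:
    -- `S` uniform and, given `S`, the `X i` i.i.d. with `P(X i = S) = 1/2 + δ`
    (S : Ω → Bool) (hSmeas : Measurable S)
    (X : V → Ω → Bool) (hXmeas : ∀ i, Measurable (X i))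
    (hlaw : ∀ (s : Bool) (f : V → Bool),
      P {ω | S ω = s ∧ ∀ i, X i ω = f i}
        = ENNReal.ofReal (1 / 2 * ∏ i, (if f i = s then 1 / 2 + δ else 1 / 2 - δ)))
    -- the independent random neighbor choices, `P(J t i = j) = w i j`,
    -- independent of the signals and the state of the world
    (J : ℕ → V → Ω → V)
    (hJmeas : ∀ t i, Measurable (J t i))
    (hJindep : iIndepFun
      (fun p : ℕ × V => J p.1 p.2) P)
    (hJlaw : ∀ t i j, P {ω | J t i ω = j} = ENNReal.ofReal (w i j))
    (hJS : IndepFun (fun ω => (S ω, fun i => X i ω))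
      (fun ω (p : ℕ × V) => J p.1 p.2 ω) P)
    -- the voter dynamics started from the private signals
    (A : ℕ → V → Ω → Bool)
    (hA0 : ∀ i ω, A 0 i ω = X i ω)
    (hAstep : ∀ t i ω, A (t + 1) i ω = A t (J (t + 1) i ω) ω)
    -- the common limit action, which exists a.s.
    (Alim : Ω → Bool) (hAlimmeas : Measurable Alim)
    (hAlim : ∀ᵐ ω ∂P, ∃ T : ℕ, ∀ t : ℕ, T ≤ t → ∀ i : V, A t i ω = Alim ω) :
    (P[(fun ω => if Alim ω = true then (1 : ℝ) else 0) |
        MeasurableSpace.comap (fun ω (i : V) => X i ω) MeasurableSpace.pi]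
      =ᵐ[P] fun ω => ∑ i, α i * (if X i ω = true then 1 else 0)) ∧
    (P[(fun ω => if Alim ω = S ω then (1 : ℝ) else 0) |
        MeasurableSpace.comap (fun ω => (S ω, fun i : V => X i ω)) inferInstance]
      =ᵐ[P] fun ω => ∑ i, α i * (if X i ω = S ω then 1 else 0)) ∧
    P {ω | Alim ω = S ω} = ENNReal.ofReal (1 / 2 + δ) := by
  classical
  have hπ1 : Measurable (fun ω (i : V) => X i ω) := measurable_pi_lambda _ hXmeas
  have hUm : Measurable (fun ω => (S ω, fun i => X i ω)) := hSmeas.prodMk hπ1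
  -- measurability of the backward walk
  have hBm : ∀ t i, Measurable (fun ω => vmB J t i ω) := by
    intro t
    induction t with
    | zero => intro i; simpa [vmB] using measurable_const
    | succ t ih =>
      intro i
      have : (fun ω => vmB J (t+1) i ω)
          = (fun p : V × (V → V) => p.2 p.1)
            ∘ (fun ω => (J (t+1) i ω, fun k => vmB J t k ω)) := by
        funext ω; simp [vmB]
      rw [this]
      exact (measurable_of_countable _).comp
        ((hJmeas _ i).prodMk (measurable_pi_lambda _ ih))
  -- representation of the actions via the backward walk
  have hArep : ∀ t i ω, A t i ω = X (vmB J t i ω) ω := by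
    intro t
    induction t with
    | zero => intro i ω; simpa [vmB] using hA0 i ω
    | succ t ih =>
      intro i ω
      rw [hAstep]
      simpa [vmB] using ih (J (t+1) i ω) ω
  have hAm : ∀ t i, Measurable (A t i) := by
    intro t i
    have : A t i = (fun p : (V → Bool) × V => p.1 p.2)
        ∘ (fun ω => (fun k => X k ω, vmB J t i ω)) := by
      funext ω; simp [hArep]
    rw [this]
    exact (measurable_of_countable _).comp (hπ1.prodMk (hBm t i))
  -- the joint law of the signals and finitely many choices
  have hJL : ∀ (s : Bool) (f : V → Bool) (Q : Finset (ℕ × V)) (g : (ℕ × V) → V),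
      P {ω | (S ω = s ∧ ∀ i, X i ω = f i) ∧ ∀ p ∈ Q, J p.1 p.2 ω = g p}
        = P {ω | S ω = s ∧ ∀ i, X i ω = f i} * ∏ p ∈ Q, ENNReal.ofReal (w p.2 (g p)) := by
    intro s f Q g
    have hD : MeasurableSet (⋂ p ∈ Q, Function.eval p ⁻¹' {g p} : Set ((ℕ × V) → V)) := by
      refine MeasurableSet.biInter Q.countable_toSet fun p _ => ?_
      exact measurable_pi_apply p (measurableSet_singleton (g p))
    have hset : {ω | (S ω = s ∧ ∀ i, X i ω = f i) ∧ ∀ p ∈ Q, J p.1 p.2 ω = g p}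
        = (fun ω => (S ω, fun i => X i ω)) ⁻¹' {(s, f)}
          ∩ (fun ω (p : ℕ × V) => J p.1 p.2 ω) ⁻¹' (⋂ p ∈ Q, Function.eval p ⁻¹' {g p}) := by
      ext ω
      simp [Set.mem_preimage, Prod.ext_iff, funext_iff, Function.eval, and_assoc]
    rw [hset, hJS.measure_inter_preimage_eq_mul _ _ (measurableSet_singleton _) hD]
    congr 1
    · congr 1; ext ω; simp [Prod.ext_iff, funext_iff]
    · have hpre : (fun ω (p : ℕ × V) => J p.1 p.2 ω) ⁻¹' (⋂ p ∈ Q, Function.eval p ⁻¹' {g p})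
          = ⋂ p ∈ Q, (fun p : ℕ × V => J p.1 p.2) p ⁻¹' {g p} := by
        ext ω; simp [Function.eval]
      rw [hpre, hJindep.meas_biInter (fun p _ => ⟨{g p}, measurableSet_singleton _, rfl⟩)]
      refine Finset.prod_congr rfl fun p _ => ?_
      exact hJlaw p.1 p.2 (g p)
  -- the key independence step
  have hKEY : ∀ (t : ℕ) (i k : V) (H : Bool → (V → Bool) → (V → V) → ℝ),
      ∫ ω, (if J (t+1) i ω = k then
          H (S ω) (fun i' => X i' ω) (fun k' => vmB J t k' ω) else 0) ∂P
        = w i k * ∫ ω, H (S ω) (fun i' => X i' ω) (fun k' => vmB J t k' ω) ∂P := by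
    intro t i k H
    set Qt : Finset (ℕ × V) := Finset.range (t+1) ×ˢ (Finset.univ : Finset V) with hQt
    have hQmem : ∀ p : ℕ × V, p ∈ Qt ↔ p.1 < t + 1 := by
      intro p; simp [hQt, Finset.mem_product]
    have hti : ((t+1 : ℕ), i) ∉ Qt := by simp [hQmem]
    have hne : ∀ p ∈ Qt, p ≠ ((t+1 : ℕ), i) := by
      intro p hp hcon
      rw [hcon] at hp
      exact hti hp
    -- the extension operator
    obtain ⟨ext, hextlt⟩ : ∃ ext : ((Fin (t+1) × V) → V) → (ℕ × V) → V,
        ∀ (g : (Fin (t+1) × V) → V) (p : ℕ × V) (h : p.1 < t+1),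
          ext g p = g (⟨p.1, h⟩, p.2) :=
      ⟨fun g p => if h : p.1 < t + 1 then g (⟨p.1, h⟩, p.2) else p.2,
        fun g p h => dif_pos h⟩
    -- the finite-data random variables
    have hWm : Measurable (fun ω => (S ω, (fun i' => X i' ω),
        fun q : Fin (t+1) × V => J q.1.1 q.2 ω)) :=
      hSmeas.prodMk (hπ1.prodMk (measurable_pi_lambda _ fun q => hJmeas q.1.1 q.2))
    have hW'm : Measurable (fun ω => (J (t+1) i ω, S ω, (fun i' => X i' ω),
        fun q : Fin (t+1) × V => J q.1.1 q.2 ω)) :=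
      (hJmeas _ _).prodMk hWm
    -- the atoms of `W`
    have hatomW : ∀ e : Bool × (V → Bool) × ((Fin (t+1) × V) → V),
        {ω | (S ω, (fun i' => X i' ω), (fun q : Fin (t+1) × V => J q.1.1 q.2 ω)) = e}
          = {ω | (S ω = e.1 ∧ ∀ i', X i' ω = e.2.1 i') ∧
              ∀ p ∈ Qt, J p.1 p.2 ω = ext e.2.2 p} := by
      intro e
      ext ω
      simp only [Set.mem_setOf_eq, Prod.ext_iff, funext_iff]
      constructor
      · rintro ⟨h1, h2, h3⟩
        refine ⟨⟨h1, fun i' => h2 i'⟩, fun p hp => ?_⟩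
        have hlt : p.1 < t+1 := (hQmem p).1 hp
        rw [hextlt e.2.2 p hlt]
        exact h3 (⟨p.1, hlt⟩, p.2)
      · rintro ⟨⟨h1, h2⟩, h3⟩
        refine ⟨h1, h2, fun q => ?_⟩
        obtain ⟨⟨q1, hq1⟩, q2⟩ := q
        have hq : ((q1, q2) : ℕ × V) ∈ Qt := (hQmem _).2 hq1
        have h4 := h3 _ hq
        rwa [hextlt e.2.2 (q1, q2) hq1] at h4
      -- the factorization of the atoms of `W'`
    have hfactor : ∀ e : Bool × (V → Bool) × ((Fin (t+1) × V) → V),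
        P {ω | J (t+1) i ω = k ∧ (S ω, (fun i' => X i' ω),
            (fun q : Fin (t+1) × V => J q.1.1 q.2 ω)) = e}
          = ENNReal.ofReal (w i k) * P {ω | (S ω, (fun i' => X i' ω),
              (fun q : Fin (t+1) × V => J q.1.1 q.2 ω)) = e} := by
      intro e
      have h1 : {ω | J (t+1) i ω = k ∧ (S ω, (fun i' => X i' ω),
            (fun q : Fin (t+1) × V => J q.1.1 q.2 ω)) = e}
          = {ω | (S ω = e.1 ∧ ∀ i', X i' ω = e.2.1 i') ∧
              ∀ p ∈ insert ((t+1 : ℕ), i) Qt,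
                J p.1 p.2 ω = Function.update (ext e.2.2) ((t+1 : ℕ), i) k p} := by
        ext ω
        rw [Set.mem_setOf_eq, Set.mem_setOf_eq, Finset.forall_mem_insert]
        constructor
        · rintro ⟨hk, hW⟩
          have hW' := (Set.ext_iff.1 (hatomW e) ω).1 hW
          refine ⟨hW'.1, ⟨by simpa [Function.update_self] using hk, fun p hp => ?_⟩⟩
          rw [Function.update_of_ne (hne p hp)]
          exact hW'.2 p hp
        · rintro ⟨hSX, hk, hQ⟩
          have hW' : ω ∈ {ω | (S ω = e.1 ∧ ∀ i', X i' ω = e.2.1 i') ∧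
              ∀ p ∈ Qt, J p.1 p.2 ω = ext e.2.2 p} := by
            refine ⟨hSX, fun p hp => ?_⟩
            have := hQ p hp
            rwa [Function.update_of_ne (hne p hp)] at this
          refine ⟨by simpa [Function.update_self] using hk, ?_⟩
          exact (Set.ext_iff.1 (hatomW e) ω).2 hW'
      rw [h1, hJL _ _ _ _, Finset.prod_insert hti, Function.update_self,
        hatomW e, hJL _ _ _ _]
      have hprod : ∏ p ∈ Qt, ENNReal.ofReal (w p.2 (Function.update (ext e.2.2) ((t+1:ℕ), i) k p))
          = ∏ p ∈ Qt, ENNReal.ofReal (w p.2 (ext e.2.2 p)) :=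
        Finset.prod_congr rfl fun p hp => by rw [Function.update_of_ne (hne p hp)]
      rw [hprod]
      ring
    -- pointwise rewriting of the integrand
    have hXW : ∀ ω, H (S ω) (fun i' => X i' ω) (fun k' => vmB J t k' ω)
        = (fun e : Bool × (V → Bool) × ((Fin (t+1) × V) → V) =>
            H e.1 e.2.1 (fun k' => vmPhi t (ext e.2.2) k'))
          (S ω, (fun i' => X i' ω), (fun q : Fin (t+1) × V => J q.1.1 q.2 ω)) := by
      intro ω
      simp only
      congr 1
      funext k'
      rw [vmB_eq_phi]
      refine vmPhi_congr t _ _ (fun s' k'' h1 h2 => ?_) k'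
      rw [hextlt _ (s', k'') (Nat.lt_succ_of_le h2)]
    -- now compute both integrals through the atoms
    have h1eq : ∫ ω, (if J (t+1) i ω = k then
          H (S ω) (fun i' => X i' ω) (fun k' => vmB J t k' ω) else 0) ∂P
        = ∑ ke : V × (Bool × (V → Bool) × ((Fin (t+1) × V) → V)),
            (P {ω | (J (t+1) i ω, S ω, (fun i' => X i' ω),
                (fun q : Fin (t+1) × V => J q.1.1 q.2 ω)) = ke}).toReal
              * (if ke.1 = k then
                  H ke.2.1 ke.2.2.1 (fun k' => vmPhi t (ext ke.2.2.2) k') else 0) := by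
      rw [← vm_integral_comp_fin P hW'm (fun ke => if ke.1 = k then
        H ke.2.1 ke.2.2.1 (fun k' => vmPhi t (ext ke.2.2.2) k') else 0)]
      refine integral_congr_ae (Filter.Eventually.of_forall fun ω => ?_)
      by_cases h : J (t+1) i ω = k <;> simp [h, hXW ω]
    have h2eq : ∫ ω, H (S ω) (fun i' => X i' ω) (fun k' => vmB J t k' ω) ∂P
        = ∑ e : Bool × (V → Bool) × ((Fin (t+1) × V) → V),
            (P {ω | (S ω, (fun i' => X i' ω),
                (fun q : Fin (t+1) × V => J q.1.1 q.2 ω)) = e}).toReal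
              * H e.1 e.2.1 (fun k' => vmPhi t (ext e.2.2) k') := by
      rw [← vm_integral_comp_fin P hWm (fun e =>
        H e.1 e.2.1 (fun k' => vmPhi t (ext e.2.2) k'))]
      refine integral_congr_ae (Filter.Eventually.of_forall fun ω => ?_)
      simp [hXW ω]
    rw [h1eq, h2eq, Finset.mul_sum, Fintype.sum_prod_type, Finset.sum_comm]
    refine Finset.sum_congr rfl fun e _ => ?_
    rw [Finset.sum_eq_single k]
    · have hseteq : {ω | (J (t+1) i ω, S ω, (fun i' => X i' ω),
          (fun q : Fin (t+1) × V => J q.1.1 q.2 ω)) = (k, e)}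
            = {ω | J (t+1) i ω = k ∧ (S ω, (fun i' => X i' ω),
                (fun q : Fin (t+1) × V => J q.1.1 q.2 ω)) = e} := by
        ext ω; simp only [Set.mem_setOf_eq, Prod.mk.injEq]
      rw [if_pos rfl, hseteq, hfactor e, ENNReal.toReal_mul,
        ENNReal.toReal_ofReal (hnonneg i k)]
      ring
    · intro a _ ha
      rw [if_neg ha, mul_zero]
    · intro h
      exact absurd (Finset.mem_univ k) h
  -- integrability of everything in sight
  have hIntB : ∀ (t : ℕ) (G : Bool → (V → Bool) → (V → V) → ℝ),
      Integrable (fun ω => G (S ω) (fun i' => X i' ω) (fun k => vmB J t k ω)) P := by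
    intro t G
    exact vm_integrable_comp_fin P
      (hSmeas.prodMk (hπ1.prodMk (measurable_pi_lambda _ (hBm t))))
      (fun e : Bool × (V → Bool) × (V → V) => G e.1 e.2.1 e.2.2)
  have hIntB' : ∀ (t : ℕ) (c : V → ℝ) (F : Bool → (V → Bool) → V → ℝ) (i : V),
      Integrable (fun ω => c i * F (S ω) (fun i' => X i' ω) (vmB J t i ω)) P :=
    fun t c F i => hIntB t (fun s f b => c i * F s f (b i))
  -- the stationarity identity
  have hSTAR : ∀ (t : ℕ) (F : Bool → (V → Bool) → V → ℝ),
      ∫ ω, ∑ i, α i * F (S ω) (fun i' => X i' ω) (vmB J t i ω) ∂P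
        = ∑ j, α j * ∫ ω, F (S ω) (fun i' => X i' ω) j ∂P := by
    have hswap : ∀ (t' : ℕ) (F : Bool → (V → Bool) → V → ℝ),
        ∫ ω, ∑ i, α i * F (S ω) (fun i' => X i' ω) (vmB J t' i ω) ∂P
          = ∑ i, α i * ∫ ω, F (S ω) (fun i' => X i' ω) (vmB J t' i ω) ∂P := by
      intro t' F
      rw [integral_finset_sum _ (fun i _ => hIntB' t' α F i)]
      exact Finset.sum_congr rfl fun i _ => integral_const_mul _ _
    intro t
    induction t with
    | zero =>
      intro F
      rw [hswap 0 F]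
      exact Finset.sum_congr rfl fun i _ => rfl
    | succ t ih =>
      intro F
      rw [hswap (t+1) F]
      have hone : ∀ i, ∫ ω, F (S ω) (fun i' => X i' ω) (vmB J (t+1) i ω) ∂P
          = ∑ k, w i k * ∫ ω, F (S ω) (fun i' => X i' ω) (vmB J t k ω) ∂P := by
        intro i
        have hpt : ∀ ω, F (S ω) (fun i' => X i' ω) (vmB J (t+1) i ω)
            = ∑ k, (if J (t+1) i ω = k then
                F (S ω) (fun i' => X i' ω) (vmB J t k ω) else 0) := by
          intro ω
          rw [Finset.sum_ite_eq]
          simp [vmB]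
        have h1 : ∫ ω, F (S ω) (fun i' => X i' ω) (vmB J (t+1) i ω) ∂P
            = ∫ ω, ∑ k, (if J (t+1) i ω = k then
                F (S ω) (fun i' => X i' ω) (vmB J t k ω) else 0) ∂P :=
          integral_congr_ae (Filter.Eventually.of_forall hpt)
        have hint : ∀ k ∈ (Finset.univ : Finset V), Integrable (fun ω =>
            if J (t+1) i ω = k then F (S ω) (fun i' => X i' ω) (vmB J t k ω) else 0) P :=
          fun k _ => vm_integrable_comp_fin P
            ((hJmeas _ _).prodMk (hSmeas.prodMk (hπ1.prodMk
              (measurable_pi_lambda _ (hBm t)))))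
            (fun ke : V × Bool × (V → Bool) × (V → V) =>
              if ke.1 = k then F ke.2.1 ke.2.2.1 (ke.2.2.2 k) else 0)
        rw [h1, integral_finset_sum _ hint]
        exact Finset.sum_congr rfl fun k _ => hKEY t i k (fun s f b => F s f (b k))
      have h2 : ∀ i, α i * ∫ ω, F (S ω) (fun i' => X i' ω) (vmB J (t+1) i ω) ∂P
          = ∑ k, α i * (w i k * ∫ ω, F (S ω) (fun i' => X i' ω) (vmB J t k ω) ∂P) := by
        intro i
        rw [hone i, Finset.mul_sum]
      rw [Finset.sum_congr rfl fun i _ => h2 i, Finset.sum_comm]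
      have h3 : ∀ k, ∑ i, α i * (w i k * ∫ ω, F (S ω) (fun i' => X i' ω) (vmB J t k ω) ∂P)
          = α k * ∫ ω, F (S ω) (fun i' => X i' ω) (vmB J t k ω) ∂P := by
        intro k
        rw [← hαstat k, Finset.sum_mul]
        exact Finset.sum_congr rfl fun i _ => by ring
      rw [Finset.sum_congr rfl fun k _ => h3 k, ← hswap t F]
      exact ih F
  -- the master identity
  have hMASTER : ∀ (φ : Bool → (V → Bool) → ℝ), (∀ s f, |φ s f| ≤ 1) → ∀ (trg : Bool → Bool),
      ∫ ω, φ (S ω) (fun i => X i ω) * (if Alim ω = trg (S ω) then 1 else 0) ∂P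
        = ∑ j, α j * ∫ ω, φ (S ω) (fun i => X i ω)
            * (if X j ω = trg (S ω) then 1 else 0) ∂P := by
    intro φ hφ trg
    have hIntA : ∀ (t : ℕ) (i : V) (G : Bool → (V → Bool) → Bool → ℝ),
        Integrable (fun ω => G (S ω) (fun i' => X i' ω) (A t i ω)) P :=
      fun t i G => vm_integrable_comp_fin P (hSmeas.prodMk (hπ1.prodMk (hAm t i)))
        (fun e : Bool × (V → Bool) × Bool => G e.1 e.2.1 e.2.2)
    -- the value at each finite time is the constant `R`
    have hconst : ∀ t : ℕ, ∑ i, α i * ∫ ω, φ (S ω) (fun i' => X i' ω)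
          * (if A t i ω = trg (S ω) then 1 else 0) ∂P
        = ∑ j, α j * ∫ ω, φ (S ω) (fun i' => X i' ω)
            * (if X j ω = trg (S ω) then 1 else 0) ∂P := by
      intro t
      have hsum2 : ∫ ω, ∑ i, α i * (φ (S ω) (fun i' => X i' ω)
            * (if A t i ω = trg (S ω) then 1 else 0)) ∂P
          = ∑ i, α i * ∫ ω, φ (S ω) (fun i' => X i' ω)
              * (if A t i ω = trg (S ω) then 1 else 0) ∂P := by
        rw [integral_finset_sum _ (fun i _ => hIntA t i
          (fun s f b => α i * (φ s f * (if b = trg s then 1 else 0))))]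
        exact Finset.sum_congr rfl fun i _ => integral_const_mul _ _
      rw [← hsum2]
      have h0 : ∀ ω, ∑ i, α i * (φ (S ω) (fun i' => X i' ω)
            * (if A t i ω = trg (S ω) then 1 else 0))
          = ∑ i, α i * ((fun s f j => φ s f * (if f j = trg s then 1 else 0))
              (S ω) (fun i' => X i' ω) (vmB J t i ω)) := by
        intro ω
        refine Finset.sum_congr rfl fun i _ => ?_
        simp only
        rw [hArep t i ω]
      calc ∫ ω, ∑ i, α i * (φ (S ω) (fun i' => X i' ω)
              * (if A t i ω = trg (S ω) then 1 else 0)) ∂P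
          = ∫ ω, ∑ i, α i * ((fun s f j => φ s f * (if f j = trg s then 1 else 0))
              (S ω) (fun i' => X i' ω) (vmB J t i ω)) ∂P :=
            integral_congr_ae (Filter.Eventually.of_forall h0)
        _ = ∑ j, α j * ∫ ω, (fun s f j => φ s f * (if f j = trg s then 1 else 0))
              (S ω) (fun i' => X i' ω) j ∂P :=
            hSTAR t (fun s f j => φ s f * (if f j = trg s then 1 else 0))
        _ = ∑ j, α j * ∫ ω, φ (S ω) (fun i' => X i' ω)
              * (if X j ω = trg (S ω) then 1 else 0) ∂P := rfl
    -- convergence of the finite-time integrals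
    have htend : ∀ i : V, Tendsto (fun t => ∫ ω, φ (S ω) (fun i' => X i' ω)
          * (if A t i ω = trg (S ω) then 1 else 0) ∂P) atTop
        (nhds (∫ ω, φ (S ω) (fun i' => X i' ω)
          * (if Alim ω = trg (S ω) then 1 else 0) ∂P)) := by
      intro i
      refine tendsto_integral_of_dominated_convergence (fun _ => (1 : ℝ)) ?_ ?_ ?_ ?_
      · intro t
        exact (((measurable_of_countable (fun e : Bool × (V → Bool) × Bool =>
          φ e.1 e.2.1 * (if e.2.2 = trg e.1 then 1 else 0))).comp
          (hSmeas.prodMk (hπ1.prodMk (hAm t i)))).aestronglyMeasurable)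
      · exact integrable_const 1
      · intro t
        refine Filter.Eventually.of_forall fun ω => ?_
        rw [Real.norm_eq_abs, abs_mul]
        have h1 := hφ (S ω) (fun i' => X i' ω)
        have h2 : |(if A t i ω = trg (S ω) then (1:ℝ) else 0)| ≤ 1 := by
          split <;> simp
        calc |φ (S ω) fun i' => X i' ω| * |if A t i ω = trg (S ω) then (1:ℝ) else 0|
            ≤ 1 * 1 := mul_le_mul h1 h2 (abs_nonneg _) zero_le_one
          _ = 1 := one_mul 1
      · filter_upwards [hAlim] with ω hω
        obtain ⟨T, hT⟩ := hω
        refine tendsto_const_nhds.congr' ?_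
        filter_upwards [eventually_ge_atTop T] with t ht
        rw [hT t ht i]
    have hlim2 : Tendsto (fun t => ∑ i, α i * ∫ ω, φ (S ω) (fun i' => X i' ω)
          * (if A t i ω = trg (S ω) then 1 else 0) ∂P) atTop
        (nhds (∑ i : V, α i * ∫ ω, φ (S ω) (fun i' => X i' ω)
          * (if Alim ω = trg (S ω) then 1 else 0) ∂P)) :=
      tendsto_finset_sum _ fun i _ => (htend i).const_mul (α i)
    have hlim3 : Tendsto (fun t => ∑ i, α i * ∫ ω, φ (S ω) (fun i' => X i' ω)
          * (if A t i ω = trg (S ω) then 1 else 0) ∂P) atTop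
        (nhds (∑ j, α j * ∫ ω, φ (S ω) (fun i' => X i' ω)
          * (if X j ω = trg (S ω) then 1 else 0) ∂P)) := by
      have : (fun t => ∑ i, α i * ∫ ω, φ (S ω) (fun i' => X i' ω)
          * (if A t i ω = trg (S ω) then 1 else 0) ∂P)
          = fun _ => ∑ j, α j * ∫ ω, φ (S ω) (fun i' => X i' ω)
              * (if X j ω = trg (S ω) then 1 else 0) ∂P := funext hconst
      rw [this]
      exact tendsto_const_nhds
    have hfin := tendsto_nhds_unique hlim2 hlim3
    calc ∫ ω, φ (S ω) (fun i => X i ω) * (if Alim ω = trg (S ω) then 1 else 0) ∂P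
        = ∑ i : V, α i * ∫ ω, φ (S ω) (fun i' => X i' ω)
            * (if Alim ω = trg (S ω) then 1 else 0) ∂P := by
          rw [← Finset.sum_mul, hαsum, one_mul]
      _ = ∑ j, α j * ∫ ω, φ (S ω) (fun i' => X i' ω)
            * (if X j ω = trg (S ω) then 1 else 0) ∂P := hfin
  -- the probability that a single signal is correct
  have hXSint : ∀ j : V, ∫ ω, (if X j ω = S ω then (1:ℝ) else 0) ∂P = 1/2 + δ := by
    intro j
    have hatom : ∀ e : Bool × (V → Bool),
        {ω | (S ω, fun i => X i ω) = e} = {ω | S ω = e.1 ∧ ∀ i, X i ω = e.2 i} := by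
      intro e; ext ω; simp [Prod.ext_iff, funext_iff]
    have hnn : ∀ (f : V → Bool) (s : Bool),
        0 ≤ 1/2 * ∏ i, (if f i = s then 1/2 + δ else 1/2 - δ) := by
      intro f s
      refine mul_nonneg (by norm_num) (Finset.prod_nonneg fun i _ => ?_)
      split <;> linarith
    have h1 : ∫ ω, (if X j ω = S ω then (1:ℝ) else 0) ∂P
        = ∑ e : Bool × (V → Bool), (P {ω | (S ω, fun i => X i ω) = e}).toReal
            * (if e.2 j = e.1 then 1 else 0) :=
      vm_integral_comp_fin P hUm (fun e : Bool × (V → Bool) => if e.2 j = e.1 then 1 else 0)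
    rw [h1]
    have h2 : ∀ e : Bool × (V → Bool), (P {ω | (S ω, fun i => X i ω) = e}).toReal
        = 1/2 * ∏ i, (if e.2 i = e.1 then 1/2 + δ else 1/2 - δ) := by
      intro e
      rw [hatom e, hlaw e.1 e.2, ENNReal.toReal_ofReal (hnn e.2 e.1)]
    rw [Finset.sum_congr rfl fun e _ => by rw [h2 e]]
    rw [Fintype.sum_prod_type]
    have hinner : ∀ s : Bool, ∑ f : V → Bool,
        (1/2 * ∏ i, (if f i = s then 1/2 + δ else 1/2 - δ)) * (if f j = s then 1 else 0)
          = 1/2 * (1/2 + δ) := by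
      intro s
      have hterm : ∀ f : V → Bool,
          (1/2 * ∏ i, (if f i = s then 1/2 + δ else 1/2 - δ)) * (if f j = s then 1 else 0)
            = 1/2 * ∏ i, (if i = j then (if f i = s then 1/2 + δ else 0)
                else (if f i = s then 1/2 + δ else 1/2 - δ)) := by
        intro f
        by_cases h : f j = s
        · rw [if_pos h, mul_one]
          congr 1
          refine Finset.prod_congr rfl fun i _ => ?_
          by_cases hij : i = j
          · subst hij; simp [h]
          · simp [hij]
        · rw [if_neg h, mul_zero]
          rw [Finset.prod_eq_zero (Finset.mem_univ j) (by simp [h])]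
          ring
      rw [Finset.sum_congr rfl fun f _ => hterm f, ← Finset.mul_sum]
      congr 1
      rw [← Fintype.prod_sum (fun i (b : Bool) => (if i = j then (if b = s then 1/2 + δ else 0)
        else (if b = s then 1/2 + δ else 1/2 - δ)))]
      have hfac : ∀ i : V, ∑ b : Bool, (if i = j then (if b = s then 1/2 + δ else 0)
          else (if b = s then 1/2 + δ else 1/2 - δ)) = if i = j then 1/2 + δ else 1 := by
        intro i
        by_cases hij : i = j <;> cases s <;> simp [hij] <;> ring
      rw [Finset.prod_congr rfl fun i _ => hfac i, Finset.prod_ite_eq' Finset.univ j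
        (fun _ => (1:ℝ)/2 + δ)]
      simp
    rw [Finset.sum_congr rfl fun s _ => hinner s, Fintype.sum_bool]
    ring
  have hmeasAS : MeasurableSet {ω | Alim ω = S ω} := by
    have h : {ω | Alim ω = S ω} = (fun ω => (Alim ω, S ω)) ⁻¹' {p : Bool × Bool | p.1 = p.2} :=
      rfl
    rw [h]
    exact (hAlimmeas.prodMk hSmeas) .of_discrete
  have hP3 : (P {ω | Alim ω = S ω}).toReal = 1/2 + δ := by
    have hm := hMASTER (fun _ _ => 1) (by intro s f; norm_num) (fun b => b)
    simp only [one_mul] at hm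
    have hind : ∫ ω, (if Alim ω = S ω then (1:ℝ) else 0) ∂P
        = (P {ω | Alim ω = S ω}).toReal := by
      rw [show (fun ω => if Alim ω = S ω then (1:ℝ) else 0)
          = Set.indicator {ω | Alim ω = S ω} (fun _ => 1) from
        funext fun ω => by by_cases h : Alim ω = S ω <;> simp [h]]
      rw [integral_indicator_const _ hmeasAS]
      simp
      rfl
    calc (P {ω | Alim ω = S ω}).toReal
        = ∫ ω, (if Alim ω = S ω then (1:ℝ) else 0) ∂P := hind.symm
      _ = ∑ j, α j * ∫ ω, (if X j ω = S ω then (1:ℝ) else 0) ∂P := hm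
      _ = ∑ j, α j * (1/2 + δ) := Finset.sum_congr rfl fun j _ => by rw [hXSint j]
      _ = 1/2 + δ := by rw [← Finset.sum_mul, hαsum, one_mul]
  refine ⟨?_, ?_, ?_⟩
  · -- part 1
    have hm1 : MeasurableSpace.comap (fun ω (i : V) => X i ω) MeasurableSpace.pi
        ≤ (inferInstance : MeasurableSpace Ω) := hπ1.comap_le
    have hf : Integrable (fun ω => if Alim ω = true then (1:ℝ) else 0) P :=
      vm_integrable_comp_fin P hAlimmeas (fun b : Bool => if b = true then (1:ℝ) else 0)
    have hg : Integrable (fun ω => ∑ i, α i * (if X i ω = true then (1:ℝ) else 0)) P :=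
      vm_integrable_comp_fin P hπ1
        (fun f : V → Bool => ∑ i, α i * (if f i = true then (1:ℝ) else 0))
    refine (ae_eq_condExp_of_forall_setIntegral_eq hm1 hf (fun s _ _ => hg.integrableOn)
      ?_ ?_).symm
    · rintro s ⟨T, hT, rfl⟩ -
      have hsm : MeasurableSet ((fun ω (i : V) => X i ω) ⁻¹' T) := hπ1 hT
      have hmm := hMASTER (fun _ f => if f ∈ T then 1 else 0)
        (fun s f => by split <;> norm_num) (fun _ => true)
      have hgs : ∫ ω in ((fun ω (i : V) => X i ω) ⁻¹' T),
            (∑ i, α i * (if X i ω = true then (1:ℝ) else 0)) ∂P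
          = ∑ j, α j * ∫ ω, (if (fun i => X i ω) ∈ T then (1:ℝ) else 0)
              * (if X j ω = true then 1 else 0) ∂P := by
        rw [← integral_indicator hsm]
        have hpt : ∀ ω, Set.indicator ((fun ω (i : V) => X i ω) ⁻¹' T)
              (fun ω => ∑ i, α i * (if X i ω = true then (1:ℝ) else 0)) ω
            = ∑ i, α i * ((if (fun i' => X i' ω) ∈ T then (1:ℝ) else 0)
                * (if X i ω = true then 1 else 0)) := by
          intro ω
          by_cases h : (fun i => X i ω) ∈ T
          · simp [Set.indicator_apply, h]
          · simp [Set.indicator_apply, h]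
        calc ∫ ω, Set.indicator ((fun ω (i : V) => X i ω) ⁻¹' T)
              (fun ω => ∑ i, α i * (if X i ω = true then (1:ℝ) else 0)) ω ∂P
            = ∫ ω, ∑ i, α i * ((if (fun i' => X i' ω) ∈ T then (1:ℝ) else 0)
                * (if X i ω = true then 1 else 0)) ∂P :=
              integral_congr_ae (Filter.Eventually.of_forall hpt)
          _ = ∑ i, ∫ ω, α i * ((if (fun i' => X i' ω) ∈ T then (1:ℝ) else 0)
                * (if X i ω = true then 1 else 0)) ∂P :=
              integral_finset_sum _ (fun i _ => vm_integrable_comp_fin P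
                (hπ1.prodMk (hXmeas i))
                (fun e : (V → Bool) × Bool => α i * ((if e.1 ∈ T then (1:ℝ) else 0)
                  * (if e.2 = true then 1 else 0))))
          _ = ∑ j, α j * ∫ ω, (if (fun i => X i ω) ∈ T then (1:ℝ) else 0)
                * (if X j ω = true then 1 else 0) ∂P :=
              Finset.sum_congr rfl fun j _ => integral_const_mul _ _
      have hfs : ∫ ω in ((fun ω (i : V) => X i ω) ⁻¹' T),
            (if Alim ω = true then (1:ℝ) else 0) ∂P
          = ∫ ω, (if (fun i => X i ω) ∈ T then (1:ℝ) else 0)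
              * (if Alim ω = true then 1 else 0) ∂P := by
        rw [← integral_indicator hsm]
        refine integral_congr_ae (Filter.Eventually.of_forall fun ω => ?_)
        by_cases h : (fun i => X i ω) ∈ T
        · simp [Set.indicator_apply, h]
        · simp [Set.indicator_apply, h]
      rw [hgs, hfs]
      exact hmm.symm
    · refine StronglyMeasurable.aestronglyMeasurable ?_
      have hπm1 : Measurable[MeasurableSpace.comap (fun ω (i : V) => X i ω)
          MeasurableSpace.pi] (fun ω (i : V) => X i ω) := Measurable.of_comap_le le_rfl
      exact ((measurable_of_countable (fun f : V → Bool =>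
        ∑ i, α i * (if f i = true then (1:ℝ) else 0))).comp hπm1).stronglyMeasurable
  · -- part 2
    have hm2 : MeasurableSpace.comap (fun ω => (S ω, fun i : V => X i ω)) inferInstance
        ≤ (inferInstance : MeasurableSpace Ω) := hUm.comap_le
    have hf : Integrable (fun ω => if Alim ω = S ω then (1:ℝ) else 0) P :=
      vm_integrable_comp_fin P (hAlimmeas.prodMk hSmeas)
        (fun b : Bool × Bool => if b.1 = b.2 then (1:ℝ) else 0)
    have hg : Integrable (fun ω => ∑ i, α i * (if X i ω = S ω then (1:ℝ) else 0)) P :=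
      vm_integrable_comp_fin P hUm
        (fun e : Bool × (V → Bool) => ∑ i, α i * (if e.2 i = e.1 then (1:ℝ) else 0))
    refine (ae_eq_condExp_of_forall_setIntegral_eq hm2 hf (fun s _ _ => hg.integrableOn)
      ?_ ?_).symm
    · rintro s ⟨T, hT, rfl⟩ -
      have hsm : MeasurableSet ((fun ω => (S ω, fun i : V => X i ω)) ⁻¹' T) := hUm hT
      have hmm := hMASTER (fun s' f => if (s', f) ∈ T then 1 else 0)
        (fun s' f => by split <;> norm_num) (fun b => b)
      have hgs : ∫ ω in ((fun ω => (S ω, fun i : V => X i ω)) ⁻¹' T),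
            (∑ i, α i * (if X i ω = S ω then (1:ℝ) else 0)) ∂P
          = ∑ j, α j * ∫ ω, (if (S ω, fun i => X i ω) ∈ T then (1:ℝ) else 0)
              * (if X j ω = S ω then 1 else 0) ∂P := by
        rw [← integral_indicator hsm]
        have hpt : ∀ ω, Set.indicator ((fun ω => (S ω, fun i : V => X i ω)) ⁻¹' T)
              (fun ω => ∑ i, α i * (if X i ω = S ω then (1:ℝ) else 0)) ω
            = ∑ i, α i * ((if (S ω, fun i' => X i' ω) ∈ T then (1:ℝ) else 0)
                * (if X i ω = S ω then 1 else 0)) := by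
          intro ω
          by_cases h : (S ω, fun i => X i ω) ∈ T
          · simp [Set.indicator_apply, h]
          · simp [Set.indicator_apply, h]
        calc ∫ ω, Set.indicator ((fun ω => (S ω, fun i : V => X i ω)) ⁻¹' T)
              (fun ω => ∑ i, α i * (if X i ω = S ω then (1:ℝ) else 0)) ω ∂P
            = ∫ ω, ∑ i, α i * ((if (S ω, fun i' => X i' ω) ∈ T then (1:ℝ) else 0)
                * (if X i ω = S ω then 1 else 0)) ∂P :=
              integral_congr_ae (Filter.Eventually.of_forall hpt)
          _ = ∑ i, ∫ ω, α i * ((if (S ω, fun i' => X i' ω) ∈ T then (1:ℝ) else 0)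
                * (if X i ω = S ω then 1 else 0)) ∂P :=
              integral_finset_sum _ (fun i _ => vm_integrable_comp_fin P
                (hUm.prodMk ((hXmeas i).prodMk hSmeas))
                (fun e : (Bool × (V → Bool)) × Bool × Bool =>
                  α i * ((if e.1 ∈ T then (1:ℝ) else 0)
                    * (if e.2.1 = e.2.2 then 1 else 0))))
          _ = ∑ j, α j * ∫ ω, (if (S ω, fun i => X i ω) ∈ T then (1:ℝ) else 0)
                * (if X j ω = S ω then 1 else 0) ∂P :=
              Finset.sum_congr rfl fun j _ => integral_const_mul _ _
      have hfs : ∫ ω in ((fun ω => (S ω, fun i : V => X i ω)) ⁻¹' T),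
            (if Alim ω = S ω then (1:ℝ) else 0) ∂P
          = ∫ ω, (if (S ω, fun i => X i ω) ∈ T then (1:ℝ) else 0)
              * (if Alim ω = S ω then 1 else 0) ∂P := by
        rw [← integral_indicator hsm]
        refine integral_congr_ae (Filter.Eventually.of_forall fun ω => ?_)
        by_cases h : (S ω, fun i => X i ω) ∈ T
        · simp [Set.indicator_apply, h]
        · simp [Set.indicator_apply, h]
      rw [hgs, hfs]
      exact hmm.symm
    · refine StronglyMeasurable.aestronglyMeasurable ?_
      have hπm2 : Measurable[MeasurableSpace.comap (fun ω => (S ω, fun i : V => X i ω))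
          inferInstance] (fun ω => (S ω, fun i : V => X i ω)) := Measurable.of_comap_le le_rfl
      exact ((measurable_of_countable (fun e : Bool × (V → Bool) =>
        ∑ i, α i * (if e.2 i = e.1 then (1:ℝ) else 0))).comp hπm2).stronglyMeasurable
  · rw [← ENNReal.ofReal_toReal (measure_ne_top P {ω | Alim ω = S ω}), hP3]
end

section
/- (Goles–Olivos) Let G = (V,E) be a finite undirected graph in which |N(i)| is odd for every vertex i, and let (A_t)_{t≥0} be any trajectory of majority dynamics on G (with arbitrary initial opinions A_0 ∈ {-1,+1}^V). Then A_{t+1}^i = A_{t-1}^i for every vertex i and every t ≥ |E|; that is, after at most |E| steps the entire system enters a cycle of period at most two. -/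
namespace GolesOlivosAux

variable {V : Type} [Fintype V] [DecidableEq V]
    (G : SimpleGraph V) [DecidableRel G.Adj] (A : ℕ → V → ℤ)

/-- closed neighborhood -/
def nbhd (i : V) : Finset V := insert i (G.neighborFinset i)

def Ssum (t : ℕ) (i : V) : ℤ := ∑ j ∈ nbhd G i, A t j

def energy (t : ℕ) : ℤ := ∑ i, A (t + 1) i * Ssum G A t i

lemma card_nbhd (i : V) : (nbhd G i).card = G.degree i + 1 := by
  rw [nbhd, Finset.card_insert_of_notMem (G.notMem_neighborFinset_self i),
    SimpleGraph.card_neighborFinset_eq_degree]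

lemma mem_nbhd_comm {i j : V} : j ∈ nbhd G i ↔ i ∈ nbhd G j := by
  simp only [nbhd, Finset.mem_insert, SimpleGraph.mem_neighborFinset]
  rw [G.adj_comm, eq_comm]

variable (hinit : ∀ i, A 0 i = 1 ∨ A 0 i = -1)
    (hupdate : ∀ t i,
      A (t + 1) i = if 0 < ∑ j ∈ insert i (G.neighborFinset i), A t j then 1 else -1)

include hinit hupdate in
lemma pm : ∀ t i, A t i = 1 ∨ A t i = -1 := by
  intro t
  cases t with
  | zero => exact hinit
  | succ t => intro i; rw [hupdate]; split <;> simp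

include hinit hupdate in
lemma odd_S (hodd : ∀ i : V, Odd (insert i (G.neighborFinset i)).card)
    (t : ℕ) (i : V) : Odd (Ssum G A t i) := by
  rw [Int.odd_iff]
  have h1 : ∀ j ∈ nbhd G i, A t j % 2 = 1 := by
    intro j _
    rcases pm G A hinit hupdate t j with h | h <;> rw [h] <;> decide
  rw [Ssum, Finset.sum_int_mod, Finset.sum_congr rfl h1]
  simp only [Finset.sum_const, nsmul_eq_mul, mul_one]
  have h2 : Odd (nbhd G i).card := hodd i
  rw [Nat.odd_iff] at h2
  omega

include hinit hupdate in
lemma sign_S (hodd : ∀ i : V, Odd (insert i (G.neighborFinset i)).card)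
    (t : ℕ) (i : V) : A (t + 1) i * Ssum G A t i = |Ssum G A t i| := by
  have hne : Ssum G A t i ≠ 0 := by
    intro h
    have := odd_S G A hinit hupdate hodd t i
    rw [h] at this
    simp at this
  have hu := hupdate t i
  rw [show (∑ j ∈ insert i (G.neighborFinset i), A t j) = Ssum G A t i from rfl] at hu
  rcases lt_trichotomy 0 (Ssum G A t i) with h | h | h
  · rw [hu, if_pos h, one_mul, abs_of_pos h]
  · exact absurd h.symm hne
  · rw [hu, if_neg (by omega), neg_one_mul, abs_of_neg h]

lemma symm_sum (s t : ℕ) :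
    ∑ i, A s i * Ssum G A t i = ∑ i, A t i * Ssum G A s i := by
  simp only [Ssum, Finset.mul_sum]
  rw [Finset.sum_comm' (t' := Finset.univ) (s' := fun j => nbhd G j)
    (fun x y => by simp [mem_nbhd_comm G])]
  apply Finset.sum_congr rfl
  intro j _
  rw [Finset.sum_congr rfl (fun i _ => mul_comm (A s i) (A t j)), ← Finset.mul_sum]


include hinit hupdate in
lemma energy_eq (hodd : ∀ i : V, Odd (insert i (G.neighborFinset i)).card) (t : ℕ) :
    energy G A t = ∑ i, |Ssum G A t i| :=
  Finset.sum_congr rfl fun i _ => sign_S G A hinit hupdate hodd t i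

include hinit hupdate in
lemma abs_S_le (t : ℕ) (i : V) : |Ssum G A t i| ≤ (G.degree i : ℤ) + 1 := by
  calc |Ssum G A t i| ≤ ∑ j ∈ nbhd G i, |A t j| := Finset.abs_sum_le_sum_abs _ _
    _ = (nbhd G i).card := by
        rw [Finset.sum_congr rfl (fun j _ => ?_), Finset.sum_const, nsmul_eq_mul, mul_one]
        rcases pm G A hinit hupdate t j with h | h <;> rw [h] <;> decide
    _ = (G.degree i : ℤ) + 1 := by rw [card_nbhd]; push_cast; ring

include hinit hupdate in
lemma one_le_abs_S (hodd : ∀ i : V, Odd (insert i (G.neighborFinset i)).card)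
    (t : ℕ) (i : V) : 1 ≤ |Ssum G A t i| := by
  have h := odd_S G A hinit hupdate hodd t i
  rw [Int.odd_iff] at h
  exact Int.one_le_abs (by omega)

include hinit hupdate in
lemma energy_le (hodd : ∀ i : V, Odd (insert i (G.neighborFinset i)).card) (t : ℕ) :
    energy G A t ≤ (Fintype.card V : ℤ) + 2 * G.edgeFinset.card := by
  rw [energy_eq G A hinit hupdate hodd]
  calc (∑ i, |Ssum G A t i|) ≤ ∑ i : V, ((G.degree i : ℤ) + 1) :=
        Finset.sum_le_sum fun i _ => abs_S_le G A hinit hupdate t i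
    _ = (Fintype.card V : ℤ) + 2 * G.edgeFinset.card := by
        rw [Finset.sum_add_distrib, Finset.sum_const, nsmul_eq_mul, mul_one,
          ← Nat.cast_sum, G.sum_degrees_eq_twice_card_edges, Finset.card_univ]
        push_cast
        ring

include hinit hupdate in
lemma energy_ge (hodd : ∀ i : V, Odd (insert i (G.neighborFinset i)).card) (t : ℕ) :
    (Fintype.card V : ℤ) ≤ energy G A t := by
  rw [energy_eq G A hinit hupdate hodd]
  calc (Fintype.card V : ℤ) = ∑ _i : V, (1 : ℤ) := by
        rw [Finset.sum_const, nsmul_eq_mul, mul_one, Finset.card_univ]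
    _ ≤ ∑ i, |Ssum G A t i| :=
        Finset.sum_le_sum fun i _ => one_le_abs_S G A hinit hupdate hodd t i

lemma energy_sub (s : ℕ) :
    energy G A (s + 1) - energy G A s
      = ∑ i, (A (s + 2) i - A s i) * Ssum G A (s + 1) i := by
  have h : energy G A s = ∑ i, A s i * Ssum G A (s + 1) i := symm_sum G A (s + 1) s
  rw [energy, h, ← Finset.sum_sub_distrib]
  exact Finset.sum_congr rfl fun i _ => by ring

include hinit hupdate in
lemma term_eq (hodd : ∀ i : V, Odd (insert i (G.neighborFinset i)).card)
    (s : ℕ) (i : V) (h : A (s + 2) i ≠ A s i) :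
    (A (s + 2) i - A s i) * Ssum G A (s + 1) i = 2 * |Ssum G A (s + 1) i| := by
  have h1 : A (s + 2) i - A s i = 2 * A (s + 2) i := by
    rcases pm G A hinit hupdate (s + 2) i with h2 | h2 <;>
      rcases pm G A hinit hupdate s i with h3 | h3 <;>
      first | (exact absurd (h2.trans h3.symm) h) | (rw [h2, h3]; ring)
  rw [h1, mul_assoc, show s + 2 = s + 1 + 1 from rfl,
    sign_S G A hinit hupdate hodd (s + 1) i]

include hinit hupdate in
lemma term_nonneg (hodd : ∀ i : V, Odd (insert i (G.neighborFinset i)).card)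
    (s : ℕ) (i : V) : 0 ≤ (A (s + 2) i - A s i) * Ssum G A (s + 1) i := by
  by_cases h : A (s + 2) i = A s i
  · rw [h, sub_self, zero_mul]
  · rw [term_eq G A hinit hupdate hodd s i h]
    positivity

include hinit hupdate in
lemma energy_mono (hodd : ∀ i : V, Odd (insert i (G.neighborFinset i)).card)
    (s : ℕ) : energy G A s ≤ energy G A (s + 1) := by
  have := Finset.sum_nonneg fun i (_ : i ∈ Finset.univ) =>
    term_nonneg G A hinit hupdate hodd s i
  rw [← energy_sub G A] at this
  omega

include hinit hupdate in
lemma energy_step (hodd : ∀ i : V, Odd (insert i (G.neighborFinset i)).card)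
    (s : ℕ) (i : V) (h : A (s + 2) i ≠ A s i) :
    energy G A s + 2 * |Ssum G A (s + 1) i| ≤ energy G A (s + 1) := by
  have h1 : 2 * |Ssum G A (s + 1) i|
      ≤ ∑ j, (A (s + 2) j - A s j) * Ssum G A (s + 1) j := by
    rw [← term_eq G A hinit hupdate hodd s i h]
    exact Finset.single_le_sum
      (fun j _ => term_nonneg G A hinit hupdate hodd s j) (Finset.mem_univ i)
  rw [← energy_sub G A] at h1
  omega


include hinit hupdate in
lemma deg_zero (i : V) (hd : G.degree i = 0) (t : ℕ) : A (t + 1) i = A t i := by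
  have hn : G.neighborFinset i = ∅ := by
    rw [← Finset.card_eq_zero, SimpleGraph.card_neighborFinset_eq_degree, hd]
  have hu := hupdate t i
  rw [hn, show insert i (∅ : Finset V) = {i} from rfl, Finset.sum_singleton] at hu
  rcases pm G A hinit hupdate t i with h | h <;> rw [h] at hu ⊢ <;>
    simp at hu <;> omega

include hupdate in
lemma persist (s : ℕ) (h : ∀ i, A (s + 2) i = A s i) (i : V) :
    A (s + 3) i = A (s + 1) i := by
  rw [show s + 3 = s + 2 + 1 from rfl, hupdate (s + 2) i, hupdate s i]
  congr 1
  simp only [Finset.sum_congr rfl fun j _ => h j]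

include hupdate in
lemma flip_all (s : ℕ) (hf : ∃ i, A (s + 2) i ≠ A s i) :
    ∀ r ≤ s, ∃ i, A (r + 2) i ≠ A r i := by
  induction s with
  | zero => intro r hr; rw [Nat.le_zero.mp hr]; exact hf
  | succ n ih =>
    intro r hr
    have hn : ∃ i, A (n + 2) i ≠ A n i := by
      by_contra hc
      push_neg at hc
      obtain ⟨i, hi⟩ := hf
      exact hi (persist G A hupdate n hc i)
    rcases Nat.lt_succ_iff_lt_or_eq.mp (Nat.lt_succ_of_le hr) with h | h
    · exact ih hn r (Nat.lt_succ_iff.mp h)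
    · rw [h]; exact hf

include hinit hupdate in
lemma count (hodd : ∀ i : V, Odd (insert i (G.neighborFinset i)).card)
    (s : ℕ) (hf : ∃ i, A (s + 2) i ≠ A s i) :
    ∀ n ≤ s + 1, energy G A 0 + 2 * n ≤ energy G A n := by
  intro n hn
  induction n with
  | zero => simp
  | succ m ih =>
    obtain ⟨i, hi⟩ := flip_all G A hupdate s hf m (by omega)
    have h1 := energy_step G A hinit hupdate hodd m i hi
    have h2 := one_le_abs_S G A hinit hupdate hodd (m + 1) i
    have h3 := ih (by omega)
    push_cast
    push_cast at h3
    omega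

end GolesOlivosAux

/-- **Goles–Olivos: period two for majority dynamics on finite graphs.**
Let `G` be a finite undirected graph in which `|N i|` is odd for every vertex `i`
(where `N i` is the set of neighbors of `i` together with `i` itself), and let `A` be a
trajectory of majority dynamics with arbitrary `±1` initial opinions.  Then
`A (t+1) i = A (t-1) i` for every vertex `i` and every `t ≥ |E|`. -/
theorem goles_olivos_period_two (V : Type) [Fintype V] [DecidableEq V]
    (G : SimpleGraph V) [DecidableRel G.Adj]
    (hodd : ∀ i : V, Odd (insert i (G.neighborFinset i)).card)
    (A : ℕ → V → ℤ)
    (hinit : ∀ i, A 0 i = 1 ∨ A 0 i = -1)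
    (hupdate : ∀ t i,
      A (t + 1) i = if 0 < ∑ j ∈ insert i (G.neighborFinset i), A t j then 1 else -1) :
    ∀ i : V, ∀ t : ℕ, G.edgeFinset.card ≤ t → A (t + 1) i = A (t - 1) i := by
  open GolesOlivosAux in
  intro i t ht
  cases t with
  | zero =>
    -- no edges at all, so every degree is zero and the dynamics is constant at `i`
    have hE : G.edgeFinset.card = 0 := Nat.le_zero.mp ht
    have hd : G.degree i = 0 := by
      have hsum : ∑ v, G.degree v = 0 := by
        rw [G.sum_degrees_eq_twice_card_edges, hE]
      rw [Finset.sum_eq_zero_iff] at hsum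
      exact hsum i (Finset.mem_univ i)
    exact deg_zero G A hinit hupdate i hd 0
  | succ s =>
    show A (s + 2) i = A s i
    by_contra h
    have hf : ∃ j, A (s + 2) j ≠ A s j := ⟨i, h⟩
    have hcount := count G A hinit hupdate hodd s hf
    have hc1 := hcount (s + 1) le_rfl
    have hc0 := hcount s (by omega)
    have hge0 := energy_ge G A hinit hupdate hodd 0
    have hle1 := energy_le G A hinit hupdate hodd (s + 1)
    -- `s + 1 = |E|`
    have hE : G.edgeFinset.card = s + 1 := by
      have : (s + 1 : ℤ) ≤ G.edgeFinset.card := by push_cast at hc1 ⊢; omega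
      have : s + 1 ≤ G.edgeFinset.card := by exact_mod_cast this
      omega
    -- the flipping vertex has `|S| = 1`
    have hstep := energy_step G A hinit hupdate hodd s i h
    have habs1 : |Ssum G A (s + 1) i| = 1 := by
      have h1 := one_le_abs_S G A hinit hupdate hodd (s + 1) i
      have h2 : (G.edgeFinset.card : ℤ) = (s : ℤ) + 1 := by exact_mod_cast hE
      push_cast at hc0 hc1
      omega
    -- energy at time `s+1` is maximal, hence `|S| = deg + 1` everywhere
    have hmax : ∑ j, |Ssum G A (s + 1) j| = ∑ j : V, ((G.degree j : ℤ) + 1) := by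
      have he : energy G A (s + 1) = ∑ j, |Ssum G A (s + 1) j| :=
        energy_eq G A hinit hupdate hodd (s + 1)
      have hdegsum : ∑ j : V, ((G.degree j : ℤ) + 1)
          = (Fintype.card V : ℤ) + 2 * G.edgeFinset.card := by
        rw [Finset.sum_add_distrib, Finset.sum_const, nsmul_eq_mul, mul_one,
          ← Nat.cast_sum, G.sum_degrees_eq_twice_card_edges, Finset.card_univ]
        push_cast
        ring
      have h2 : (G.edgeFinset.card : ℤ) = (s : ℤ) + 1 := by exact_mod_cast hE
      rw [← he, hdegsum]
      push_cast at hc1 hle1 hge0 ⊢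
      omega
    have heach := (Finset.sum_eq_sum_iff_of_le
      (fun j (_ : j ∈ Finset.univ) => abs_S_le G A hinit hupdate (s + 1) j)).mp hmax
      i (Finset.mem_univ i)
    rw [habs1] at heach
    have hd : G.degree i = 0 := by
      have : ((G.degree i : ℤ)) = 0 := by omega
      exact_mod_cast this
    exact h ((deg_zero G A hinit hupdate i hd (s + 1)).trans
      (deg_zero G A hinit hupdate i hd s))
end

section
/- (Ginosar–Holzman, Moran) Let G be an infinite connected undirected graph with all degrees at most d, with |N(i)| odd for every vertex i, and with asymptotic growth rate 𝔤(G) = limsup_r n_r(G,i)^{1/r} < (d+1)/(d-1) (this limsup is independent of the base vertex i). Then for every initial opinion configuration A_0 ∈ {-1,+1}^V of majority dynamics and every vertex i there exists a time T_i such that A_{t+1}^i = A_{t-1}^i for all t ≥ T_i; that is, each agent's opinion sequence eventually has period at most two. -/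
set_option maxHeartbeats 1000000

open Finset

namespace GHM

variable {V : Type} {G : SimpleGraph V}

lemma exists_adj_dist (hconn : G.Connected) {i k : V} (h : G.dist i k ≠ 0) :
    ∃ j, G.Adj j k ∧ G.dist i j + 1 = G.dist i k := by
  obtain ⟨p, hp⟩ := (hconn k i).exists_walk_length_eq_dist
  cases p with
  | nil =>
      exfalso
      apply h
      rw [SimpleGraph.dist_comm, ← hp]
      rfl
  | @cons _ v _ hadj q =>
      refine ⟨v, hadj.symm, ?_⟩
      have h1 : G.dist i v ≤ q.length := by
        rw [SimpleGraph.dist_comm]; exact SimpleGraph.dist_le q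
      have h2 : q.length + 1 = G.dist i k := by
        rw [SimpleGraph.dist_comm (G := G) (u := i) (v := k), ← hp]; rfl
      have h3 : G.dist i k ≤ G.dist i v + 1 := by
        have ht := hconn.dist_triangle (u := i) (v := v) (w := k)
        have : G.dist v k = 1 := SimpleGraph.dist_eq_one_iff_adj.mpr hadj.symm
        omega
      omega

lemma ball_finite [∀ v : V, Fintype (G.neighborSet v)] (hconn : G.Connected) (i : V) :
    ∀ r : ℕ, {j : V | G.dist i j ≤ r}.Finite := by
  intro r
  induction r with
  | zero =>
      apply Set.Finite.subset (Set.finite_singleton i)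
      intro j hj
      simp only [Set.mem_setOf_eq, Nat.le_zero] at hj
      simp [(hconn.dist_eq_zero_iff.mp hj)]
  | succ r ih =>
      have hsub : {j : V | G.dist i j ≤ r + 1} ⊆
          {j : V | G.dist i j ≤ r} ∪ ⋃ j ∈ {j : V | G.dist i j ≤ r}, G.neighborSet j := by
        intro k hk
        simp only [Set.mem_setOf_eq] at hk
        by_cases h : G.dist i k ≤ r
        · exact Or.inl h
        · right
          have hne : G.dist i k ≠ 0 := by omega
          obtain ⟨j, hadj, hd⟩ := exists_adj_dist hconn hne
          refine Set.mem_biUnion (s := {j : V | G.dist i j ≤ r}) ?_ hadj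
          simp only [Set.mem_setOf_eq]; omega
      exact (ih.union (ih.biUnion fun j _ => (G.neighborSet j).toFinite)).subset hsub

lemma sphere_finite [∀ v : V, Fintype (G.neighborSet v)] (hconn : G.Connected) (i : V)
    (r : ℕ) : {j : V | G.dist i j = r}.Finite :=
  (ball_finite hconn i r).subset (fun _ hj => le_of_eq hj)

lemma sphere_ncard_le [∀ v : V, Fintype (G.neighborSet v)] [DecidableEq V]
    (hconn : G.Connected)
    (d : ℕ) (hdeg : ∀ v : V, (insert v (G.neighborFinset v)).card ≤ d) (i : V) :
    ∀ r : ℕ, {j : V | G.dist i j = r}.ncard ≤ d ^ r := by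
  intro r
  induction r with
  | zero =>
      have : {j : V | G.dist i j = 0} = {i} := by
        ext j; simp [hconn.dist_eq_zero_iff, eq_comm]
      rw [this, Set.ncard_singleton, pow_zero]
  | succ r ih =>
      set S := (sphere_finite hconn i r).toFinset with hS
      have hsub : {j : V | G.dist i j = r + 1} ⊆
          ↑(S.biUnion fun j => insert j (G.neighborFinset j)) := by
        intro k hk
        simp only [Set.mem_setOf_eq] at hk
        have hne : G.dist i k ≠ 0 := by omega
        obtain ⟨j, hadj, hd⟩ := exists_adj_dist hconn hne
        simp only [Finset.coe_biUnion, Set.mem_iUnion, Finset.mem_coe]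
        refine ⟨j, ?_, ?_⟩
        · simp [hS, Set.Finite.mem_toFinset]; omega
        · exact Finset.mem_insert_of_mem ((G.mem_neighborFinset j k).mpr hadj)
      calc {j : V | G.dist i j = r + 1}.ncard
          ≤ (↑(S.biUnion fun j => insert j (G.neighborFinset j)) : Set V).ncard :=
            Set.ncard_le_ncard hsub (Set.toFinite _)
        _ = (S.biUnion fun j => insert j (G.neighborFinset j)).card :=
            Set.ncard_coe_finset _
        _ ≤ ∑ j ∈ S, (insert j (G.neighborFinset j)).card := Finset.card_biUnion_le
        _ ≤ ∑ _j ∈ S, d := Finset.sum_le_sum fun j _ => hdeg j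
        _ = S.card * d := by rw [Finset.sum_const, smul_eq_mul]
        _ = {j : V | G.dist i j = r}.ncard * d := by
            rw [Set.ncard_eq_toFinset_card _ (sphere_finite hconn i r)]
        _ ≤ d ^ r * d := Nat.mul_le_mul_right d ih
        _ = d ^ (r + 1) := by ring

lemma key_est (μ S τ n s : ℝ) (hμ0 : 0 < μ) (hμ1 : μ ≤ 1) (hS1 : 1 ≤ S)
    (hτs : τ ≤ s) (hSs : τ - (n - s) ≤ S) :
    1 - (1 - μ) * (n + 1) / 2 ≤ S - (1 - μ) * τ := by
  rcases le_or_gt (2 * τ) (n + 1) with h | h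
  · nlinarith
  · nlinarith

lemma summable_weight [∀ v : V, Fintype (G.neighborSet v)] [DecidableEq V]
    (hconn : G.Connected) (i : V) {μ q : ℝ} (hμ0 : 0 < μ) (hq0 : 0 ≤ q) (hq1 : q < 1)
    (r0 : ℕ)
    (hn : ∀ r, r0 ≤ r → (({j : V | G.dist i j = r}.ncard : ℝ)) * μ ^ r ≤ q ^ r) :
    Summable (fun j : V => μ ^ G.dist i j) := by
  set nr : ℕ → ℝ := fun r => (({j : V | G.dist i j = r}.ncard : ℝ)) with hnr
  have hnr0 : ∀ r, 0 ≤ nr r * μ ^ r :=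
    fun r => mul_nonneg (Nat.cast_nonneg _) (pow_nonneg hμ0.le _)
  set C0 : ℝ := ∑ r ∈ Finset.range r0, nr r * μ ^ r with hC0
  apply summable_of_sum_le (c := C0 + (1 - q)⁻¹)
  · intro j
    exact (pow_pos hμ0 _).le
  · intro s
    set R := s.sup (fun j => G.dist i j) with hR
    have hmaps : ∀ j ∈ s, G.dist i j ∈ Finset.range (R + 1) :=
      fun j hj => Finset.mem_range.mpr (Nat.lt_succ_of_le (Finset.le_sup hj))
    rw [← Finset.sum_fiberwise_of_maps_to hmaps (fun j => μ ^ G.dist i j)]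
    have step : ∀ r ∈ Finset.range (R + 1),
        (∑ j ∈ s.filter (fun j => G.dist i j = r), μ ^ G.dist i j)
          ≤ (if r < r0 then nr r * μ ^ r else 0) + q ^ r := by
      intro r _
      have h1 : (∑ j ∈ s.filter (fun j => G.dist i j = r), μ ^ G.dist i j)
          = ((s.filter (fun j => G.dist i j = r)).card : ℝ) * μ ^ r := by
        rw [Finset.sum_congr rfl (fun j hj => by
          rw [(Finset.mem_filter.mp hj).2] : ∀ j ∈ s.filter (fun j => G.dist i j = r),
            μ ^ G.dist i j = μ ^ r)]
        rw [Finset.sum_const, nsmul_eq_mul]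
      have hcard : ((s.filter (fun j => G.dist i j = r)).card : ℝ) ≤ nr r := by
        have : (s.filter (fun j => G.dist i j = r)).card
            ≤ {j : V | G.dist i j = r}.ncard := by
          rw [← Set.ncard_coe_finset]
          refine Set.ncard_le_ncard ?_ (sphere_finite hconn i r)
          intro j hj
          simpa using (Finset.mem_filter.mp hj).2
        simp only [hnr]
        exact_mod_cast this
      rw [h1]
      by_cases h : r < r0
      · rw [if_pos h]
        have : ((s.filter (fun j => G.dist i j = r)).card : ℝ) * μ ^ r ≤ nr r * μ ^ r :=
          mul_le_mul_of_nonneg_right hcard (pow_nonneg hμ0.le _)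
        nlinarith [pow_nonneg hq0 r]
      · rw [if_neg h]
        have h2 : nr r * μ ^ r ≤ q ^ r := hn r (le_of_not_gt h)
        have : ((s.filter (fun j => G.dist i j = r)).card : ℝ) * μ ^ r ≤ nr r * μ ^ r :=
          mul_le_mul_of_nonneg_right hcard (pow_nonneg hμ0.le _)
        linarith
    calc (∑ r ∈ Finset.range (R + 1), ∑ j ∈ s.filter (fun j => G.dist i j = r),
            μ ^ G.dist i j)
        ≤ ∑ r ∈ Finset.range (R + 1), ((if r < r0 then nr r * μ ^ r else 0) + q ^ r) :=
          Finset.sum_le_sum step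
      _ = (∑ r ∈ Finset.range (R + 1), if r < r0 then nr r * μ ^ r else 0)
            + ∑ r ∈ Finset.range (R + 1), q ^ r := Finset.sum_add_distrib
      _ ≤ C0 + (1 - q)⁻¹ := by
          gcongr
          · rw [← Finset.sum_filter]
            refine Finset.sum_le_sum_of_subset_of_nonneg ?_ (fun r _ _ => hnr0 r)
            intro r hr
            exact Finset.mem_range.mpr (Finset.mem_filter.mp hr).2
          · calc (∑ r ∈ Finset.range (R + 1), q ^ r)
                ≤ ∑' r : ℕ, q ^ r :=
                  Summable.sum_le_tsum _ (fun r _ => pow_nonneg hq0 r)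
                    (summable_geometric_of_lt_one hq0 hq1)
              _ = (1 - q)⁻¹ := tsum_geometric_of_lt_one hq0 hq1

lemma mem_N_symm [∀ v : V, Fintype (G.neighborSet v)] [DecidableEq V] (j k : V) :
    k ∈ insert j (G.neighborFinset j) ↔ j ∈ insert k (G.neighborFinset k) := by
  simp only [Finset.mem_insert, SimpleGraph.mem_neighborFinset]
  constructor
  · rintro (h | h)
    · exact Or.inl h.symm
    · exact Or.inr h.symm
  · rintro (h | h)
    · exact Or.inl h.symm
    · exact Or.inr h.symm

lemma tsum_swap [∀ v : V, Fintype (G.neighborSet v)] [DecidableEq V]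
    {w : V → ℝ} (hw : Summable w) (hw0 : ∀ j, 0 ≤ w j) (d : ℕ)
    {u : V → V → ℝ} (hu_symm : ∀ j k, u j k = u k j)
    (hu_bound : ∀ j k, |u j k| ≤ w j)
    (hcard : ∀ j : V, (insert j (G.neighborFinset j)).card ≤ d)
    (a b : V → ℝ) (ha : ∀ j, |a j| ≤ 1) (hb : ∀ j, |b j| ≤ 1) :
    ∑' j : V, ∑ k ∈ insert j (G.neighborFinset j), u j k * a j * b k
      = ∑' j : V, ∑ k ∈ insert j (G.neighborFinset j), u j k * a k * b j := by
  classical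
  set N : V → Finset V := fun j => insert j (G.neighborFinset j) with hN
  set f : V → V → ℝ := fun j k => if k ∈ N j then u j k * a j * b k else 0 with hf_def
  have hterm : ∀ j k, |f j k| ≤ (if k ∈ N j then w j else 0) := by
    intro j k
    by_cases h : k ∈ N j
    · simp only [hf_def, if_pos h]
      calc |u j k * a j * b k| = |u j k| * |a j| * |b k| := by
            rw [abs_mul, abs_mul]
      _ ≤ w j := by
            have hu := hu_bound j k
            have h1 := ha j
            have h2 := hb k
            have h3 := abs_nonneg (u j k)
            have h4 := abs_nonneg (a j)
            have h5 := abs_nonneg (b k)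
            have hw' : 0 ≤ w j := le_trans h3 hu
            have s1 : |u j k| * |a j| ≤ w j := by nlinarith
            calc |u j k| * |a j| * |b k| ≤ w j * 1 := mul_le_mul s1 h2 h5 hw'
              _ = w j := by ring
    · simp [hf_def, if_neg h]
  have hslice : ∀ j : V, Summable (fun k => f j k) := by
    intro j
    apply summable_of_ne_finset_zero (s := N j)
    intro k hk
    simp only [hf_def, if_neg hk]
  have hslice2 : ∀ k : V, Summable (fun j => f j k) := by
    intro k
    apply summable_of_ne_finset_zero (s := N k)
    intro j hj
    have : k ∉ N j := fun hc => hj ((mem_N_symm j k).mp hc)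
    simp only [hf_def, if_neg this]
  have hslice_sum : ∀ j : V, (∑' k : V, |f j k|) ≤ (d : ℝ) * w j := by
    intro j
    rw [tsum_eq_sum (s := N j) (fun k hk => by simp only [hf_def, if_neg hk, abs_zero])]
    calc (∑ k ∈ N j, |f j k|) ≤ ∑ k ∈ N j, w j := by
          apply Finset.sum_le_sum
          intro k hk
          have := hterm j k
          rwa [if_pos hk] at this
      _ = (N j).card * w j := by rw [Finset.sum_const, nsmul_eq_mul]
      _ ≤ (d : ℝ) * w j := by
          apply mul_le_mul_of_nonneg_right _ (hw0 j)
          exact_mod_cast hcard j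
  have habs : Summable (fun p : V × V => |Function.uncurry f p|) := by
    rw [summable_prod_of_nonneg (fun p => abs_nonneg _)]
    constructor
    · intro j
      apply summable_of_ne_finset_zero (s := N j)
      intro k hk
      simp only [Function.uncurry_apply_pair, hf_def, if_neg hk, abs_zero]
    · apply Summable.of_nonneg_of_le (fun j => tsum_nonneg (fun k => abs_nonneg _))
        _ (hw.mul_left (d : ℝ))
      intro j
      exact hslice_sum j
  have hg_sum : Summable (Function.uncurry f) := habs.of_abs
  have hcomm : ∑' (k : V) (j : V), f j k = ∑' (j : V) (k : V), f j k :=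
    Summable.tsum_comm' hg_sum hslice hslice2
  have h1 : ∑' j : V, ∑ k ∈ N j, u j k * a j * b k = ∑' (j : V) (k : V), f j k := by
    congr 1
    funext j
    rw [tsum_eq_sum (s := N j) (fun k hk => by simp only [hf_def, if_neg hk])]
    exact Finset.sum_congr rfl (fun k hk => by simp only [hf_def, if_pos hk])
  have h2 : ∑' (k : V) (j : V), f j k
      = ∑' j : V, ∑ k ∈ N j, u j k * a k * b j := by
    congr 1
    funext j
    have hfs : ∀ k, f k j = if k ∈ N j then u j k * a k * b j else 0 := by
      intro k
      by_cases h : k ∈ N j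
      · simp only [hf_def]
        rw [if_pos ((mem_N_symm j k).mp h), if_pos h, hu_symm k j]
      · simp only [hf_def]
        rw [if_neg (fun hc => h ((mem_N_symm k j).mp hc)), if_neg h]
    rw [tsum_eq_sum (s := N j) (fun k hk => by rw [hfs k, if_neg hk])]
    exact Finset.sum_congr rfl (fun k hk => by rw [hfs k, if_pos hk])
  rw [h1, ← hcomm, h2]

end GHM

/-- **Ginosar–Holzman, Moran: eventual period two for each agent on infinite graphs of
subcritical growth.**  Let `G` be an infinite connected undirected graph with all degrees
`|N i| ≤ d`, with `|N i|` odd for every `i`, and with asymptotic growth rate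
`limsup_r n_r(G,i)^(1/r) < (d+1)/(d-1)` (for every base vertex `i`), where `n_r(G,i)` is the
number of vertices at distance exactly `r` from `i`.  Then for every `±1` initial configuration
of majority dynamics and every vertex `i` there is a time `T` with
`A (t+2) i = A t i` for all `t ≥ T`. -/
theorem majority_dynamics_period_two_subcritical_growth
    (V : Type) [Infinite V] (G : SimpleGraph V) [∀ v : V, Fintype (G.neighborSet v)]
    [DecidableEq V]
    (hconn : G.Connected)
    (d : ℕ)
    (hdeg : ∀ i : V, (insert i (G.neighborFinset i)).card ≤ d)
    (hodd : ∀ i : V, Odd (insert i (G.neighborFinset i)).card)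
    (hgrowth : ∀ i : V,
      Filter.limsup
          (fun r : ℕ => (({j : V | G.dist i j = r}.ncard : ℝ)) ^ ((r : ℝ)⁻¹))
          Filter.atTop
        < ((d : ℝ) + 1) / ((d : ℝ) - 1))
    (A : ℕ → V → ℤ)
    (hinit : ∀ i, A 0 i = 1 ∨ A 0 i = -1)
    (hupdate : ∀ t i,
      A (t + 1) i = if 0 < ∑ j ∈ insert i (G.neighborFinset i), A t j then 1 else -1) :
    ∀ i : V, ∃ T : ℕ, ∀ t : ℕ, T ≤ t → A (t + 2) i = A t i := by
  intro i
  classical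
  set Nf : V → Finset V := fun j => insert j (G.neighborFinset j) with hNf
  -- opinions are ±1
  have hsign : ∀ t (j : V), A t j = 1 ∨ A t j = -1 := by
    intro t
    induction t with
    | zero => exact hinit
    | succ t _ =>
        intro j
        rw [hupdate t j]
        by_cases h : 0 < ∑ k ∈ insert j (G.neighborFinset j), A t k
        · left; rw [if_pos h]
        · right; rw [if_neg h]
  have habs1 : ∀ t (j : V), |((A t j : ℤ) : ℝ)| = 1 := by
    intro t j
    rcases hsign t j with h | h <;> rw [h] <;> norm_num
  -- odd sums never vanish
  have hSodd : ∀ t (j : V), (∑ k ∈ Nf j, A t k) ≠ 0 := by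
    intro t j h0
    have he : Even (∑ k ∈ Nf j, (A t k - 1)) := by
      apply Finset.even_sum
      intro k _
      rcases hsign t k with h | h <;> rw [h]
      · simp
      · exact ⟨-1, by ring⟩
    have hsum : (∑ k ∈ Nf j, (A t k - 1))
        = (∑ k ∈ Nf j, A t k) - ((Nf j).card : ℤ) := by
      rw [Finset.sum_sub_distrib, Finset.sum_const, nsmul_eq_mul, mul_one]
    rw [hsum, h0, zero_sub] at he
    obtain ⟨m, hm⟩ := he
    obtain ⟨m', hm'⟩ := hodd j
    have hcard : (Nf j).card = 2 * m' + 1 := hm'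
    omega
  -- d ≥ 3
  have hd3 : 3 ≤ d := by
    obtain ⟨j, hj0⟩ := Infinite.exists_notMem_finset ({i} : Finset V)
    have hj : j ≠ i := by simpa using hj0
    have hne : G.dist i j ≠ 0 := by
      rw [Ne, hconn.dist_eq_zero_iff]
      exact fun h => hj h.symm
    obtain ⟨v, hadj, _⟩ := GHM.exists_adj_dist hconn hne
    have hvmem : v ∈ insert j (G.neighborFinset j) :=
      Finset.mem_insert_of_mem ((G.mem_neighborFinset j v).mpr hadj.symm)
    have hjmem : j ∈ insert j (G.neighborFinset j) := Finset.mem_insert_self _ _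
    have hv : v ≠ j := hadj.ne
    have h2 : 2 ≤ (insert j (G.neighborFinset j)).card := by
      have hsub : ({v, j} : Finset V) ⊆ insert j (G.neighborFinset j) := by
        intro x hx
        rcases Finset.mem_insert.mp hx with h | h
        · subst h; exact hvmem
        · rw [Finset.mem_singleton.mp h]; exact hjmem
      have := Finset.card_le_card hsub
      rwa [Finset.card_insert_of_notMem (by simp [hv]), Finset.card_singleton] at this
    obtain ⟨m, hm⟩ := hodd j
    have := hdeg j
    omega
  have hdR : (3:ℝ) ≤ (d:ℝ) := by exact_mod_cast hd3
  set b : ℝ := ((d:ℝ)+1)/((d:ℝ)-1) with hb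
  have hb1 : 1 < b := by
    rw [hb, lt_div_iff₀ (by linarith)]; linarith
  have hLb := hgrowth i
  set L := Filter.limsup
      (fun r : ℕ => (({j : V | G.dist i j = r}.ncard : ℝ)) ^ ((r : ℝ)⁻¹))
      Filter.atTop with hLdef
  set c : ℝ := (max L 1 + b)/2 with hc
  have hmaxb : max L 1 < b := max_lt hLb hb1
  have hc1 : 1 < c := by
    have := le_max_right L 1; rw [hc]; linarith
  have hLc : L < c := by
    have h1 := le_max_left L 1; rw [hc]; linarith
  have hcb : c < b := by rw [hc]; linarith
  set c' : ℝ := (c + b)/2 with hc'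
  have hcc' : c < c' := by rw [hc']; linarith
  have hc'b : c' < b := by rw [hc']; linarith
  have hc'1 : 1 < c' := lt_trans hc1 hcc'
  have hc'0 : (0:ℝ) < c' := by linarith
  set μ : ℝ := (c')⁻¹ with hμ
  have hμ0 : 0 < μ := inv_pos.mpr hc'0
  have hμ1 : μ < 1 := by
    rw [hμ]; exact inv_lt_one_of_one_lt₀ hc'1
  have hμb : ((d:ℝ) - 1) < μ * ((d:ℝ)+1) := by
    have hb0 : (0:ℝ) < b := by linarith
    have h1 : (1:ℝ)/b < μ := by
      rw [hμ, one_div]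
      exact inv_strictAnti₀ hc'0 hc'b
    have hbinv : (1:ℝ)/b = ((d:ℝ)-1)/((d:ℝ)+1) := by
      rw [hb, one_div_div]
    rw [hbinv] at h1
    have hpos : (0:ℝ) < (d:ℝ)+1 := by linarith
    calc (d:ℝ)-1 = ((d:ℝ)-1)/((d:ℝ)+1) * ((d:ℝ)+1) := by field_simp
      _ < μ * ((d:ℝ)+1) := mul_lt_mul_of_pos_right h1 hpos
  set ε : ℝ := 2 - (1-μ)*((d:ℝ)+1) with hε
  have hε0 : 0 < ε := by rw [hε]; nlinarith
  set q : ℝ := c * μ with hq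
  have hq0 : (0:ℝ) ≤ q := by
    rw [hq]; exact mul_nonneg (by linarith) hμ0.le
  have hq1 : q < 1 := by
    rw [hq, hμ, ← div_eq_mul_inv]
    exact (div_lt_one hc'0).mpr hcc'
  -- growth bound
  have hnd : ∀ r : ℕ, (({j : V | G.dist i j = r}.ncard : ℝ)) ≤ ((d:ℝ)) ^ r := by
    intro r
    have h := GHM.sphere_ncard_le hconn d hdeg i r
    calc (({j : V | G.dist i j = r}.ncard : ℕ) : ℝ) ≤ ((d ^ r : ℕ) : ℝ) := by
          exact_mod_cast h
      _ = (d:ℝ)^r := by push_cast; ring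
  have hbdd : Filter.IsBoundedUnder (· ≤ ·) Filter.atTop
      (fun r : ℕ => (({j : V | G.dist i j = r}.ncard : ℝ)) ^ ((r : ℝ)⁻¹)) := by
    apply Filter.isBoundedUnder_of
    refine ⟨(d:ℝ), ?_⟩
    intro r
    rcases Nat.eq_zero_or_pos r with h0 | hr
    · subst h0
      simp only [Nat.cast_zero, inv_zero, Real.rpow_zero]
      linarith
    · have hrne : ((r:ℝ)) ≠ 0 := by
        have : (0:ℝ) < (r:ℝ) := by exact_mod_cast hr
        linarith
      have h1 : (({j : V | G.dist i j = r}.ncard : ℝ)) ^ ((r : ℝ)⁻¹)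
          ≤ ((d:ℝ)^r) ^ ((r : ℝ)⁻¹) :=
        Real.rpow_le_rpow (Nat.cast_nonneg _) (hnd r) (by positivity)
      have h2 : (((d:ℝ)^r : ℝ)) ^ ((r : ℝ)⁻¹) = (d:ℝ) := by
        rw [← Real.rpow_natCast (d:ℝ) r, ← Real.rpow_mul (by linarith),
          mul_inv_cancel₀ hrne, Real.rpow_one]
      rw [h2] at h1
      exact h1
  have hev := Filter.eventually_lt_of_limsup_lt hLc hbdd
  obtain ⟨r1, hr1⟩ := Filter.eventually_atTop.mp hev
  have hn : ∀ r, max r1 1 ≤ r →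
      (({j : V | G.dist i j = r}.ncard : ℝ)) * μ ^ r ≤ q ^ r := by
    intro r hr
    have hrr1 : r1 ≤ r := le_trans (le_max_left _ _) hr
    have hr1' : 1 ≤ r := le_trans (le_max_right _ _) hr
    have hlt := hr1 r hrr1
    have hrpos : (0:ℝ) < (r:ℝ) := by exact_mod_cast hr1'
    have hrne : ((r:ℝ)) ≠ 0 := ne_of_gt hrpos
    set x : ℝ := (({j : V | G.dist i j = r}.ncard : ℝ)) with hx
    have hx0 : (0:ℝ) ≤ x := Nat.cast_nonneg _
    have hxc : x < c ^ r := by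
      have h1 : (x ^ ((r:ℝ)⁻¹)) ^ ((r:ℝ)) < c ^ ((r:ℝ)) :=
        Real.rpow_lt_rpow (Real.rpow_nonneg hx0 _) hlt hrpos
      rw [← Real.rpow_mul hx0, inv_mul_cancel₀ hrne, Real.rpow_one,
        Real.rpow_natCast] at h1
      exact h1
    calc x * μ ^ r ≤ c^r * μ^r :=
          mul_le_mul_of_nonneg_right hxc.le (pow_nonneg hμ0.le r)
      _ = q ^ r := by rw [hq, mul_pow]
  have hWsum : Summable (fun j : V => μ ^ G.dist i j) :=
    GHM.summable_weight hconn i hμ0 hq0 hq1 (max r1 1) hn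
  -- weights and energy
  set w : V → ℝ := fun j => μ ^ G.dist i j with hw
  have hw0 : ∀ j, 0 ≤ w j := fun j => pow_nonneg hμ0.le _
  set u : V → V → ℝ := fun j k => μ ^ (max (G.dist i j) (G.dist i k)) with hu
  have hu_symm : ∀ j k, u j k = u k j := by
    intro j k; rw [hu]; simp [max_comm]
  have hu_bound : ∀ j k, |u j k| ≤ w j := by
    intro j k
    rw [hu, hw, abs_of_nonneg (pow_nonneg hμ0.le _)]
    exact pow_le_pow_of_le_one hμ0.le hμ1.le (le_max_left _ _)
  set a : ℕ → V → ℝ := fun t j => ((A t j : ℤ) : ℝ) with ha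
  have habs' : ∀ t (j : V), |a t j| ≤ 1 := fun t j => le_of_eq (habs1 t j)
  set f : ℕ → V → ℝ := fun t j => ∑ k ∈ Nf j, u j k * a (t+1) j * a t k with hf
  set g : ℕ → V → ℝ := fun t j => ∑ k ∈ Nf j, u j k * a (t+1) k * a t j with hg
  have hterm : ∀ (x y : V → ℝ), (∀ j, |x j| ≤ 1) → (∀ j, |y j| ≤ 1) →
      ∀ j k, |u j k * x j * y k| ≤ w j := by
    intro x y hx hy j k
    rw [abs_mul, abs_mul]
    have hub := hu_bound j k
    have h3 := abs_nonneg (u j k)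
    have h4 := abs_nonneg (x j)
    have h5 := abs_nonneg (y k)
    have hwj := hw0 j
    have s1 : |u j k| * |x j| ≤ w j := by nlinarith [hx j]
    calc |u j k| * |x j| * |y k| ≤ w j * 1 := mul_le_mul s1 (hy k) h5 hwj
      _ = w j := by ring
  have hbndsum : ∀ (x y : V → ℝ), (∀ j, |x j| ≤ 1) → (∀ j, |y j| ≤ 1) →
      ∀ j, |∑ k ∈ Nf j, u j k * x j * y k| ≤ (d:ℝ) * w j := by
    intro x y hx hy j
    calc |∑ k ∈ Nf j, u j k * x j * y k|
        ≤ ∑ k ∈ Nf j, |u j k * x j * y k| := Finset.abs_sum_le_sum_abs _ _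
      _ ≤ ∑ _k ∈ Nf j, w j := Finset.sum_le_sum (fun k _ => hterm x y hx hy j k)
      _ = ((Nf j).card : ℝ) * w j := by rw [Finset.sum_const, nsmul_eq_mul]
      _ ≤ (d:ℝ) * w j := by
          apply mul_le_mul_of_nonneg_right _ (hw0 j)
          have : (Nf j).card ≤ d := hdeg j
          exact_mod_cast this
  have hfb : ∀ t j, |f t j| ≤ (d:ℝ) * w j := by
    intro t j
    exact hbndsum (a (t+1)) (a t) (habs' (t+1)) (habs' t) j
  have hgb : ∀ t j, |g t j| ≤ (d:ℝ) * w j := by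
    intro t j
    have h1 : |∑ k ∈ Nf j, u j k * a t j * a (t+1) k| ≤ (d:ℝ) * w j :=
      hbndsum (a t) (a (t+1)) (habs' t) (habs' (t+1)) j
    have h2 : (∑ k ∈ Nf j, u j k * a t j * a (t+1) k)
        = ∑ k ∈ Nf j, u j k * a (t+1) k * a t j :=
      Finset.sum_congr rfl (fun k _ => by ring)
    rw [h2] at h1
    exact h1
  have hWd : Summable (fun j : V => (d:ℝ) * w j) := by
    rw [hw]; exact hWsum.mul_left _
  have hf_summ : ∀ t, Summable (f t) := fun t =>
    Summable.of_abs (Summable.of_nonneg_of_le (fun j => abs_nonneg _) (hfb t) hWd)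
  have hg_summ : ∀ t, Summable (g t) := fun t =>
    Summable.of_abs (Summable.of_nonneg_of_le (fun j => abs_nonneg _) (hgb t) hWd)
  set F : ℕ → ℝ := fun t => ∑' j, f t j with hF
  set C0 : ℝ := (d:ℝ) * ∑' j, w j with hC0
  have hFle : ∀ t, F t ≤ C0 := by
    intro t
    rw [hF, hC0, ← tsum_mul_left]
    exact Summable.tsum_le_tsum (fun j => le_trans (le_abs_self _) (hfb t j)) (hf_summ t) hWd
  have hswapF : ∀ t, F t = ∑' j, g t j := by
    intro t
    exact GHM.tsum_swap hWsum hw0 d hu_symm hu_bound hdeg (a (t+1)) (a t)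
      (habs' (t+1)) (habs' t)
  have hDsum : ∀ t, Summable (fun j => f (t+1) j - g t j) := fun t =>
    (hf_summ (t+1)).sub (hg_summ t)
  have hFdiff : ∀ t, F (t+1) - F t = ∑' j, (f (t+1) j - g t j) := by
    intro t
    rw [hswapF t, Summable.tsum_sub (hf_summ (t+1)) (hg_summ t)]
  -- the key local estimate
  have hkey : ∀ t (j : V), (0 ≤ f (t+1) j - g t j)
      ∧ (A (t+1+1) j ≠ A t j → ε * w j ≤ f (t+1) j - g t j) := by
    intro t j
    have hexp : f (t+1) j - g t j
        = ((a (t+1+1) j) - (a t j)) * ∑ k ∈ Nf j, u j k * a (t+1) k := by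
      simp only [hf, hg]
      rw [← Finset.sum_sub_distrib, Finset.mul_sum]
      exact Finset.sum_congr rfl (fun k _ => by ring)
    by_cases hflip : A (t+1+1) j = A t j
    · constructor
      · rw [hexp]
        have hz : a (t+1+1) j - a t j = 0 := by
          simp only [ha, hflip, sub_self]
        rw [hz, zero_mul]
      · intro hcn; exact absurd hflip hcn
    · -- a flip occurs at j
      set Far : Finset V := (Nf j).filter (fun k => G.dist i k = G.dist i j + 1)
        with hFarDef
      set S : ℤ := ∑ k ∈ Nf j, A (t+1) k with hSdef
      set σ : ℤ := ∑ k ∈ Far, A (t+1) k with hσdef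
      have hρadj : ∀ k ∈ Nf j, G.dist i k ≤ G.dist i j + 1 := by
        intro k hk
        rcases Finset.mem_insert.mp hk with h | h
        · subst h; omega
        · have hjk : G.dist j k = 1 :=
            SimpleGraph.dist_eq_one_iff_adj.mpr ((G.mem_neighborFinset j k).mp h)
          have := hconn.dist_triangle (u := i) (v := j) (w := k)
          omega
      have hinner : (∑ k ∈ Nf j, u j k * a (t+1) k)
          = μ ^ (G.dist i j) * ((S:ℝ) - (1-μ) * (σ:ℝ)) := by
        rw [← Finset.sum_filter_add_sum_filter_not (Nf j)
          (fun k => G.dist i k = G.dist i j + 1) (fun k => u j k * a (t+1) k)]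
        have h1 : (∑ k ∈ Far, u j k * a (t+1) k) = μ ^ (G.dist i j + 1) * (σ:ℝ) := by
          have hσcast : ((σ:ℤ):ℝ) = ∑ k ∈ Far, a (t+1) k := by
            rw [hσdef]; push_cast; rfl
          rw [hσcast, Finset.mul_sum]
          apply Finset.sum_congr rfl
          intro k hk
          have hdk : G.dist i k = G.dist i j + 1 := (Finset.mem_filter.mp hk).2
          have humax : u j k = μ ^ (G.dist i j + 1) := by
            simp only [hu]
            rw [hdk, max_eq_right (Nat.le_succ _)]
          rw [humax]
        have h2 : (∑ k ∈ (Nf j).filter (fun k => ¬ G.dist i k = G.dist i j + 1),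
            u j k * a (t+1) k) = μ ^ (G.dist i j) * ((S:ℝ) - (σ:ℝ)) := by
          have hsplit : σ + (∑ k ∈ (Nf j).filter (fun k => ¬ G.dist i k = G.dist i j + 1),
              A (t+1) k) = S := by
            rw [hσdef, hSdef, hFarDef]
            exact Finset.sum_filter_add_sum_filter_not (Nf j) _ _
          have hrest : ((∑ k ∈ (Nf j).filter (fun k => ¬ G.dist i k = G.dist i j + 1),
              A (t+1) k : ℤ) : ℝ) = (S:ℝ) - (σ:ℝ) := by
            have : (∑ k ∈ (Nf j).filter (fun k => ¬ G.dist i k = G.dist i j + 1),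
                A (t+1) k) = S - σ := by rw [← hsplit]; ring
            rw [this]; push_cast; ring
          have hcast : (∑ k ∈ (Nf j).filter (fun k => ¬ G.dist i k = G.dist i j + 1),
              a (t+1) k) = (S:ℝ) - (σ:ℝ) := by
            rw [← hrest]; push_cast; rfl
          rw [← hcast, Finset.mul_sum]
          apply Finset.sum_congr rfl
          intro k hk
          have hk1 := Finset.mem_filter.mp hk
          have hle := hρadj k hk1.1
          have hdk : G.dist i k ≤ G.dist i j := by
            rcases Nat.lt_or_ge (G.dist i k) (G.dist i j + 1) with h | h
            · omega
            · exact absurd (by omega : G.dist i k = G.dist i j + 1) hk1.2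
          have humax : u j k = μ ^ (G.dist i j) := by
            simp only [hu]
            rw [max_eq_left hdk]
          rw [humax]
        rw [h1, h2, pow_succ]
        ring
      have hupd : A (t+1+1) j = if 0 < S then 1 else -1 := by
        rw [hSdef]; exact hupdate (t+1) j
      have hS0 : S ≠ 0 := by rw [hSdef]; exact hSodd (t+1) j
      have hES : 1 ≤ A (t+1+1) j * S := by
        by_cases h : 0 < S
        · rw [hupd, if_pos h, one_mul]; omega
        · rw [hupd, if_neg h, neg_one_mul]; omega
      have hEabs : |A (t+1+1) j| = 1 := by
        rcases hsign (t+1+1) j with h | h <;> rw [h] <;> rfl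
      have hτ : A (t+1+1) j * σ ≤ (Far.card : ℤ) := by
        have h1 : A (t+1+1) j * σ ≤ |A (t+1+1) j * σ| := le_abs_self _
        have h2 : |A (t+1+1) j * σ| = |σ| := by rw [abs_mul, hEabs, one_mul]
        have h3 : |σ| ≤ (Far.card : ℤ) := by
          calc |σ| ≤ ∑ k ∈ Far, |A (t+1) k| := by
                rw [hσdef]; exact Finset.abs_sum_le_sum_abs _ _
            _ = ∑ _k ∈ Far, 1 := Finset.sum_congr rfl (fun k _ => by
                rcases hsign (t+1) k with h | h <;> rw [h] <;> rfl)
            _ = (Far.card : ℤ) := by rw [Finset.sum_const, nsmul_eq_mul, mul_one]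
        linarith
      have hlow : A (t+1+1) j * σ - (((Nf j).card : ℤ) - (Far.card : ℤ))
          ≤ A (t+1+1) j * S := by
        set Rest : Finset V := (Nf j).filter (fun k => ¬ G.dist i k = G.dist i j + 1)
          with hRestDef
        have hsplit : σ + (∑ k ∈ Rest, A (t+1) k) = S := by
          rw [hσdef, hSdef, hFarDef, hRestDef]
          exact Finset.sum_filter_add_sum_filter_not (Nf j) _ _
        have hcards : Far.card + Rest.card = (Nf j).card := by
          rw [hFarDef, hRestDef]
          exact Finset.card_filter_add_card_filter_not _
        have habsR : |∑ k ∈ Rest, A (t+1) k| ≤ (Rest.card : ℤ) := by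
          calc |∑ k ∈ Rest, A (t+1) k| ≤ ∑ k ∈ Rest, |A (t+1) k| :=
                Finset.abs_sum_le_sum_abs _ _
            _ = ∑ _k ∈ Rest, 1 := Finset.sum_congr rfl (fun k _ => by
                rcases hsign (t+1) k with h | h <;> rw [h] <;> rfl)
            _ = (Rest.card : ℤ) := by rw [Finset.sum_const, nsmul_eq_mul, mul_one]
        have hmulR : -(Rest.card : ℤ) ≤ A (t+1+1) j * (∑ k ∈ Rest, A (t+1) k) := by
          have := le_abs_self (A (t+1+1) j * (∑ k ∈ Rest, A (t+1) k))
          have h2 : |A (t+1+1) j * (∑ k ∈ Rest, A (t+1) k)|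
              = |∑ k ∈ Rest, A (t+1) k| := by rw [abs_mul, hEabs, one_mul]
          have h3 := neg_abs_le (A (t+1+1) j * (∑ k ∈ Rest, A (t+1) k))
          linarith
        have hdist : A (t+1+1) j * S
            = A (t+1+1) j * σ + A (t+1+1) j * (∑ k ∈ Rest, A (t+1) k) := by
          rw [← hsplit]; ring
        have hcastc : (Far.card : ℤ) + (Rest.card : ℤ) = ((Nf j).card : ℤ) := by
          exact_mod_cast hcards
        linarith
      have hkest := GHM.key_est μ ((A (t+1+1) j : ℝ) * (S:ℝ)) ((A (t+1+1) j : ℝ) * (σ:ℝ))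
        (((Nf j).card : ℝ)) ((Far.card : ℝ)) hμ0 hμ1.le
        (by exact_mod_cast hES) (by exact_mod_cast hτ)
        (by exact_mod_cast hlow)
      have hcardd : ((Nf j).card : ℝ) ≤ (d:ℝ) := by exact_mod_cast hdeg j
      have hμle : (0:ℝ) ≤ 1 - μ := by linarith
      have hhalf : ε/2 ≤ (A (t+1+1) j : ℝ) * (S:ℝ)
          - (1-μ) * ((A (t+1+1) j : ℝ) * (σ:ℝ)) := by
        rw [hε]
        nlinarith
      have hdiff2 : a (t+1+1) j - a t j = 2 * (A (t+1+1) j : ℝ) := by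
        rcases hsign (t+1+1) j with h1 | h1 <;> rcases hsign t j with h2 | h2
        · exact absurd (h1.trans h2.symm) hflip
        · simp only [ha]; rw [h1, h2]; norm_num
        · simp only [ha]; rw [h1, h2]; norm_num
        · exact absurd (h1.trans h2.symm) hflip
      have hpow : (0:ℝ) < μ ^ (G.dist i j) := pow_pos hμ0 _
      have hval : ε * w j ≤ f (t+1) j - g t j := by
        rw [hexp, hinner, hdiff2]
        have expand : 2 * (A (t+1+1) j : ℝ) * (μ ^ (G.dist i j) * ((S:ℝ) - (1-μ) * (σ:ℝ)))
            = 2 * μ ^ (G.dist i j) * ((A (t+1+1) j : ℝ) * (S:ℝ)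
                - (1-μ) * ((A (t+1+1) j : ℝ) * (σ:ℝ))) := by ring
        rw [expand, hw]
        nlinarith [mul_le_mul_of_nonneg_right hhalf hpow.le]
      constructor
      · exact le_trans (mul_nonneg hε0.le (hw0 j)) hval
      · intro _; exact hval
  -- monotonicity and conclusion
  have hmono : Monotone F := by
    apply monotone_nat_of_le_succ
    intro t
    have h0 : (0:ℝ) ≤ ∑' j, (f (t+1) j - g t j) := tsum_nonneg (fun j => (hkey t j).1)
    have := hFdiff t
    linarith
  have hstep : ∀ t, A (t+1+1) i ≠ A t i → F t + ε * w i ≤ F (t+1) := by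
    intro t hfl
    have h1 : ε * w i ≤ f (t+1) i - g t i := (hkey t i).2 hfl
    have h2 : f (t+1) i - g t i ≤ ∑' j, (f (t+1) j - g t j) :=
      Summable.le_tsum (hDsum t) i (fun j _ => (hkey t j).1)
    have := hFdiff t
    linarith
  by_contra hcon
  push_neg at hcon
  have hδ : 0 < ε * w i := mul_pos hε0 (pow_pos hμ0 _)
  have hclaim : ∀ n : ℕ, ∃ t, F 0 + n * (ε * w i) ≤ F t := by
    intro n
    induction n with
    | zero => exact ⟨0, by simp⟩
    | succ n ih =>
        obtain ⟨t, ht⟩ := ih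
        obtain ⟨t', ht', hft⟩ := hcon t
        have h1 : F t ≤ F t' := hmono ht'
        have h2 : F t' + ε * w i ≤ F (t' + 1) := hstep t' hft
        exact ⟨t' + 1, by push_cast; linarith⟩
  obtain ⟨n, hnn⟩ := exists_nat_gt ((C0 - F 0) / (ε * w i))
  obtain ⟨t, ht⟩ := hclaim n
  have h2 := hFle t
  have h3 : (C0 - F 0) < n * (ε * w i) := by
    rw [div_lt_iff₀ hδ] at hnn; linarith
  linarith
end

section
/- (Geanakoplos) Consider Bayesian agents on a finite directed graph G = (V,E): the state S is binary, the joint vector of private signals (X_i)_{i∈V} takes values in a finite set of size M with an arbitrary joint distribution together with S, u : {0,1} × 𝒜 → ℝ is a utility function on a finite action set, H_t^i is the σ-algebra generated by X_i and the actions A_s^j for j ∈ N(i) and s < t, and A_t^i is an H_t^i-measurable action maximizing E[u(S, a) | H_t^i] (with a fixed deterministic tie-breaking rule). Then the actions of every agent converge after at most M·|V| time periods: A_t^i = A_{t'}^i for all i ∈ V and all t, t' ≥ M·|V|. Furthermore, for each agent i the number of time periods t at which A_{t+1}^i ≠ A_t^i is at most M. -/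
open scoped Classical

def infoRel {Ω V 𝒮 𝒜 : Type*} (E : V → V → Prop) (X : V → Ω → 𝒮)
    (A : ℕ → V → Ω → 𝒜) (t : ℕ) (i : V) (ω ω' : Ω) : Prop :=
  X i ω = X i ω' ∧ ∀ j : V, (E i j ∨ j = i) → ∀ s : ℕ, s < t → A s j ω = A s j ω'

noncomputable def infoScore {Ω V 𝒮 𝒜 : Type*} [Fintype Ω] (p : Ω → ℝ) (S : Ω → Bool)
    (u : Bool → 𝒜 → ℝ) (E : V → V → Prop) (X : V → Ω → 𝒮)
    (A : ℕ → V → Ω → 𝒜) (t : ℕ) (i : V) (ω : Ω) (a : 𝒜) : ℝ :=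
  ∑ ω' : Ω, (if infoRel E X A t i ω ω' then p ω' * u (S ω') a else 0)

section Aux

variable {Ω V 𝒮 𝒜 : Type*} [Fintype Ω] {p : Ω → ℝ} {S : Ω → Bool}
  {u : Bool → 𝒜 → ℝ} {E : V → V → Prop} {X : V → Ω → 𝒮} {A : ℕ → V → Ω → 𝒜}
  [Fintype 𝒜] [Nonempty 𝒜] [DecidableEq 𝒜] {tb : Finset 𝒜 → 𝒜}

lemma infoRel_refl (t : ℕ) (i : V) (ω : Ω) : infoRel E X A t i ω ω :=
  ⟨rfl, fun _ _ _ _ => rfl⟩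

lemma infoRel_symm {t : ℕ} {i : V} {ω ω' : Ω} (h : infoRel E X A t i ω ω') :
    infoRel E X A t i ω' ω :=
  ⟨h.1.symm, fun j hj s hs => (h.2 j hj s hs).symm⟩

lemma infoRel_trans {t : ℕ} {i : V} {ω₁ ω₂ ω₃ : Ω} (h : infoRel E X A t i ω₁ ω₂)
    (h' : infoRel E X A t i ω₂ ω₃) : infoRel E X A t i ω₁ ω₃ :=
  ⟨h.1.trans h'.1, fun j hj s hs => (h.2 j hj s hs).trans (h'.2 j hj s hs)⟩

lemma infoRel_mono {t t' : ℕ} {i : V} {ω ω' : Ω} (htt : t ≤ t')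
    (h : infoRel E X A t' i ω ω') : infoRel E X A t i ω ω' :=
  ⟨h.1, fun j hj s hs => h.2 j hj s (lt_of_lt_of_le hs htt)⟩

lemma infoScore_congr {t t' : ℕ} {i : V} {ω ω' : Ω}
    (h : ∀ ω'', infoRel E X A t i ω ω'' ↔ infoRel E X A t' i ω' ω'') (a : 𝒜) :
    infoScore p S u E X A t i ω a = infoScore p S u E X A t' i ω' a := by
  unfold infoScore
  exact Finset.sum_congr rfl fun ω'' _ => by rw [if_congr (h ω'') rfl rfl]

lemma action_congr
    (hA : ∀ t i ω, A t i ω = tb (Finset.univ.filter fun a : 𝒜 =>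
      ∀ b : 𝒜, infoScore p S u E X A t i ω b ≤ infoScore p S u E X A t i ω a))
    {t t' : ℕ} {i : V} {ω ω' : Ω}
    (h : ∀ ω'', infoRel E X A t i ω ω'' ↔ infoRel E X A t' i ω' ω'') :
    A t i ω = A t' i ω' := by
  have hs : ∀ b, infoScore p S u E X A t i ω b = infoScore p S u E X A t' i ω' b :=
    fun b => infoScore_congr h b
  rw [hA t i ω, hA t' i ω']
  congr 1
  ext a
  simp only [Finset.mem_filter, hs]

lemma sig_infoRel
    (hA : ∀ t i ω, A t i ω = tb (Finset.univ.filter fun a : 𝒜 =>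
      ∀ b : 𝒜, infoScore p S u E X A t i ω b ≤ infoScore p S u E X A t i ω a))
    {ω ω' : Ω} (h : ∀ j, X j ω = X j ω') : ∀ t i, infoRel E X A t i ω ω' := by
  intro t
  induction t using Nat.strong_induction_on with
  | _ t IH =>
    intro i
    refine ⟨h i, fun j _ s hs => ?_⟩
    refine action_congr hA fun ω'' => ?_
    have hr := IH s hs j
    exact ⟨fun hx => infoRel_trans (infoRel_symm hr) hx, fun hx => infoRel_trans hr hx⟩

end Aux

noncomputable def cls {Ω V 𝒮 𝒜 : Type*} [Fintype Ω] (E : V → V → Prop) (X : V → Ω → 𝒮)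
    (A : ℕ → V → Ω → 𝒜) (t : ℕ) (i : V) (ω : Ω) : Finset Ω :=
  Finset.univ.filter (infoRel E X A t i ω)

noncomputable def nC {Ω V 𝒮 𝒜 : Type*} [Fintype Ω] (E : V → V → Prop) (X : V → Ω → 𝒮)
    (A : ℕ → V → Ω → 𝒜) (t : ℕ) (i : V) : ℕ :=
  (Finset.univ.image (cls E X A t i)).card

noncomputable def rep {Ω : Type*} [Nonempty Ω] (c : Finset Ω) : Ω :=
  if h : c.Nonempty then h.choose else Classical.arbitrary Ω

lemma rep_mem {Ω : Type*} [Nonempty Ω] {c : Finset Ω} (h : c.Nonempty) : rep c ∈ c := by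
  rw [rep, dif_pos h]; exact h.choose_spec

section Aux2

variable {Ω V 𝒮 𝒜 : Type*} [Fintype Ω] [Nonempty Ω] {p : Ω → ℝ} {S : Ω → Bool}
  {u : Bool → 𝒜 → ℝ} {E : V → V → Prop} {X : V → Ω → 𝒮} {A : ℕ → V → Ω → 𝒜}
  [Fintype 𝒜] [Nonempty 𝒜] [DecidableEq 𝒜] {tb : Finset 𝒜 → 𝒜}

lemma mem_cls {t : ℕ} {i : V} {ω ω' : Ω} :
    ω' ∈ cls E X A t i ω ↔ infoRel E X A t i ω ω' := by
  simp [cls]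

lemma cls_eq_of_rel {t : ℕ} {i : V} {ω ω' : Ω} (h : infoRel E X A t i ω ω') :
    cls E X A t i ω = cls E X A t i ω' := by
  ext ω''
  simp only [mem_cls]
  exact ⟨fun hx => infoRel_trans (infoRel_symm h) hx, fun hx => infoRel_trans h hx⟩

lemma rel_of_cls_eq {t : ℕ} {i : V} {ω ω' : Ω} (h : cls E X A t i ω = cls E X A t i ω') :
    infoRel E X A t i ω ω' := by
  have : ω' ∈ cls E X A t i ω := by rw [h]; exact mem_cls.mpr (infoRel_refl t i ω')
  exact mem_cls.mp this

lemma cls_rep {t : ℕ} {i : V} {c : Finset Ω}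
    (hc : c ∈ Finset.univ.image (cls E X A t i)) : cls E X A t i (rep c) = c := by
  obtain ⟨ω, -, rfl⟩ := Finset.mem_image.mp hc
  have hm : rep (cls E X A t i ω) ∈ cls E X A t i ω :=
    rep_mem ⟨ω, mem_cls.mpr (infoRel_refl t i ω)⟩
  exact (cls_eq_of_rel (mem_cls.mp hm)).symm

lemma nC_le
    (hA : ∀ t i ω, A t i ω = tb (Finset.univ.filter fun a : 𝒜 =>
      ∀ b : 𝒜, infoScore p S u E X A t i ω b ≤ infoScore p S u E X A t i ω a))
    (t : ℕ) (i : V) :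
    nC E X A t i ≤ (Set.range fun ω => fun j : V => X j ω).ncard := by
  have hrw : (Set.range fun ω => fun j : V => X j ω).ncard
      = (Finset.univ.image fun ω (j : V) => X j ω).card := by
    rw [← Set.ncard_coe_finset]
    congr 1
    rw [Finset.coe_image, Finset.coe_univ, Set.image_univ]
  rw [hrw]
  apply Finset.card_le_card_of_injOn (fun c => fun j => X j (rep c))
  · intro c _
    exact Finset.mem_image.mpr ⟨rep c, Finset.mem_univ _, rfl⟩
  · intro c hc c' hc' hre
    have h1 : infoRel E X A t i (rep c) (rep c') :=
      sig_infoRel hA (fun j => congrFun hre j) t i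
    calc c = cls E X A t i (rep c) := (cls_rep (Finset.mem_coe.mp hc)).symm
      _ = cls E X A t i (rep c') := cls_eq_of_rel h1
      _ = c' := cls_rep (Finset.mem_coe.mp hc')

lemma nC_mono (t : ℕ) (i : V) : nC E X A t i ≤ nC E X A (t + 1) i := by
  apply Finset.card_le_card_of_injOn (fun c => cls E X A (t + 1) i (rep c))
  · intro c _
    exact Finset.mem_image.mpr ⟨rep c, Finset.mem_univ _, rfl⟩
  · intro c hc c' hc' hre
    have h1 : infoRel E X A t i (rep c) (rep c') :=
      infoRel_mono (Nat.le_succ t) (rel_of_cls_eq hre)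
    calc c = cls E X A t i (rep c) := (cls_rep (Finset.mem_coe.mp hc)).symm
      _ = cls E X A t i (rep c') := cls_eq_of_rel h1
      _ = c' := cls_rep (Finset.mem_coe.mp hc')

lemma rel_succ_of_nC_eq {t : ℕ} {i : V} (hn : nC E X A t i = nC E X A (t + 1) i)
    {ω ω' : Ω} (h : infoRel E X A t i ω ω') : infoRel E X A (t + 1) i ω ω' := by
  set f : Finset Ω → Finset Ω := fun c => cls E X A (t + 1) i (rep c) with hf
  have hmaps : ∀ c ∈ Finset.univ.image (cls E X A t i),
      f c ∈ Finset.univ.image (cls E X A (t + 1) i) := fun c _ =>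
    Finset.mem_image.mpr ⟨rep c, Finset.mem_univ _, rfl⟩
  have hinj : Set.InjOn f (Finset.univ.image (cls E X A t i)) := by
    intro c hc c' hc' hre
    have h1 : infoRel E X A t i (rep c) (rep c') :=
      infoRel_mono (Nat.le_succ t) (rel_of_cls_eq hre)
    calc c = cls E X A t i (rep c) := (cls_rep (Finset.mem_coe.mp hc)).symm
      _ = cls E X A t i (rep c') := cls_eq_of_rel h1
      _ = c' := cls_rep (Finset.mem_coe.mp hc')
  have himg : (Finset.univ.image (cls E X A t i)).image f
      = Finset.univ.image (cls E X A (t + 1) i) := by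
    apply Finset.eq_of_subset_of_card_le
    · intro c hc
      obtain ⟨c₀, hc₀, rfl⟩ := Finset.mem_image.mp hc
      exact hmaps c₀ hc₀
    · rw [Finset.card_image_of_injOn hinj]
      exact le_of_eq hn.symm
  have hω : cls E X A (t + 1) i ω ∈ (Finset.univ.image (cls E X A t i)).image f := by
    rw [himg]; exact Finset.mem_image.mpr ⟨ω, Finset.mem_univ _, rfl⟩
  have hω' : cls E X A (t + 1) i ω' ∈ (Finset.univ.image (cls E X A t i)).image f := by
    rw [himg]; exact Finset.mem_image.mpr ⟨ω', Finset.mem_univ _, rfl⟩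
  obtain ⟨c, hc, hfc⟩ := Finset.mem_image.mp hω
  obtain ⟨c', hc', hfc'⟩ := Finset.mem_image.mp hω'
  have r1 : infoRel E X A (t + 1) i (rep c) ω := rel_of_cls_eq hfc
  have r2 : infoRel E X A (t + 1) i (rep c') ω' := rel_of_cls_eq hfc'
  have rc : infoRel E X A t i (rep c) (rep c') :=
    infoRel_trans (infoRel_trans (infoRel_mono (Nat.le_succ t) r1) h)
      (infoRel_symm (infoRel_mono (Nat.le_succ t) r2))
  have hcc : c = c' := by
    calc c = cls E X A t i (rep c) := (cls_rep hc).symm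
      _ = cls E X A t i (rep c') := cls_eq_of_rel rc
      _ = c' := cls_rep hc'
  have : cls E X A (t + 1) i ω = cls E X A (t + 1) i ω' := by
    rw [← hfc, ← hfc', hcc]
  exact rel_of_cls_eq this

lemma nC_pos (t : ℕ) (i : V) : 1 ≤ nC E X A t i :=
  Finset.card_pos.mpr (Finset.univ_nonempty.image _)

end Aux2

lemma count_incr {f : ℕ → ℕ} (hf : Monotone f) (T : ℕ) :
    f 0 + ((Finset.range T).filter fun t => f t < f (t + 1)).card ≤ f T := by
  induction T with
  | zero => simp
  | succ T IH =>
    rw [Finset.range_add_one, Finset.filter_insert]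
    by_cases h : f T < f (T + 1)
    · rw [if_pos h, Finset.card_insert_of_notMem (by simp)]
      omega
    · rw [if_neg h]
      exact IH.trans (hf (Nat.le_succ T))
/-- **Geanakoplos: bounds on the number of rounds in finite probability spaces.**
Bayesian agents on a finite directed graph repeatedly choose myopically optimal actions given
their private signal and the past actions of their neighbors, with a fixed deterministic
tie-breaking rule `tb`.  If the joint vector of private signals takes `M` distinct values,
then every agent's action is constant from time `M·|V|` on, and each agent changes its action
at most `M` times. -/
theorem geanakoplos_finite_convergence
    (Ω : Type) [Fintype Ω] (p : Ω → ℝ)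
    (hp : ∀ ω, 0 ≤ p ω) (hpsum : ∑ ω, p ω = 1)
    (V : Type) [Fintype V] (E : V → V → Prop)
    (S : Ω → Bool)
    (𝒮 : Type) (X : V → Ω → 𝒮)
    (M : ℕ) (hM : (Set.range fun ω => (fun i => X i ω)).ncard = M)
    (𝒜 : Type) [Fintype 𝒜] [Nonempty 𝒜] [DecidableEq 𝒜]
    (u : Bool → 𝒜 → ℝ)
    (tb : Finset 𝒜 → 𝒜) (htb : ∀ s : Finset 𝒜, s.Nonempty → tb s ∈ s)
    (A : ℕ → V → Ω → 𝒜)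
    (hA : ∀ t i ω, A t i ω
      = tb (Finset.univ.filter fun a : 𝒜 =>
          ∀ b : 𝒜, infoScore p S u E X A t i ω b ≤ infoScore p S u E X A t i ω a)) :
    (∀ (i : V) (t t' : ℕ),
        M * Fintype.card V ≤ t → M * Fintype.card V ≤ t' → A t i = A t' i) ∧
    (∀ (i : V) (T : ℕ),
        ((Finset.range T).filter fun t => A (t + 1) i ≠ A t i).card ≤ M) := by
  by_cases hΩ : Nonempty Ω
  · haveI := hΩ
    by_cases hV : Nonempty V
    · haveI := hV
      -- translate hM into a Finset statement
      have hMc : (Set.range fun ω => fun j : V => X j ω).ncard = M := hM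
      have hM1 : 1 ≤ M := by
        rw [← hMc]
        exact (Set.ncard_pos (Set.finite_range _)).mpr (Set.range_nonempty _)
      -- one stabilization step
      have step : ∀ t, (∀ i ω ω', infoRel E X A t i ω ω' → infoRel E X A (t + 1) i ω ω') →
          (∀ i, A (t + 1) i = A t i) ∧
          (∀ i ω ω', infoRel E X A (t + 1) i ω ω' → infoRel E X A (t + 2) i ω ω') := by
        intro t ht
        have hact : ∀ i, A (t + 1) i = A t i := by
          intro i; funext ω
          exact action_congr hA fun ω'' =>
            ⟨infoRel_mono (Nat.le_succ t), ht i ω ω''⟩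
        refine ⟨hact, fun i ω ω' h => ⟨h.1, fun j hj s hs => ?_⟩⟩
        rcases Nat.lt_succ_iff_lt_or_eq.mp hs with hs' | rfl
        · exact h.2 j hj s hs'
        · rw [hact j]
          exact h.2 j hj t (Nat.lt_succ_self t)
      -- propagation of stability
      have prop : ∀ t, (∀ i ω ω', infoRel E X A t i ω ω' → infoRel E X A (t + 1) i ω ω') →
          ∀ k, (∀ i ω ω', infoRel E X A (t + k) i ω ω' → infoRel E X A (t + k + 1) i ω ω') ∧
            ∀ i, A (t + k) i = A t i := by
        intro t ht k
        induction k with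
        | zero => exact ⟨ht, fun i => rfl⟩
        | succ k IH =>
          obtain ⟨hs, he⟩ := IH
          obtain ⟨ha, hs'⟩ := step (t + k) hs
          exact ⟨hs', fun i => (ha i).trans (he i)⟩
      -- the potential function
      set Φ : ℕ → ℕ := fun t => ∑ i : V, nC E X A t i with hΦ
      have hΦmono : Monotone Φ := monotone_nat_of_le_succ fun t =>
        Finset.sum_le_sum fun i _ => nC_mono t i
      have hΦub : ∀ t, Φ t ≤ M * Fintype.card V := by
        intro t
        calc Φ t ≤ ∑ _i : V, M := Finset.sum_le_sum fun i _ => (nC_le hA t i).trans_eq hMc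
          _ = M * Fintype.card V := by
            rw [Finset.sum_const, Finset.card_univ, smul_eq_mul, mul_comm]
      have hΦ0 : Fintype.card V ≤ Φ 0 := by
        calc Fintype.card V = ∑ _i : V, 1 := by
              rw [Finset.sum_const, Finset.card_univ, smul_eq_mul, mul_one]
          _ ≤ Φ 0 := Finset.sum_le_sum fun i _ => nC_pos 0 i
      have hstrict : ∀ t,
          ¬ (∀ i ω ω', infoRel E X A t i ω ω' → infoRel E X A (t + 1) i ω ω') →
          Φ t < Φ (t + 1) := by
        intro t ht
        push_neg at ht
        obtain ⟨i, ω, ω', hrel, hnrel⟩ := ht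
        refine Finset.sum_lt_sum (fun j _ => nC_mono t j) ⟨i, Finset.mem_univ i, ?_⟩
        exact lt_of_le_of_ne (nC_mono t i) fun hEq => hnrel (rel_succ_of_nC_eq hEq hrel)
      -- existence of a stable time
      have hex : ∃ t₀, t₀ ≤ M * Fintype.card V ∧
          ∀ i ω ω', infoRel E X A t₀ i ω ω' → infoRel E X A (t₀ + 1) i ω ω' := by
        by_contra hc
        push_neg at hc
        have hstr : ∀ t ∈ Finset.range (M * Fintype.card V), Φ t < Φ (t + 1) := by
          intro t htm
          obtain ⟨i, ω, ω', hrel, hnrel⟩ :=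
            hc t (le_of_lt (Finset.mem_range.mp htm))
          refine hstrict t ?_
          intro hall
          exact hnrel (hall i ω ω' hrel)
        have h14 := count_incr hΦmono (M * Fintype.card V)
        rw [Finset.filter_true_of_mem hstr, Finset.card_range] at h14
        have h1 := hΦub (M * Fintype.card V)
        have h2 : 1 ≤ Fintype.card V := Fintype.card_pos
        omega
      obtain ⟨t₀, ht₀N, hstab⟩ := hex
      constructor
      · intro i t t' htt htt'
        have h1 : A t i = A t₀ i := by
          have := (prop t₀ hstab (t - t₀)).2 i
          rwa [Nat.add_sub_cancel' (ht₀N.trans htt)] at this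
        have h2 : A t' i = A t₀ i := by
          have := (prop t₀ hstab (t' - t₀)).2 i
          rwa [Nat.add_sub_cancel' (ht₀N.trans htt')] at this
        exact h1.trans h2.symm
      · intro i T
        have hsub : ((Finset.range T).filter fun t => A (t + 1) i ≠ A t i) ⊆
            (Finset.range T).filter fun t => nC E X A t i < nC E X A (t + 1) i := by
          intro t htm
          simp only [Finset.mem_filter] at htm ⊢
          refine ⟨htm.1, lt_of_le_of_ne (nC_mono t i) fun hEq => htm.2 ?_⟩
          funext ω
          exact action_congr hA fun ω'' =>
            ⟨fun h => infoRel_mono (Nat.le_succ t) h, fun h => rel_succ_of_nC_eq hEq h⟩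
        have hmonof : Monotone (fun t => nC E X A t i) :=
          monotone_nat_of_le_succ fun t => nC_mono t i
        have h14 := count_incr hmonof T
        have hub : nC E X A T i ≤ M := (nC_le hA T i).trans_eq hMc
        have hcard := Finset.card_le_card hsub
        omega
    · constructor <;> intro i <;> exact absurd ⟨i⟩ hV
  · have he : ∀ (t t' : ℕ) (i : V), A t i = A t' i := by
      intro t t' i; funext ω; exact absurd ⟨ω⟩ hΩ
    constructor
    · intro i t t' _ _; exact he t t' i
    · intro i T
      have hempty : ((Finset.range T).filter fun t => A (t + 1) i ≠ A t i) = ∅ := by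
        apply Finset.filter_false_of_mem
        intro t _
        simp only [ne_eq, not_not]
        exact he (t + 1) t i
      rw [hempty]
      simp
end

section
/- (Mossel–Sly–Tamuz; agreement on actions implies learning) Let S ∈ {0,1} with P(S=1) = 1/2, and let X_1, X_2, … be a countable sequence of random variables that are i.i.d. conditioned on S and have unbounded private beliefs: writing B_0^i = P(S=1 | X_i), for every ε > 0 both P(B_0^i < ε) > 0 and P(B_0^i > 1−ε) > 0. For each i let F_i be a sub-σ-algebra of σ(X_1, X_2, …) with σ(X_i) ⊆ F_i, let B_i = P(S=1 | F_i), and let the action be A_i = 1 if B_i ≥ 1/2 and A_i = 0 otherwise. Suppose all but a vanishing fraction of agents agree on actions: there is a random variable A such that almost surely limsup_n (1/n)·|{i ≤ n : A_i ≠ A}| = 0. Then P(A = S) = 1. -/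
open MeasureTheory ProbabilityTheory Filter Topology
open scoped ENNReal

lemma MST_tendsto_of_limsup_eq_zero {u : ℕ → ℝ} (h0 : ∀ n, 0 ≤ u n) (h1 : ∀ n, u n ≤ 2)
    (h : limsup u atTop = 0) : Tendsto u atTop (𝓝 0) := by
  have hbdd : IsBoundedUnder (· ≤ ·) atTop u := isBoundedUnder_of ⟨2, fun n => h1 n⟩
  have hbdd' : IsBoundedUnder (· ≥ ·) atTop u := isBoundedUnder_of ⟨0, fun n => h0 n⟩
  refine tendsto_of_liminf_eq_limsup ?_ h hbdd hbdd'
  refine le_antisymm ?_ ?_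
  · calc liminf u atTop ≤ limsup u atTop := liminf_le_limsup hbdd hbdd'
      _ = 0 := h
  · exact le_liminf_of_le hbdd.isCoboundedUnder_ge (Eventually.of_forall h0)

set_option maxHeartbeats 2000000 in
lemma MST_case_lemma {Ω α : Type*} [m0 : MeasurableSpace Ω] (P : Measure Ω)
    [IsProbabilityMeasure P] [mα : MeasurableSpace α]
    (X : ℕ → Ω → α) (hX : ∀ i, Measurable (X i))
    (E : Set Ω) (hE : MeasurableSet E) (hEhalf : P E = 1/2)
    (hindep : iIndepFun X (P[|E]))
    (hid : ∀ i, (P[|E]).map (X i) = (P[|E]).map (X 0))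
    (hid' : ∀ i, (P[|Eᶜ]).map (X i) = (P[|Eᶜ]).map (X 0))
    (F : ℕ → MeasurableSpace Ω) (hFle : ∀ i, F i ≤ m0)
    (hXF : ∀ i, MeasurableSpace.comap (X i) mα ≤ F i)
    (bad : ℕ → Set Ω) (hbad : ∀ i, MeasurableSet[F i] (bad i))
    (hbadle : ∀ i, ∀ᵐ ω ∂P, ω ∈ bad i →
      (P[E.indicator (fun _ => (1:ℝ)) | F i]) ω ≤ 1/2)
    (hpos : ∀ ε : ℝ, 0 < ε →
      0 < P {ω | 1 - ε < (P[E.indicator (fun _ => (1:ℝ)) | MeasurableSpace.comap (X 0) mα]) ω})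
    (W : Set Ω) (hW : MeasurableSet W) (hWE : W ⊆ E)
    (hWfrac : ∀ᵐ ω ∂P, ω ∈ W → Tendsto (fun n : ℕ =>
        (∑ i ∈ Finset.range (n+1), ((bad i)ᶜ.indicator (fun _ => (1:ℝ)) ω)) / (n+1))
      atTop (𝓝 0)) :
    P W = 0 := by
  -- reduce to the quantitative bound
  suffices h2ε : ∀ ε : ℝ, 0 < ε → ε ≤ 1/2 → (P W).toReal ≤ 2 * ε by
    have hWfin : P W ≠ ⊤ := measure_ne_top P W
    have hr : (P W).toReal = 0 := by
      by_contra hr0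
      have hrpos : 0 < (P W).toReal := lt_of_le_of_ne ENNReal.toReal_nonneg (Ne.symm hr0)
      have h := h2ε (min ((P W).toReal/4) (1/2)) (by positivity) (min_le_right _ _)
      have h2 : (P W).toReal ≤ 2 * ((P W).toReal/4) :=
        le_trans h (by gcongr; exact min_le_left _ _)
      linarith
    simpa [ENNReal.toReal_eq_zero_iff, hWfin] using hr
  intro ε hε hε2
  have hEc : MeasurableSet Eᶜ := hE.compl
  have hEchalf : P Eᶜ = 1/2 := by
    rw [measure_compl hE (measure_ne_top P E), hEhalf, measure_univ]
    rw [ENNReal.eq_div_iff (by norm_num) (by norm_num), ENNReal.mul_sub (by norm_num)]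
    norm_num
    rw [ENNReal.mul_inv_cancel (by norm_num) (by norm_num), ← one_add_one_eq_two,
      ENNReal.add_sub_cancel_right (by norm_num)]
  have hEne : P E ≠ 0 := by rw [hEhalf]; norm_num
  have hEcne : P Eᶜ ≠ 0 := by rw [hEchalf]; norm_num
  haveI hnu : IsProbabilityMeasure (P[|E]) := cond_isProbabilityMeasure hEne
  haveI hnu' : IsProbabilityMeasure (P[|Eᶜ]) := cond_isProbabilityMeasure hEcne
  have hcondE : ∀ t : Set Ω, (P[|E]) t = 2 * P (E ∩ t) := by
    intro t; rw [cond_apply hE, hEhalf]; norm_num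
  have hcondEc : ∀ t : Set Ω, (P[|Eᶜ]) t = 2 * P (Eᶜ ∩ t) := by
    intro t; rw [cond_apply hEc, hEchalf]; norm_num
  have hEint : ∀ t : Set Ω, P (E ∩ t) = 2⁻¹ * (P[|E]) t := by
    intro t
    rw [hcondE, ← mul_assoc, ENNReal.inv_mul_cancel (by norm_num) (by norm_num), one_mul]
  have hEcint : ∀ t : Set Ω, P (Eᶜ ∩ t) = 2⁻¹ * (P[|Eᶜ]) t := by
    intro t
    rw [hcondEc, ← mul_assoc, ENNReal.inv_mul_cancel (by norm_num) (by norm_num), one_mul]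
  have hPsplit : ∀ t : Set Ω, MeasurableSet t →
      P t = 2⁻¹ * (P[|E]) t + 2⁻¹ * (P[|Eᶜ]) t := by
    intro t ht
    rw [← hEint, ← hEcint, Set.inter_comm E t, Set.inter_comm Eᶜ t, ← Set.diff_eq,
      measure_inter_add_diff t hE]
  set μ1 := (P[|E]).map (X 0) with hμ1def
  set μ0 := (P[|Eᶜ]).map (X 0) with hμ0def
  set μ := P.map (X 0) with hμdef
  haveI : IsProbabilityMeasure μ1 := Measure.isProbabilityMeasure_map (hX 0).aemeasurable
  haveI : IsProbabilityMeasure μ0 := Measure.isProbabilityMeasure_map (hX 0).aemeasurable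
  haveI : IsProbabilityMeasure μ := Measure.isProbabilityMeasure_map (hX 0).aemeasurable
  have hpre : ∀ (i) (T : Set α), MeasurableSet T →
      P (X i ⁻¹' T) = 2⁻¹ * μ1 T + 2⁻¹ * μ0 T := by
    intro i T hT
    rw [hPsplit _ ((hX i) hT), ← Measure.map_apply (hX i) hT, ← Measure.map_apply (hX i) hT,
      hid i, hid' i]
  have hEpre : ∀ (i) (T : Set α), MeasurableSet T → P (E ∩ X i ⁻¹' T) = 2⁻¹ * μ1 T := by
    intro i T hT; rw [hEint, ← Measure.map_apply (hX i) hT, hid i]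
  have hEcpre : ∀ (i) (T : Set α), MeasurableSet T → P (Eᶜ ∩ X i ⁻¹' T) = 2⁻¹ * μ0 T := by
    intro i T hT; rw [hEcint, ← Measure.map_apply (hX i) hT, hid' i]
  have hμeq : ∀ T : Set α, MeasurableSet T → μ T = 2⁻¹ * μ1 T + 2⁻¹ * μ0 T := by
    intro T hT; rw [hμdef, Measure.map_apply (hX 0) hT]; exact hpre 0 T hT
  have hac : μ1 ≪ μ := by
    refine Measure.AbsolutelyContinuous.mk fun T hT h0 => ?_
    have h1 := hμeq T hT
    rw [h0] at h1
    have h2 : 2⁻¹ * μ1 T = 0 := by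
      have := add_eq_zero_iff_of_nonneg (zero_le) (zero_le) |>.mp h1.symm
      exact this.1
    simpa [mul_eq_zero] using h2
  set g : α → ℝ := fun a => (μ1.rnDeriv μ a).toReal / 2 with hgdef
  have hg : Measurable g := (Measure.measurable_rnDeriv μ1 μ).ennreal_toReal.div_const 2
  have hgnn : ∀ a, 0 ≤ g a := fun a => by positivity
  have hgint : Integrable g μ := (Measure.integrable_toReal_rnDeriv).div_const 2
  have hgsetint : ∀ T : Set α, MeasurableSet T → ∫ a in T, g a ∂μ = (μ1 T).toReal / 2 := by
    intro T hT
    simp only [hgdef]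
    rw [integral_div, Measure.setIntegral_toReal_rnDeriv hac T]
    rfl
  set f : Ω → ℝ := E.indicator (fun _ => (1:ℝ)) with hfdef
  have hfint : Integrable f P := (integrable_const (1:ℝ)).indicator hE
  have hsetf : ∀ t : Set Ω, MeasurableSet t → ∫ ω in t, f ω ∂P = (P (E ∩ t)).toReal := by
    intro t ht
    rw [hfdef]
    rw [setIntegral_indicator hE]
    rw [setIntegral_const, Set.inter_comm t E]
    simp
    rfl
  have hcomap0 : MeasurableSpace.comap (X 0) mα ≤ m0 := (hXF 0).trans (hFle 0)
  have hB0 : (fun ω => g (X 0 ω)) =ᵐ[P] P[f | MeasurableSpace.comap (X 0) mα] := by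
    have hXc : Measurable[MeasurableSpace.comap (X 0) mα] (X 0) :=
      fun s hs => ⟨s, hs, rfl⟩
    have hgX0meas : Measurable[MeasurableSpace.comap (X 0) mα] (fun ω => g (X 0 ω)) :=
      hg.comp hXc
    have hgX0int : Integrable (fun ω => g (X 0 ω)) P := by
      have := (integrable_map_measure hg.aestronglyMeasurable (hX 0).aemeasurable).mp
        (by rw [← hμdef]; exact hgint)
      exact this
    refine ae_eq_condExp_of_forall_setIntegral_eq hcomap0 hfint
      (fun s _ _ => hgX0int.integrableOn) (fun s hs _ => ?_) ?_
    · obtain ⟨T, hT, rfl⟩ := hs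
      have h1 : ∫ ω in X 0 ⁻¹' T, g (X 0 ω) ∂P = ∫ a in T, g a ∂μ := by
        rw [hμdef, setIntegral_map hT hg.aestronglyMeasurable (hX 0).aemeasurable]
      rw [h1, hgsetint T hT, hsetf _ ((hX 0) hT), hEpre 0 T hT]
      rw [ENNReal.toReal_mul]
      norm_num
      ring
    · exact StronglyMeasurable.aestronglyMeasurable (Measurable.stronglyMeasurable hgX0meas)
  set T : Set α := {a | 1 - ε < g a} with hTdef
  have hT : MeasurableSet T := measurableSet_lt measurable_const hg
  set D : ℕ → Set Ω := fun i => X i ⁻¹' T with hDdef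
  have hD : ∀ i, MeasurableSet (D i) := fun i => (hX i) hT
  have hDF : ∀ i, MeasurableSet[F i] (D i) := fun i => hXF i (D i) ⟨T, hT, rfl⟩
  set pR := (μ1 T).toReal with hpRdef
  set qR := (μ T).toReal with hqRdef
  set p0R := (μ0 T).toReal with hp0Rdef
  have hpR0 : 0 ≤ pR := ENNReal.toReal_nonneg
  have hqR0 : 0 ≤ qR := ENNReal.toReal_nonneg
  have hp0R0 : 0 ≤ p0R := ENNReal.toReal_nonneg
  have hqsplit : qR = pR/2 + p0R/2 := by
    rw [hqRdef, hμeq T hT, ENNReal.toReal_add (by finiteness) (by finiteness),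
      ENNReal.toReal_mul, ENNReal.toReal_mul, ENNReal.toReal_inv]
    norm_num
    ring
  have hDq : ∀ i, P (D i) = μ T := by
    intro i; rw [show D i = X i ⁻¹' T from rfl, hpre i T hT, ← hμeq T hT]
  have hlow : (1-ε) * qR ≤ pR/2 := by
    have h1 : ∫ _ in T, (1-ε) ∂μ ≤ ∫ a in T, g a ∂μ := by
      refine setIntegral_mono_on
        (integrableOn_const (measure_lt_top μ T).ne) hgint.integrableOn hT ?_
      intro a ha; exact le_of_lt ha
    rw [setIntegral_const, hgsetint T hT] at h1
    simpa [smul_eq_mul, mul_comm, Measure.real] using h1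
  have hq_pos : 0 < qR := by
    have h1 : 0 < P {ω | 1 - ε < (P[f | MeasurableSpace.comap (X 0) mα]) ω} := hpos ε hε
    have hsub : {ω | 1 - ε < (P[f | MeasurableSpace.comap (X 0) mα]) ω} ⊆
        D 0 ∪ {ω | ¬ g (X 0 ω) = (P[f | MeasurableSpace.comap (X 0) mα]) ω} := by
      intro ω hω
      by_cases h : g (X 0 ω) = (P[f | MeasurableSpace.comap (X 0) mα]) ω
      · left; show 1 - ε < g (X 0 ω); rw [h]; exact hω
      · right; exact h
    have hnull : P {ω | ¬ g (X 0 ω) = (P[f | MeasurableSpace.comap (X 0) mα]) ω} = 0 :=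
      ae_iff.mp hB0
    have hne : P (D 0) ≠ 0 := by
      intro h0
      have h2 : P {ω | 1 - ε < (P[f | MeasurableSpace.comap (X 0) mα]) ω} ≤
          P (D 0) + P {ω | ¬ g (X 0 ω) = (P[f | MeasurableSpace.comap (X 0) mα]) ω} :=
        le_trans (measure_mono hsub) (measure_union_le _ _)
      rw [h0, hnull, add_zero] at h2
      exact absurd (le_antisymm h2 (zero_le)) (ne_of_gt h1)
    rw [hDq 0] at hne
    exact ENNReal.toReal_pos hne (measure_ne_top μ T)
  have hhalf_le : (1/2 : ℝ) ≤ 1 - ε := by linarith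
  have hp_half : 0 < pR/2 := lt_of_lt_of_le (by nlinarith) hlow
  have hppos : 0 < pR := by linarith
  have hp0le : p0R/2 ≤ ε * qR := by nlinarith
  have hqlep : qR ≤ pR := by nlinarith
  have key : ∀ i, (P (D i ∩ bad i)).toReal ≤ 2 * (ε * qR) := by
    intro i
    set C := D i ∩ bad i with hCdef
    have hCF : MeasurableSet[F i] C := (hDF i).inter (hbad i)
    have hC : MeasurableSet C := hFle i C hCF
    have h1 : ∫ ω in C, (P[f | F i]) ω ∂P = (P (E ∩ C)).toReal := by
      rw [setIntegral_condExp (hFle i) hfint hCF, hsetf C hC]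
    have h3 : ∫ ω in C, (P[f | F i]) ω ∂P ≤ ∫ _ in C, (1/2 : ℝ) ∂P := by
      refine setIntegral_mono_ae_restrict integrable_condExp.integrableOn
        (integrableOn_const (measure_lt_top P C).ne) ?_
      have h4 := ae_restrict_of_ae (μ := P) (s := C) (hbadle i)
      filter_upwards [h4, ae_restrict_mem hC] with ω hω hmem
      exact hω hmem.2
    rw [setIntegral_const, smul_eq_mul] at h3
    have h5 : P C = P (E ∩ C) + P (Eᶜ ∩ C) := by
      rw [Set.inter_comm E C, Set.inter_comm Eᶜ C, ← Set.diff_eq]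
      exact (measure_inter_add_diff C hE).symm
    have h6 : P (Eᶜ ∩ C) ≤ 2⁻¹ * μ0 T := by
      rw [← hEcpre i T hT]
      exact measure_mono (Set.inter_subset_inter_right _ Set.inter_subset_left)
    have h6R : (P (Eᶜ ∩ C)).toReal ≤ p0R/2 := by
      have h6' := ENNReal.toReal_mono (by finiteness) h6
      rw [ENNReal.toReal_mul, ENNReal.toReal_inv] at h6'
      norm_num at h6' ⊢
      linarith [h6']
    have h5R : (P C).toReal = (P (E ∩ C)).toReal + (P (Eᶜ ∩ C)).toReal := by
      rw [h5, ENNReal.toReal_add (by finiteness) (by finiteness)]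
    have h7 : (P (E ∩ C)).toReal ≤ (P C).toReal * (1/2) := by rw [← h1]; exact h3
    nlinarith [hp0le]
  set Y : ℕ → Ω → ℝ := fun i ω => (D i).indicator (fun _ => (1:ℝ)) ω with hYdef
  set φ : α → ℝ := T.indicator (fun _ => (1:ℝ)) with hφdef
  have hφm : Measurable φ := measurable_const.indicator hT
  have hYeq : ∀ i, Y i = φ ∘ X i := by
    intro i
    funext ω
    simp only [hYdef, hφdef, Function.comp_apply, Set.indicator_apply]
    rfl
  have hYindep : Pairwise (Function.onFun (IndepFun · · (P[|E])) Y) := by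
    intro i j hij
    have h := (hindep.indepFun hij).comp hφm hφm
    simpa [Function.onFun, hYeq i, hYeq j] using h
  have hYident : ∀ i, IdentDistrib (Y i) (Y 0) (P[|E]) (P[|E]) := by
    intro i
    rw [hYeq i, hYeq 0]
    exact IdentDistrib.comp ⟨(hX i).aemeasurable, (hX 0).aemeasurable, by rw [hid i]⟩ hφm
  have hYint : Integrable (Y 0) (P[|E]) := (integrable_const (1:ℝ)).indicator (hD 0)
  have hYmean : ∫ ω, Y 0 ω ∂(P[|E]) = pR := by
    have : ∫ ω, Y 0 ω ∂(P[|E]) = ((P[|E]) (D 0)).toReal • (1:ℝ) :=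
      integral_indicator_const (1:ℝ) (hD 0)
    rw [this, smul_eq_mul, mul_one, hpRdef, hμ1def, Measure.map_apply (hX 0) hT]
  have hSLLN0 := strong_law_ae Y hYint hYindep hYident
  rw [hYmean] at hSLLN0
  have hres : P.restrict E ≪ P[|E] := by
    refine Measure.AbsolutelyContinuous.mk fun t ht h0 => ?_
    rw [hcondE] at h0
    rw [Measure.restrict_apply ht, Set.inter_comm]
    simpa using h0
  have hSLLN1 : ∀ᵐ ω ∂P, ω ∈ E →
      Tendsto (fun n : ℕ => (n : ℝ)⁻¹ • ∑ i ∈ Finset.range n, Y i ω) atTop (𝓝 pR) :=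
    ae_imp_of_ae_restrict (hSLLN0.filter_mono hres.ae_le)
  have hSLLN2 : ∀ᵐ ω ∂P, ω ∈ E →
      Tendsto (fun n : ℕ => (∑ i ∈ Finset.range (n+1), Y i ω) / (n+1)) atTop (𝓝 pR) := by
    filter_upwards [hSLLN1] with ω hω hmem
    have h := (hω hmem).comp (tendsto_add_atTop_nat 1)
    have heq : (fun n : ℕ => (∑ i ∈ Finset.range (n+1), Y i ω) / ((n:ℝ)+1)) =
        (fun n : ℕ => ((n:ℝ))⁻¹ • ∑ i ∈ Finset.range n, Y i ω) ∘ (fun n => n + 1) := by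
      funext n
      simp only [Function.comp_apply, smul_eq_mul, Nat.cast_add, Nat.cast_one]
      rw [div_eq_inv_mul]
    rw [show (fun n : ℕ => (∑ i ∈ Finset.range (n+1), Y i ω) / ((n:ℝ)+1)) =
        (fun n : ℕ => ((n:ℝ))⁻¹ • ∑ i ∈ Finset.range n, Y i ω) ∘ (fun n => n + 1) from heq]
    exact h
  set ψ : ℕ → Ω → ℝ := fun n ω =>
    (∑ i ∈ Finset.range (n+1), (D i ∩ bad i).indicator (fun _ => (1:ℝ)) ω) / (n+1) with hψdef
  have hCmeas : ∀ i, MeasurableSet (D i ∩ bad i) := fun i => hFle i _ ((hDF i).inter (hbad i))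
  have hψmeas : ∀ n, Measurable (ψ n) := by
    intro n
    exact (Finset.measurable_sum _ (fun i _ => measurable_const.indicator (hCmeas i))).div_const _
  have hψnn : ∀ n ω, 0 ≤ ψ n ω := by
    intro n ω
    apply div_nonneg _ (by positivity)
    exact Finset.sum_nonneg fun i _ => Set.indicator_nonneg (fun _ _ => zero_le_one) ω
  have hψle1 : ∀ n ω, ψ n ω ≤ 1 := by
    intro n ω
    rw [hψdef]
    simp only
    rw [div_le_one (by positivity)]
    calc ∑ i ∈ Finset.range (n+1), (D i ∩ bad i).indicator (fun _ => (1:ℝ)) ω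
        ≤ ∑ _i ∈ Finset.range (n+1), (1:ℝ) := Finset.sum_le_sum fun i _ =>
          Set.indicator_apply_le' (fun _ => le_refl 1) (fun _ => zero_le_one)
      _ = ((n:ℝ)+1) := by simp
  have hψlim : ∀ᵐ ω ∂P, ω ∈ W → Tendsto (fun n => ψ n ω) atTop (𝓝 pR) := by
    filter_upwards [hSLLN2, hWfrac] with ω hSY hbf hmem
    have h1 := hSY (hWE hmem)
    have h2 := hbf hmem
    have hup : ∀ n : ℕ, ψ n ω ≤ (∑ i ∈ Finset.range (n+1), Y i ω) / (n+1) := by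
      intro n
      simp only [hψdef]
      rw [div_le_div_iff_of_pos_right (by positivity)]
      apply Finset.sum_le_sum
      intro i _
      by_cases hd : ω ∈ D i <;> by_cases hb : ω ∈ bad i <;>
        simp [hYdef, Set.indicator_apply, hd, hb]
    have hlo : ∀ n : ℕ, (∑ i ∈ Finset.range (n+1), Y i ω) / (n+1)
        - (∑ i ∈ Finset.range (n+1), ((bad i)ᶜ.indicator (fun _ => (1:ℝ)) ω)) / (n+1)
        ≤ ψ n ω := by
      intro n
      simp only [hψdef]
      rw [div_sub_div_same, div_le_div_iff_of_pos_right (by positivity)]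
      rw [← Finset.sum_sub_distrib]
      apply Finset.sum_le_sum
      intro i _
      by_cases hd : ω ∈ D i <;> by_cases hb : ω ∈ bad i <;>
        simp [hYdef, Set.indicator_apply, hd, hb]
    exact tendsto_of_tendsto_of_tendsto_of_le_of_le (by simpa using h1.sub h2) h1 hlo hup
  set Fn : ℕ → Ω → ℝ := fun n => W.indicator (ψ n) with hFndef
  have hFn_lim : ∀ᵐ ω ∂P, Tendsto (fun n => Fn n ω) atTop (𝓝 (W.indicator (fun _ => pR) ω)) := by
    filter_upwards [hψlim] with ω hω
    by_cases hmem : ω ∈ W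
    · simpa [hFndef, Set.indicator_of_mem hmem] using hω hmem
    · simp only [hFndef, Set.indicator_of_notMem hmem]
      exact tendsto_const_nhds
  have hDCT := tendsto_integral_of_dominated_convergence (F := Fn) (fun _ => (1:ℝ))
      (fun n => ((hψmeas n).indicator hW).aestronglyMeasurable)
      (integrable_const 1)
      (fun n => Eventually.of_forall fun ω => by
        by_cases hmem : ω ∈ W
        · simp only [hFndef, Set.indicator_of_mem hmem, Real.norm_eq_abs,
            abs_of_nonneg (hψnn n ω)]
          exact hψle1 n ω
        · simp [hFndef, Set.indicator_of_notMem hmem])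
      hFn_lim
  have hlim_val : ∫ ω, W.indicator (fun _ => pR) ω ∂P = (P W).toReal * pR := by
    rw [integral_indicator_const _ hW, smul_eq_mul]
    rfl
  have hub : ∀ n, ∫ ω, Fn n ω ∂P ≤ 2 * (ε * qR) := by
    intro n
    have hint : Integrable (ψ n) P :=
      (integrable_finset_sum _ fun i _ => (integrable_const (1:ℝ)).indicator (hCmeas i)).div_const _
    have h1 : ∫ ω, Fn n ω ∂P = ∫ ω in W, ψ n ω ∂P := integral_indicator hW
    have h2 : ∫ ω in W, ψ n ω ∂P ≤ ∫ ω, ψ n ω ∂P :=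
      setIntegral_le_integral hint (Eventually.of_forall fun ω => hψnn n ω)
    have h3 : ∫ ω, ψ n ω ∂P
        = (∑ i ∈ Finset.range (n+1), (P (D i ∩ bad i)).toReal) / (n+1) := by
      rw [hψdef]
      simp only
      rw [integral_div,
        integral_finset_sum _ (fun i _ => (integrable_const (1:ℝ)).indicator (hCmeas i))]
      congr 1
      refine Finset.sum_congr rfl fun i _ => ?_
      rw [integral_indicator_const _ (hCmeas i), smul_eq_mul, mul_one]
      rfl
    have h4 : (∑ i ∈ Finset.range (n+1), (P (D i ∩ bad i)).toReal) / (n+1) ≤ 2*(ε*qR) := by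
      rw [div_le_iff₀ (by positivity)]
      calc ∑ i ∈ Finset.range (n+1), (P (D i ∩ bad i)).toReal
          ≤ ∑ _i ∈ Finset.range (n+1), 2*(ε*qR) := Finset.sum_le_sum fun i _ => key i
        _ = 2*(ε*qR) * ((n:ℝ)+1) := by simp [mul_comm]
    linarith
  have hfinal : (P W).toReal * pR ≤ 2 * (ε * qR) := by
    rw [← hlim_val]
    exact le_of_tendsto' hDCT hub
  nlinarith [hfinal, hqlep, hppos, hε, ENNReal.toReal_nonneg (a := P W)]

set_option maxHeartbeats 1000000 in

/-- **Mossel–Sly–Tamuz: agreement on actions implies learning (unbounded beliefs).**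
Let `S ∈ {0,1}` with `P(S=1) = 1/2`, and let `X₁, X₂, …` be countably many signals that are
i.i.d. conditioned on `S` and have unbounded private beliefs.  Let `Fᵢ ⊇ σ(Xᵢ)` be
sub-σ-algebras of `σ(X₁, X₂, …)`, let `Bᵢ = P(S=1 | Fᵢ)` and let `Aᵢ = 1` iff `Bᵢ ≥ 1/2`.
If there is a random variable `A` such that almost surely the fraction of the first `n` agents
with `Aᵢ ≠ A` tends to `0` (its `limsup` is `0`), then `P(A = S) = 1`. -/
theorem agreement_on_actions_implies_learning
    {Ω : Type*} [m0 : MeasurableSpace Ω] (P : Measure Ω) [IsProbabilityMeasure P]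
    {E : Type*} [mE : MeasurableSpace E] [StandardBorelSpace E]
    (S : Ω → Bool) (hS : Measurable S) (hShalf : P {ω | S ω = true} = 1 / 2)
    (X : ℕ → Ω → E) (hX : ∀ i, Measurable (X i))
    -- conditioned on `S`, the signals are independent …
    (hcondind : ∀ s : Bool, iIndepFun X (P[|{ω | S ω = s}]))
    -- … and identically distributed
    (hcondid : ∀ (s : Bool) (i : ℕ),
      (P[|{ω | S ω = s}]).map (X i) = (P[|{ω | S ω = s}]).map (X 0))
    -- unbounded private beliefs: `B₀ⁱ = P(S=1 | Xᵢ)` gets arbitrarily close to `0` and `1`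
    (hunbounded : ∀ (i : ℕ) (ε : ℝ), 0 < ε →
      0 < P {ω | (P[(fun ω' => if S ω' = true then (1 : ℝ) else 0) |
            MeasurableSpace.comap (X i) mE]) ω < ε} ∧
      0 < P {ω | 1 - ε < (P[(fun ω' => if S ω' = true then (1 : ℝ) else 0) |
            MeasurableSpace.comap (X i) mE]) ω})
    (F : ℕ → MeasurableSpace Ω)
    (hFle : ∀ i, F i ≤ m0)
    (hXF : ∀ i, MeasurableSpace.comap (X i) mE ≤ F i)
    (hFX : ∀ i, F i ≤ MeasurableSpace.comap (fun ω (i : ℕ) => X i ω) MeasurableSpace.pi)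
    (A : ℕ → Ω → Bool)
    (hA : ∀ i ω, A i ω =
      if 1 / 2 ≤ (P[(fun ω' => if S ω' = true then (1 : ℝ) else 0) | F i]) ω
      then true else false)
    (Alim : Ω → Bool)
    (hagree : ∀ᵐ ω ∂P,
      limsup (fun n : ℕ =>
          (((Finset.range (n + 1)).filter (fun i => A i ω ≠ Alim ω)).card : ℝ) / n)
        atTop = 0) :
    P {ω | Alim ω = S ω} = 1 := by
  classical
  -- the two states of the world
  set Et : Set Ω := {ω | S ω = true} with hEtdef
  set Ef : Set Ω := {ω | S ω = false} with hEfdef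
  have hEt : MeasurableSet Et := hS (measurableSet_singleton true)
  have hEf : MeasurableSet Ef := hS (measurableSet_singleton false)
  have hEfc : Ef = Etᶜ := by
    ext ω; simp [hEtdef, hEfdef, Bool.not_eq_true]
  -- indicator form of the belief function
  have hf_ind : (fun ω' => if S ω' = true then (1 : ℝ) else 0)
      = Et.indicator (fun _ => (1:ℝ)) := by
    funext ω
    by_cases h : S ω = true <;> simp [Set.indicator_apply, hEtdef, h]
  have hff_ind : (Ef.indicator (fun _ => (1:ℝ)))
      = (fun ω => (fun _ => (1:ℝ)) ω - Et.indicator (fun _ => (1:ℝ)) ω) := by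
    funext ω
    rcases Bool.eq_false_or_eq_true (S ω) with h | h <;>
      simp [Set.indicator_apply, hEtdef, hEfdef, h]
  have hEthalf : P Et = 1/2 := hShalf
  have hEfhalf : P Ef = 1/2 := by
    rw [hEfc, measure_compl hEt (measure_ne_top P Et), hEthalf, measure_univ]
    rw [ENNReal.eq_div_iff (by norm_num) (by norm_num), ENNReal.mul_sub (by norm_num)]
    norm_num
    rw [ENNReal.mul_inv_cancel (by norm_num) (by norm_num), ← one_add_one_eq_two,
      ENNReal.add_sub_cancel_right (by norm_num)]
  have hEtint : Integrable (Et.indicator (fun _ => (1:ℝ))) P :=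
    (integrable_const (1:ℝ)).indicator hEt
  have hcond_sub : ∀ (m : MeasurableSpace Ω), m ≤ m0 →
      (P[Ef.indicator (fun _ => (1:ℝ)) | m]) =ᵐ[P]
      fun ω => 1 - (P[Et.indicator (fun _ => (1:ℝ)) | m]) ω := by
    intro m hm
    rw [hff_ind]
    have h2 : P[(fun _ => (1:ℝ)) - Et.indicator (fun _ => (1:ℝ)) | m] =ᵐ[P]
        P[(fun _ => (1:ℝ)) | m] - P[Et.indicator (fun _ => (1:ℝ)) | m] :=
      condExp_sub (integrable_const (1:ℝ)) hEtint m
    have h3 : P[(fun _ => (1:ℝ)) | m] = fun _ => (1:ℝ) := condExp_const hm 1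
    refine Filter.EventuallyEq.trans (by exact h2) ?_
    rw [h3]
    exact Eventually.of_forall fun ω => rfl
  set B : ℕ → Ω → ℝ := fun i => P[Et.indicator (fun _ => (1:ℝ)) | F i] with hBdef
  have hAiff : ∀ i ω, (A i ω = false ↔ ¬ ((1:ℝ)/2 ≤ B i ω)) ∧
      (A i ω = true ↔ (1:ℝ)/2 ≤ B i ω) := by
    intro i ω
    have h := hA i ω
    rw [hf_ind] at h
    rw [h]
    by_cases hc : (1:ℝ)/2 ≤ B i ω <;> simp [hc, hBdef]
  set badt : ℕ → Set Ω := fun i => {ω | A i ω = false} with hbadtdef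
  set badf : ℕ → Set Ω := fun i => {ω | A i ω = true} with hbadfdef
  have hBm : ∀ i, Measurable[F i] (B i) := fun i => stronglyMeasurable_condExp.measurable
  have hbadfm : ∀ i, MeasurableSet[F i] (badf i) := by
    intro i
    have he : badf i = {ω | (1:ℝ)/2 ≤ B i ω} := Set.ext fun ω => (hAiff i ω).2
    rw [he]
    exact measurableSet_le measurable_const (hBm i)
  have hbadtm : ∀ i, MeasurableSet[F i] (badt i) := by
    intro i
    have he : badt i = (badf i)ᶜ := by
      ext ω
      simp only [hbadtdef, hbadfdef, Set.mem_compl_iff, Set.mem_setOf_eq,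
        Bool.not_eq_true]
    rw [he]
    exact (hbadfm i).compl
  have hbadtle : ∀ i, ∀ᵐ ω ∂P, ω ∈ badt i →
      (P[Et.indicator (fun _ => (1:ℝ)) | F i]) ω ≤ 1/2 := by
    intro i
    refine Eventually.of_forall fun ω hω => ?_
    have := (hAiff i ω).1.mp hω
    exact (not_le.mp this).le
  have hbadfle : ∀ i, ∀ᵐ ω ∂P, ω ∈ badf i →
      (P[Ef.indicator (fun _ => (1:ℝ)) | F i]) ω ≤ 1/2 := by
    intro i
    filter_upwards [hcond_sub (F i) (hFle i)] with ω hsub hω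
    rw [hsub]
    have := (hAiff i ω).2.mp hω
    linarith
  have hpost : ∀ ε : ℝ, 0 < ε →
      0 < P {ω | 1 - ε <
        (P[Et.indicator (fun _ => (1:ℝ)) | MeasurableSpace.comap (X 0) mE]) ω} := by
    intro ε hε
    have h := (hunbounded 0 ε hε).2
    rw [hf_ind] at h
    exact h
  have hposf : ∀ ε : ℝ, 0 < ε →
      0 < P {ω | 1 - ε <
        (P[Ef.indicator (fun _ => (1:ℝ)) | MeasurableSpace.comap (X 0) mE]) ω} := by
    intro ε hε
    have h := (hunbounded 0 ε hε).1
    rw [hf_ind] at h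
    have hsub := hcond_sub (MeasurableSpace.comap (X 0) mE) ((hXF 0).trans (hFle 0))
    have hnull : P {ω | ¬ (P[Ef.indicator (fun _ => (1:ℝ)) | MeasurableSpace.comap (X 0) mE]) ω
        = 1 - (P[Et.indicator (fun _ => (1:ℝ)) | MeasurableSpace.comap (X 0) mE]) ω} = 0 :=
      ae_iff.mp hsub
    have hss : {ω | (P[Et.indicator (fun _ => (1:ℝ)) | MeasurableSpace.comap (X 0) mE]) ω < ε} ⊆
        {ω | 1 - ε <
          (P[Ef.indicator (fun _ => (1:ℝ)) | MeasurableSpace.comap (X 0) mE]) ω} ∪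
        {ω | ¬ (P[Ef.indicator (fun _ => (1:ℝ)) | MeasurableSpace.comap (X 0) mE]) ω
          = 1 - (P[Et.indicator (fun _ => (1:ℝ)) | MeasurableSpace.comap (X 0) mE]) ω} := by
      intro ω hω
      by_cases hc : (P[Ef.indicator (fun _ => (1:ℝ)) | MeasurableSpace.comap (X 0) mE]) ω
          = 1 - (P[Et.indicator (fun _ => (1:ℝ)) | MeasurableSpace.comap (X 0) mE]) ω
      · left
        have hlt : (P[Et.indicator (fun _ => (1:ℝ)) | MeasurableSpace.comap (X 0) mE]) ω < ε := hω
        simp only [Set.mem_setOf_eq, hc]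
        linarith
      · right; exact hc
    by_contra hcon
    push_neg at hcon
    have hz : P {ω | 1 - ε <
        (P[Ef.indicator (fun _ => (1:ℝ)) | MeasurableSpace.comap (X 0) mE]) ω} = 0 :=
      le_antisymm hcon (zero_le)
    have h2 : P {ω | (P[Et.indicator (fun _ => (1:ℝ)) |
          MeasurableSpace.comap (X 0) mE]) ω < ε} ≤
        P {ω | 1 - ε <
          (P[Ef.indicator (fun _ => (1:ℝ)) | MeasurableSpace.comap (X 0) mE]) ω} +
        P {ω | ¬ (P[Ef.indicator (fun _ => (1:ℝ)) | MeasurableSpace.comap (X 0) mE]) ω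
          = 1 - (P[Et.indicator (fun _ => (1:ℝ)) | MeasurableSpace.comap (X 0) mE]) ω} :=
      le_trans (measure_mono hss) (measure_union_le _ _)
    rw [hz, hnull, add_zero] at h2
    exact absurd (le_antisymm h2 (zero_le)) (ne_of_gt h)
  have hbadtm0 : ∀ i, MeasurableSet (badt i) := fun i => hFle i _ (hbadtm i)
  have hbadfm0 : ∀ i, MeasurableSet (badf i) := fun i => hFle i _ (hbadfm i)
  set Wt : Set Ω := Et ∩ {ω | Tendsto (fun n : ℕ =>
      (∑ i ∈ Finset.range (n+1), ((badt i)ᶜ.indicator (fun _ => (1:ℝ)) ω)) / (n+1))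
      atTop (𝓝 0)} with hWtdef
  set Wf : Set Ω := Ef ∩ {ω | Tendsto (fun n : ℕ =>
      (∑ i ∈ Finset.range (n+1), ((badf i)ᶜ.indicator (fun _ => (1:ℝ)) ω)) / (n+1))
      atTop (𝓝 0)} with hWfdef
  have hWtmeas : MeasurableSet Wt := by
    refine hEt.inter (measurableSet_tendsto (𝓝 0) fun n => ?_)
    exact (Finset.measurable_sum _ fun i _ =>
      measurable_const.indicator (hbadtm0 i).compl).div_const _
  have hWfmeas : MeasurableSet Wf := by
    refine hEf.inter (measurableSet_tendsto (𝓝 0) fun n => ?_)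
    exact (Finset.measurable_sum _ fun i _ =>
      measurable_const.indicator (hbadfm0 i).compl).div_const _
  have hWt0 : P Wt = 0 := by
    refine MST_case_lemma P X hX Et hEt hEthalf (hcondind true) (fun i => hcondid true i)
      (fun i => ?_) F hFle hXF badt hbadtm hbadtle hpost Wt hWtmeas Set.inter_subset_left
      (Eventually.of_forall fun ω hω => hω.2)
    have hc : Etᶜ = Ef := hEfc.symm
    rw [hc]
    exact hcondid false i
  have hWf0 : P Wf = 0 := by
    refine MST_case_lemma P X hX Ef hEf hEfhalf (hcondind false) (fun i => hcondid false i)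
      (fun i => ?_) F hFle hXF badf hbadfm hbadfle hposf Wf hWfmeas Set.inter_subset_left
      (Eventually.of_forall fun ω hω => hω.2)
    have hc : Efᶜ = Et := by rw [hEfc, compl_compl]
    rw [hc]
    exact hcondid true i
  have hkey : ∀ᵐ ω ∂P, ¬ Alim ω = S ω → ω ∈ Wt ∪ Wf := by
    filter_upwards [hagree] with ω hlim hne
    have hu0 : ∀ n : ℕ, 0 ≤
        (((Finset.range (n + 1)).filter (fun i => A i ω ≠ Alim ω)).card : ℝ) / n :=
      fun n => by positivity
    have hu2 : ∀ n : ℕ,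
        (((Finset.range (n + 1)).filter (fun i => A i ω ≠ Alim ω)).card : ℝ) / n ≤ 2 := by
      intro n
      rcases Nat.eq_zero_or_pos n with h | h
      · subst h; simp
      · have hcard : (((Finset.range (n + 1)).filter
            (fun i => A i ω ≠ Alim ω)).card : ℝ) ≤ (n : ℝ) + 1 := by
          have h2 := Finset.card_filter_le (Finset.range (n+1)) (fun i => A i ω ≠ Alim ω)
          rw [Finset.card_range] at h2
          exact_mod_cast h2
        have hn1 : (1:ℝ) ≤ (n:ℝ) := by exact_mod_cast h
        rw [div_le_iff₀ (by linarith)]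
        nlinarith
    have hu := MST_tendsto_of_limsup_eq_zero hu0 hu2 hlim
    have hv : Tendsto (fun n : ℕ =>
        (((Finset.range (n + 1)).filter (fun i => A i ω ≠ Alim ω)).card : ℝ) / (n+1))
        atTop (𝓝 0) := by
      refine squeeze_zero' (Eventually.of_forall fun n => by positivity) ?_ hu
      refine eventually_atTop.mpr ⟨1, fun n hn => ?_⟩
      have hn1 : (1:ℝ) ≤ (n:ℝ) := by exact_mod_cast hn
      refine div_le_div_of_nonneg_left (by positivity) (by linarith) (by linarith)
    rcases Bool.eq_false_or_eq_true (S ω) with hs | hs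
    · -- S ω = true, so Alim ω = false and ω ∈ Wt
      have hAl : Alim ω = false := by
        cases hAv : Alim ω
        · rfl
        · exact absurd (by rw [hAv, hs]) hne
      left
      refine ⟨hs, ?_⟩
      have heq : ∀ n : ℕ, (∑ i ∈ Finset.range (n+1), ((badt i)ᶜ.indicator (fun _ => (1:ℝ)) ω))
          = (((Finset.range (n + 1)).filter (fun i => A i ω ≠ Alim ω)).card : ℝ) := by
        intro n
        rw [Finset.card_filter]
        push_cast
        refine Finset.sum_congr rfl fun i _ => ?_
        by_cases h : A i ω = false <;>
          simp [Set.indicator_apply, hbadtdef, h, hAl]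
      have hfun : (fun n : ℕ => (∑ i ∈ Finset.range (n+1),
          ((badt i)ᶜ.indicator (fun _ => (1:ℝ)) ω)) / (n+1)) = fun n : ℕ =>
          (((Finset.range (n + 1)).filter (fun i => A i ω ≠ Alim ω)).card : ℝ) / (n+1) :=
        funext fun n => by rw [heq n]
      show Tendsto _ atTop (𝓝 0)
      rw [hfun]
      exact hv
    · -- S ω = false, so Alim ω = true and ω ∈ Wf
      have hAl : Alim ω = true := by
        cases hAv : Alim ω
        · exact absurd (by rw [hAv, hs]) hne
        · rfl
      right
      refine ⟨hs, ?_⟩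
      have heq : ∀ n : ℕ, (∑ i ∈ Finset.range (n+1), ((badf i)ᶜ.indicator (fun _ => (1:ℝ)) ω))
          = (((Finset.range (n + 1)).filter (fun i => A i ω ≠ Alim ω)).card : ℝ) := by
        intro n
        rw [Finset.card_filter]
        push_cast
        refine Finset.sum_congr rfl fun i _ => ?_
        by_cases h : A i ω = true <;>
          simp [Set.indicator_apply, hbadfdef, h, hAl]
      have hfun : (fun n : ℕ => (∑ i ∈ Finset.range (n+1),
          ((badf i)ᶜ.indicator (fun _ => (1:ℝ)) ω)) / (n+1)) = fun n : ℕ =>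
          (((Finset.range (n + 1)).filter (fun i => A i ω ≠ Alim ω)).card : ℝ) / (n+1) :=
        funext fun n => by rw [heq n]
      show Tendsto _ atTop (𝓝 0)
      rw [hfun]
      exact hv
  have hWbad : P {ω | ¬ Alim ω = S ω} = 0 := by
    have hsub : {ω | ¬ Alim ω = S ω} ⊆
        {ω | ¬ (¬ Alim ω = S ω → ω ∈ Wt ∪ Wf)} ∪ (Wt ∪ Wf) := by
      intro ω hω
      by_cases h : ¬ Alim ω = S ω → ω ∈ Wt ∪ Wf
      · right; exact h hω
      · left; exact h
    refine le_antisymm ?_ (zero_le)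
    have h1 : P ({ω | ¬ (¬ Alim ω = S ω → ω ∈ Wt ∪ Wf)} ∪ (Wt ∪ Wf)) ≤
        P {ω | ¬ (¬ Alim ω = S ω → ω ∈ Wt ∪ Wf)} + P (Wt ∪ Wf) := measure_union_le _ _
    have h2 : P (Wt ∪ Wf) ≤ P Wt + P Wf := measure_union_le _ _
    have h3 : P {ω | ¬ (¬ Alim ω = S ω → ω ∈ Wt ∪ Wf)} = 0 := ae_iff.mp hkey
    calc P {ω | ¬ Alim ω = S ω}
        ≤ P ({ω | ¬ (¬ Alim ω = S ω → ω ∈ Wt ∪ Wf)} ∪ (Wt ∪ Wf)) := measure_mono hsub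
      _ ≤ P {ω | ¬ (¬ Alim ω = S ω → ω ∈ Wt ∪ Wf)} + P (Wt ∪ Wf) := h1
      _ ≤ 0 + (P Wt + P Wf) := by rw [h3]; exact add_le_add le_rfl h2
      _ = 0 := by rw [hWt0, hWf0]; simp
  have h1 : (1:ℝ≥0∞) ≤ P {ω | Alim ω = S ω} := by
    have huniv : (Set.univ : Set Ω) ⊆ {ω | Alim ω = S ω} ∪ {ω | ¬ Alim ω = S ω} := by
      intro ω _
      by_cases h : Alim ω = S ω
      · exact Or.inl h
      · exact Or.inr h
    calc (1:ℝ≥0∞) = P Set.univ := measure_univ.symm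
      _ ≤ P ({ω | Alim ω = S ω} ∪ {ω | ¬ Alim ω = S ω}) := measure_mono huniv
      _ ≤ P {ω | Alim ω = S ω} + P {ω | ¬ Alim ω = S ω} := measure_union_le _ _
      _ = P {ω | Alim ω = S ω} := by rw [hWbad, add_zero]
  exact le_antisymm prob_le_one h1
end
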